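/- arXiv:2009.12008 — 6 statements merged into one kernel-verified Lean document; each statement's English description precedes it below -/
import Mathlib

section
/- The eigenvalues of the normalized Laplacian L̃ = D^{†/2} L D^{†/2} of a matrix-weighted graph are bounded above by 2, where D^{†/2} denotes the Moore–Penrose pseudoinverse of the positive semidefinite square root of the degree matrix D. -/
open Matrix Finset

noncomputable section

/-- The adjacency matrix of a matrix-weighted graph: the `kn × kn` block matrix
whose `(u,v)` block is the weight matrix `W u v`. -/
def mwAdj (n k : ℕ) (W : Fin n → Fin n → Matrix (Fin k) (Fin k) ℝ) :
    Matrix (Fin n × Fin k) (Fin n × Fin k) ℝ :=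
  fun p q => W p.1 q.1 p.2 q.2

/-- The degree matrix of a matrix-weighted graph: block diagonal, with
`(v,v)` block `D_v = ∑ u, W u v`. -/
def mwDeg (n k : ℕ) (W : Fin n → Fin n → Matrix (Fin k) (Fin k) ℝ) :
    Matrix (Fin n × Fin k) (Fin n × Fin k) ℝ :=
  fun p q => if p.1 = q.1 then (∑ u, W u p.1) p.2 q.2 else 0

/-- The Laplacian `L = D - A` of a matrix-weighted graph. -/
def mwLap (n k : ℕ) (W : Fin n → Fin n → Matrix (Fin k) (Fin k) ℝ) :
    Matrix (Fin n × Fin k) (Fin n × Fin k) ℝ :=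
  mwDeg n k W - mwAdj n k W

/-- The quadratic form of `D + A` is nonnegative (the "signless Laplacian"
of a matrix-weighted graph is positive semidefinite). -/
lemma mwDA_qform_nonneg (n k : ℕ) (W : Fin n → Fin n → Matrix (Fin k) (Fin k) ℝ)
    (hpsd : ∀ u v, (W u v).PosSemidef)
    (hsym : ∀ u v, W u v = W v u) (x : Fin n × Fin k → ℝ) :
    0 ≤ x ⬝ᵥ ((mwDeg n k W + mwAdj n k W) *ᵥ x) := by
  have hD : x ⬝ᵥ (mwDeg n k W *ᵥ x) =
      ∑ u, ∑ v, ∑ i, ∑ j, x (v, i) * (W u v i j * x (v, j)) := by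
    simp only [dotProduct, mulVec, mwDeg, Fintype.sum_prod_type, Matrix.sum_apply,
      mul_ite, mul_zero, ite_mul, zero_mul]
    conv_lhs => enter [2, a, 2, b]; rw [Finset.sum_comm]
    simp only [Finset.sum_ite_eq, Finset.mem_univ, if_true]
    simp only [Finset.sum_mul, Finset.mul_sum]
    conv_lhs => enter [2, a, 2, b]; rw [Finset.sum_comm]
    conv_lhs => enter [2, a]; rw [Finset.sum_comm]
    rw [Finset.sum_comm]
  have hA : x ⬝ᵥ (mwAdj n k W *ᵥ x) =
      ∑ u, ∑ v, ∑ i, ∑ j, x (u, i) * (W u v i j * x (v, j)) := by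
    simp only [dotProduct, mulVec, mwAdj, Fintype.sum_prod_type, Finset.mul_sum]
    conv_lhs => enter [2, u]; rw [Finset.sum_comm]
  have hQ : ∀ u v : Fin n,
      (fun i => x (u, i) + x (v, i)) ⬝ᵥ ((W u v) *ᵥ (fun j => x (u, j) + x (v, j))) =
      (∑ i, ∑ j, x (u, i) * (W u v i j * x (u, j)))
      + (∑ i, ∑ j, x (u, i) * (W u v i j * x (v, j)))
      + (∑ i, ∑ j, x (v, i) * (W u v i j * x (u, j)))
      + (∑ i, ∑ j, x (v, i) * (W u v i j * x (v, j))) := by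
    intro u v
    simp only [dotProduct, mulVec, Finset.mul_sum, ← Finset.sum_add_distrib]
    apply Finset.sum_congr rfl; intro i _
    apply Finset.sum_congr rfl; intro j _
    ring
  have c1 : (∑ u, ∑ v, ∑ i, ∑ j, x (u, i) * (W u v i j * x (u, j)))
      = x ⬝ᵥ (mwDeg n k W *ᵥ x) := by
    rw [hD, Finset.sum_comm]
    refine Finset.sum_congr rfl fun u _ => Finset.sum_congr rfl fun v _ => ?_
    rw [hsym]
  have c2 : (∑ u, ∑ v, ∑ i, ∑ j, x (v, i) * (W u v i j * x (u, j)))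
      = x ⬝ᵥ (mwAdj n k W *ᵥ x) := by
    rw [hA, Finset.sum_comm]
    refine Finset.sum_congr rfl fun u _ => Finset.sum_congr rfl fun v _ => ?_
    rw [hsym]
  have hnn : 0 ≤ ∑ u, ∑ v,
      (fun i => x (u, i) + x (v, i)) ⬝ᵥ ((W u v) *ᵥ (fun j => x (u, j) + x (v, j))) := by
    refine Finset.sum_nonneg fun u _ => Finset.sum_nonneg fun v _ => ?_
    simpa using (hpsd u v).dotProduct_mulVec_nonneg (fun i => x (u, i) + x (v, i))
  have key : (∑ u, ∑ v,
      (fun i => x (u, i) + x (v, i)) ⬝ᵥ ((W u v) *ᵥ (fun j => x (u, j) + x (v, j))))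
      = 2 * (x ⬝ᵥ ((mwDeg n k W + mwAdj n k W) *ᵥ x)) := by
    simp only [hQ, Finset.sum_add_distrib, c1, c2, hA.symm, hD.symm]
    simp only [Matrix.add_mulVec, dotProduct_add]
    ring
  rw [key] at hnn
  linarith

/-- The eigenvalues of the normalized Laplacian `L̃ = D^{†/2} L D^{†/2}` of a
matrix-weighted graph are bounded above by `2`.  Here `R` is the positive
semidefinite square root of the degree matrix `D` (characterized uniquely by
`R` PSD and `R * R = D`) and `P` is its Moore–Penrose pseudoinverse
(characterized uniquely by the four Penrose equations). -/
theorem matrix_weighted_normalized_laplacian_eigenvalue_le_two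
    (n k : ℕ) (G : SimpleGraph (Fin n))
    (W : Fin n → Fin n → Matrix (Fin k) (Fin k) ℝ)
    (hpsd : ∀ u v, (W u v).PosSemidef)
    (hsym : ∀ u v, W u v = W v u)
    (h0 : ∀ u v, ¬ G.Adj u v → W u v = 0)
    (R : Matrix (Fin n × Fin k) (Fin n × Fin k) ℝ)
    (hRpsd : R.PosSemidef) (hRsq : R * R = mwDeg n k W)
    (P : Matrix (Fin n × Fin k) (Fin n × Fin k) ℝ)
    (hP1 : R * P * R = R) (hP2 : P * R * P = P)
    (hP3 : (R * P)ᵀ = R * P) (hP4 : (P * R)ᵀ = P * R) :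
    ∀ μ ∈ spectrum ℝ (P * mwLap n k W * P), μ ≤ 2 := by
  intro μ hμ
  have hRt : Rᵀ = R := by
    rw [← Matrix.conjTranspose_eq_transpose_of_trivial]; exact hRpsd.1
  -- `P` is symmetric
  have e2 : Pᵀ * R = R * P := by
    calc Pᵀ * R = (Rᵀ * P)ᵀ := by rw [Matrix.transpose_mul, Matrix.transpose_transpose]
    _ = (R * P)ᵀ := by rw [hRt]
    _ = R * P := hP3
  have e1 : R * Pᵀ = P * R := by
    calc R * Pᵀ = (P * Rᵀ)ᵀ := by rw [Matrix.transpose_mul, Matrix.transpose_transpose]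
    _ = (P * R)ᵀ := by rw [hRt]
    _ = P * R := hP4
  have hPPtR : P = P * Pᵀ * R := by
    calc P = P * R * P := hP2.symm
    _ = P * (R * P) := by rw [mul_assoc]
    _ = P * (Pᵀ * R) := by rw [e2]
    _ = P * Pᵀ * R := by rw [mul_assoc]
  have hPRPt : P = P * R * Pᵀ := by
    calc P = P * Pᵀ * R := hPPtR
    _ = P * Pᵀ * (R * P * R) := by rw [hP1]
    _ = (P * Pᵀ * R) * (P * R) := by simp only [mul_assoc]
    _ = P * (P * R) := by rw [← hPPtR]
    _ = P * (R * Pᵀ) := by rw [← e1]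
    _ = P * R * Pᵀ := by rw [mul_assoc]
  have hPsym : Pᵀ = P := by
    calc Pᵀ = (P * R * Pᵀ)ᵀ := by rw [← hPRPt]
    _ = Pᵀᵀ * (P * R)ᵀ := by rw [Matrix.transpose_mul]
    _ = P * (P * R) := by rw [Matrix.transpose_transpose, hP4]
    _ = P * (R * Pᵀ) := by rw [← e1]
    _ = P * R * Pᵀ := by rw [mul_assoc]
    _ = P := hPRPt.symm
  have hPR : P * R = R * P := by rw [← e2, hPsym]
  -- extract an eigenvector
  rw [spectrum.mem_iff] at hμ
  have hdet : (algebraMap ℝ (Matrix (Fin n × Fin k) (Fin n × Fin k) ℝ) μ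
      - (P * mwLap n k W * P)).det = 0 := by
    by_contra h
    exact hμ ((Matrix.isUnit_iff_isUnit_det _).2 (isUnit_iff_ne_zero.2 h))
  obtain ⟨x, hx0, hxv⟩ := Matrix.exists_mulVec_eq_zero_iff.mpr hdet
  have hMx : (P * mwLap n k W * P) *ᵥ x = μ • x := by
    have h' := hxv
    rw [Matrix.sub_mulVec, sub_eq_zero] at h'
    rw [← h', Matrix.algebraMap_eq_diagonal]
    funext i
    simp [Matrix.mulVec_diagonal]
  -- quadratic form computations
  have hxMx : x ⬝ᵥ ((P * mwLap n k W * P) *ᵥ x) = μ * (x ⬝ᵥ x) := by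
    rw [hMx, dotProduct_smul, smul_eq_mul]
  have hconj : ∀ B : Matrix (Fin n × Fin k) (Fin n × Fin k) ℝ,
      x ⬝ᵥ ((P * B * P) *ᵥ x) = (P *ᵥ x) ⬝ᵥ (B *ᵥ (P *ᵥ x)) := by
    intro B
    have hvm : x ᵥ* P = P *ᵥ x := by
      conv_lhs => rw [← hPsym]
      rw [Matrix.vecMul_transpose]
    rw [← Matrix.mulVec_mulVec, ← Matrix.mulVec_mulVec, Matrix.dotProduct_mulVec, hvm]
  have hDAnn : 0 ≤ x ⬝ᵥ ((P * (mwDeg n k W + mwAdj n k W) * P) *ᵥ x) := by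
    rw [hconj]
    exact mwDA_qform_nonneg n k W hpsd hsym _
  have hsplit : x ⬝ᵥ ((P * (mwDeg n k W + mwAdj n k W) * P) *ᵥ x)
      = 2 * (x ⬝ᵥ ((P * mwDeg n k W * P) *ᵥ x))
        - x ⬝ᵥ ((P * mwLap n k W * P) *ᵥ x) := by
    have : P * (mwDeg n k W + mwAdj n k W) * P
        = (P * mwDeg n k W * P + P * mwDeg n k W * P) - P * mwLap n k W * P := by
      simp only [mwLap, mul_add, add_mul, mul_sub, sub_mul]
      abel
    rw [this, Matrix.sub_mulVec, Matrix.add_mulVec, dotProduct_sub, dotProduct_add]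
    ring
  -- P * D * P = R * P, a symmetric projection
  have hPDP : P * mwDeg n k W * P = R * P := by
    calc P * mwDeg n k W * P = P * (R * R) * P := by rw [hRsq]
    _ = (P * R) * (R * P) := by simp only [mul_assoc]
    _ = (R * P) * (R * P) := by rw [hPR]
    _ = R * (P * R * P) := by simp only [mul_assoc]
    _ = R * P := by rw [hP2]
  have hQidem : (R * P) * (R * P) = R * P := by
    calc (R * P) * (R * P) = (R * P * R) * P := by simp only [mul_assoc]
    _ = R * P := by rw [hP1]
  set y : Fin n × Fin k → ℝ := (R * P) *ᵥ x with hy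
  have hyy : y ⬝ᵥ y = x ⬝ᵥ ((R * P) *ᵥ x) := by
    have h1 : y = x ᵥ* (R * P) := by
      rw [hy, ← Matrix.vecMul_transpose, hP3]
    calc y ⬝ᵥ y = (x ᵥ* (R * P)) ⬝ᵥ y := by rw [← h1]
    _ = x ⬝ᵥ ((R * P) *ᵥ y) := (Matrix.dotProduct_mulVec x (R * P) y).symm
    _ = x ⬝ᵥ (((R * P) * (R * P)) *ᵥ x) := by rw [hy, Matrix.mulVec_mulVec]
    _ = x ⬝ᵥ ((R * P) *ᵥ x) := by rw [hQidem]
  have hxy : x ⬝ᵥ y = x ⬝ᵥ ((R * P) *ᵥ x) := by rw [hy]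
  have hsubnn : 0 ≤ (x - y) ⬝ᵥ (x - y) := by
    refine Finset.sum_nonneg fun i _ => mul_self_nonneg _
  have hexp : (x - y) ⬝ᵥ (x - y) = x ⬝ᵥ x - x ⬝ᵥ y - y ⬝ᵥ x + y ⬝ᵥ y := by
    rw [dotProduct_sub, sub_dotProduct, sub_dotProduct]; ring
  have hyx : y ⬝ᵥ x = x ⬝ᵥ y := dotProduct_comm y x
  have hproj : x ⬝ᵥ ((R * P) *ᵥ x) ≤ x ⬝ᵥ x := by
    rw [hexp, hyx, hxy, hyy] at hsubnn
    linarith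
  -- positivity of x ⬝ᵥ x
  have hxxnn : 0 < x ⬝ᵥ x := by
    rcases (Finset.sum_nonneg fun i (_ : i ∈ Finset.univ) =>
      mul_self_nonneg (x i)).lt_or_eq with h | h
    · exact h
    · exact absurd ((dotProduct_self_eq_zero).1 h.symm) hx0
  -- conclude
  have hfinal : μ * (x ⬝ᵥ x) ≤ 2 * (x ⬝ᵥ x) := by
    have h2 : x ⬝ᵥ ((P * mwDeg n k W * P) *ᵥ x) ≤ x ⬝ᵥ x := by
      rw [hPDP]; exact hproj
    rw [hsplit] at hDAnn
    rw [← hxMx]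
    linarith
  exact le_of_mul_le_mul_right (by linarith [hfinal]) hxxnn
end
end

section
/- Let (G,W) be a matrix-weighted graph with n vertices and k×k weights, with Laplacian L_W having eigenvalues λ_1(L_W) ≤ … ≤ λ_{nk}(L_W), and let L_{tr W} be the Laplacian of the scalar-weighted graph (G, tr W), with eigenvalues λ_1(L_{tr W}) ≤ … ≤ λ_n(L_{tr W}). Then ∑_{i=1}^{k} λ_{k+i}(L_W) ≤ λ_2(L_{tr W}) ≤ λ_n(L_{tr W}) ≤ ∑_{i=1}^{k} λ_{(n−1)k+i}(L_W). -/
open Matrix Finset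

noncomputable section

/-- The Laplacian of the scalar-weighted trace graph `(G, tr W)`: off-diagonal
entries `-tr (W u v)`, diagonal entries `∑ u, tr (W u v)`. -/
def trLap (n k : ℕ) (W : Fin n → Fin n → Matrix (Fin k) (Fin k) ℝ) :
    Matrix (Fin n) (Fin n) ℝ :=
  fun u v => if u = v then ∑ w, (W w v).trace else -(W u v).trace

lemma abel_upper (N m : ℕ) (hm : m ≤ N) (lam : ℕ → ℝ)
    (hmono : ∀ i j : ℕ, i ≤ j → j < N → lam i ≤ lam j)
    (c : ℕ → ℝ) (hc0 : ∀ i, 0 ≤ c i) (hc1 : ∀ i, c i ≤ 1)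
    (hsum : ∑ i ∈ range N, c i = m) :
    ∑ i ∈ range N, lam i * c i ≤ ∑ i ∈ range m, lam (N - m + i) := by
  rcases Nat.eq_zero_or_pos m with hm0 | hm0
  · subst hm0
    have hz : ∀ i ∈ range N, c i = 0 := by
      intro i hi
      exact (Finset.sum_eq_zero_iff_of_nonneg (fun i _ => hc0 i)).1 (by simpa using hsum) i hi
    have hz2 : ∑ i ∈ range N, lam i * c i = 0 :=
      Finset.sum_eq_zero fun i hi => by rw [hz i hi, mul_zero]
    rw [hz2]; simp
  · set t := N - m with ht
    have htm : t + m = N := Nat.sub_add_cancel hm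
    have htN : t < N := by omega
    have hsplit : ∑ i ∈ range N, lam i * c i
        = ∑ i ∈ range t, lam i * c i + ∑ i ∈ range m, lam (t + i) * c (t + i) := by
      rw [← htm, Finset.sum_range_add]
    have hcsplit : ∑ i ∈ range t, c i + ∑ i ∈ range m, c (t + i) = m := by
      rw [← Finset.sum_range_add, htm, hsum]
    have key : ∑ i ∈ range t, c i = ∑ i ∈ range m, (1 - c (t + i)) := by
      rw [Finset.sum_sub_distrib]
      simp only [Finset.sum_const, card_range, nsmul_eq_mul, mul_one]
      linarith [hcsplit]
    have h1 : ∑ i ∈ range t, lam i * c i ≤ lam t * ∑ i ∈ range t, c i := by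
      rw [Finset.mul_sum]
      refine Finset.sum_le_sum fun i hi => ?_
      exact mul_le_mul_of_nonneg_right
        (hmono i t (le_of_lt (mem_range.1 hi)) htN) (hc0 i)
    have h2 : lam t * ∑ i ∈ range m, (1 - c (t + i))
        ≤ ∑ i ∈ range m, lam (t + i) * (1 - c (t + i)) := by
      rw [Finset.mul_sum]
      refine Finset.sum_le_sum fun i hi => ?_
      have hin : t + i < N := by have := mem_range.1 hi; omega
      exact mul_le_mul_of_nonneg_right (hmono t (t + i) (Nat.le_add_right _ _) hin)
        (by linarith [hc1 (t + i)])
    have h12 : lam t * ∑ i ∈ range t, c i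
        ≤ ∑ i ∈ range m, lam (t + i) * (1 - c (t + i)) := by rw [key]; exact h2
    have h3 : ∑ i ∈ range m, lam (t + i) * (1 - c (t + i))
        = ∑ i ∈ range m, lam (t + i) - ∑ i ∈ range m, lam (t + i) * c (t + i) := by
      rw [← Finset.sum_sub_distrib]; exact Finset.sum_congr rfl fun i _ => by ring
    rw [hsplit]
    have h4 := h1.trans h12
    linarith [h4, h3]

lemma abel_lower (N m : ℕ) (hm : m ≤ N) (lam : ℕ → ℝ)
    (hmono : ∀ i j : ℕ, i ≤ j → j < N → lam i ≤ lam j)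
    (c : ℕ → ℝ) (hc0 : ∀ i, 0 ≤ c i) (hc1 : ∀ i, c i ≤ 1)
    (hsum : ∑ i ∈ range N, c i = m) :
    ∑ i ∈ range m, lam i ≤ ∑ i ∈ range N, lam i * c i := by
  rcases eq_or_lt_of_le hm with hmN | hmN
  · subst hmN
    have hz : ∀ i ∈ range m, c i = 1 := by
      intro i hi
      by_contra hne
      have hlt : c i < 1 := lt_of_le_of_ne (hc1 i) hne
      have : ∑ j ∈ range m, c j < ∑ j ∈ range m, (1 : ℝ) :=
        Finset.sum_lt_sum (fun j _ => hc1 j) ⟨i, hi, hlt⟩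
      simp only [Finset.sum_const, card_range, nsmul_eq_mul, mul_one] at this
      rw [hsum] at this; exact lt_irrefl _ this
    refine le_of_eq (Finset.sum_congr rfl fun i hi => ?_)
    rw [hz i hi, mul_one]
  · set s := N - m with hs
    have hsm : m + s = N := by omega
    have hsplit : ∑ i ∈ range N, lam i * c i
        = ∑ i ∈ range m, lam i * c i + ∑ i ∈ range s, lam (m + i) * c (m + i) := by
      rw [← hsm, Finset.sum_range_add]
    have hcsplit : ∑ i ∈ range m, c i + ∑ i ∈ range s, c (m + i) = m := by
      rw [← Finset.sum_range_add, hsm, hsum]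
    have key : ∑ i ∈ range m, (1 - c i) = ∑ i ∈ range s, c (m + i) := by
      rw [Finset.sum_sub_distrib]
      simp only [Finset.sum_const, card_range, nsmul_eq_mul, mul_one]
      linarith [hcsplit]
    have h1 : ∑ i ∈ range m, lam i * (1 - c i) ≤ lam m * ∑ i ∈ range m, (1 - c i) := by
      rw [Finset.mul_sum]
      refine Finset.sum_le_sum fun i hi => ?_
      exact mul_le_mul_of_nonneg_right
        (hmono i m (le_of_lt (mem_range.1 hi)) hmN) (by linarith [hc1 i])
    have h2 : lam m * ∑ i ∈ range s, c (m + i)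
        ≤ ∑ i ∈ range s, lam (m + i) * c (m + i) := by
      rw [Finset.mul_sum]
      refine Finset.sum_le_sum fun i hi => ?_
      have hin : m + i < N := by have := mem_range.1 hi; omega
      exact mul_le_mul_of_nonneg_right (hmono m (m + i) (Nat.le_add_right _ _) hin)
        (hc0 (m + i))
    have h12 : ∑ i ∈ range m, lam i * (1 - c i)
        ≤ ∑ i ∈ range s, lam (m + i) * c (m + i) := by
      refine h1.trans ?_; rw [key]; exact h2
    have h3 : ∑ i ∈ range m, lam i * (1 - c i)
        = ∑ i ∈ range m, lam i - ∑ i ∈ range m, lam i * c i := by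
      rw [← Finset.sum_sub_distrib]; exact Finset.sum_congr rfl fun i _ => by ring
    rw [hsplit]; linarith [h12, h3]

lemma kyFan {ι κ : Type} [Fintype ι] [Fintype κ] [DecidableEq ι] [DecidableEq κ]
    {N : ℕ} (e : ι ≃ Fin N) (lam : ℕ → ℝ)
    (hmono : ∀ i j : ℕ, i ≤ j → j < N → lam i ≤ lam j)
    (U : Matrix ι ι ℝ) (hU : U * Uᵀ = 1)
    (v : κ → ι → ℝ)
    (hortho : ∀ j j', v j ⬝ᵥ v j' = if j = j' then 1 else 0) :
    ((∑ i ∈ Finset.range (Fintype.card κ), lam i)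
      ≤ ∑ j, v j ⬝ᵥ ((U * Matrix.diagonal (fun p => lam (e p)) * Uᵀ) *ᵥ v j)) ∧
    (∑ j, v j ⬝ᵥ ((U * Matrix.diagonal (fun p => lam (e p)) * Uᵀ) *ᵥ v j))
      ≤ ∑ i ∈ Finset.range (Fintype.card κ), lam (N - Fintype.card κ + i) := by
  set d : ι → ℝ := fun p => lam (e p) with hd
  set w : κ → ι → ℝ := fun j => Uᵀ *ᵥ v j with hw
  have hdotw : ∀ j j', w j ⬝ᵥ w j' = if j = j' then 1 else 0 := by
    intro j j'
    simp only [hw]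
    rw [show Uᵀ *ᵥ v j = v j ᵥ* U from Matrix.mulVec_transpose U (v j)]
    rw [← Matrix.dotProduct_mulVec, Matrix.mulVec_mulVec, hU, Matrix.one_mulVec, hortho]
  set M : Matrix κ ι ℝ := Matrix.of w with hM
  have hMM : M * Mᵀ = 1 := by
    ext j j'
    have := hdotw j j'
    simpa [Matrix.mul_apply, Matrix.one_apply, dotProduct, hM] using this
  set c : ι → ℝ := fun p => ∑ j, (w j p)^2 with hc
  have hquad : ∀ j, v j ⬝ᵥ ((U * Matrix.diagonal d * Uᵀ) *ᵥ v j)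
      = ∑ p, d p * (w j p)^2 := by
    intro j
    have h1 : (U * Matrix.diagonal d * Uᵀ) *ᵥ v j
        = U *ᵥ (Matrix.diagonal d *ᵥ (Uᵀ *ᵥ v j)) := by
      rw [Matrix.mulVec_mulVec, Matrix.mulVec_mulVec, Matrix.mul_assoc]
    rw [h1, Matrix.dotProduct_mulVec, ← Matrix.mulVec_transpose]
    simp only [hw]
    simp only [dotProduct, Matrix.mulVec_diagonal]
    exact Finset.sum_congr rfl fun p _ => by ring
  have htot : (∑ j, v j ⬝ᵥ ((U * Matrix.diagonal d * Uᵀ) *ᵥ v j))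
      = ∑ p, d p * c p := by
    simp_rw [hquad]
    rw [Finset.sum_comm]
    exact Finset.sum_congr rfl fun p _ => by rw [hc, Finset.mul_sum]
  have hc0 : ∀ p, 0 ≤ c p := fun p => Finset.sum_nonneg fun j _ => sq_nonneg _
  have hc1 : ∀ p, c p ≤ 1 := by
    intro p
    set Q : Matrix ι ι ℝ := 1 - Mᵀ * M with hQ
    have hQsymm : Qᵀ = Q := by
      rw [hQ, Matrix.transpose_sub, Matrix.transpose_mul, Matrix.transpose_transpose,
        Matrix.transpose_one]
    have hMTM : Mᵀ * M * (Mᵀ * M) = Mᵀ * M := by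
      rw [Matrix.mul_assoc, ← Matrix.mul_assoc M, hMM, Matrix.one_mul]
    have hQQ : Q = Qᵀ * Q := by
      rw [hQsymm, hQ, Matrix.sub_mul, Matrix.one_mul, Matrix.mul_sub, Matrix.mul_one, hMTM]
      abel
    have hQpp : 0 ≤ Q p p := by
      have h2 : Q p p = ∑ j, (Q j p)^2 := by
        conv_lhs => rw [hQQ]
        simp [Matrix.mul_apply, Matrix.transpose_apply, sq]
      rw [h2]
      exact Finset.sum_nonneg fun j _ => sq_nonneg _
    have hPpp : (Mᵀ * M) p p = c p := by
      simp [Matrix.mul_apply, Matrix.transpose_apply, hc, hM, sq]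
    have h3 : Q p p = 1 - c p := by
      rw [hQ]
      simp [Matrix.sub_apply, Matrix.one_apply, hPpp]
    linarith [h3 ▸ hQpp]
  have hcsum : ∑ p, c p = (Fintype.card κ : ℝ) := by
    calc ∑ p, c p = ∑ j : κ, ∑ p, (w j p)^2 := Finset.sum_comm
      _ = ∑ _j : κ, (1 : ℝ) := by
          refine Finset.sum_congr rfl fun j _ => ?_
          have := hdotw j j
          simp only [if_pos rfl, dotProduct] at this
          simpa [sq] using this
      _ = (Fintype.card κ : ℝ) := by simp
  set c' : ℕ → ℝ := fun i => if h : i < N then c (e.symm ⟨i, h⟩) else 0 with hc'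
  have hc'eq : ∀ q : Fin N, c' ↑q = c (e.symm q) := by
    intro q
    rw [hc']
    simp [q.isLt]
  have hreindex : ∑ p, d p * c p = ∑ i ∈ range N, lam i * c' i := by
    rw [← Fin.sum_univ_eq_sum_range (fun i => lam i * c' i) N,
      ← Equiv.sum_comp e (fun q : Fin N => lam ↑q * c' ↑q)]
    refine Finset.sum_congr rfl fun p _ => ?_
    rw [hc'eq (e p), Equiv.symm_apply_apply]
  have hreindex2 : ∑ i ∈ range N, c' i = (Fintype.card κ : ℝ) := by
    rw [← Fin.sum_univ_eq_sum_range c' N, ← Equiv.sum_comp e (fun q : Fin N => c' ↑q)]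
    rw [← hcsum]
    refine Finset.sum_congr rfl fun p _ => ?_
    rw [hc'eq (e p), Equiv.symm_apply_apply]
  have hc0' : ∀ i, 0 ≤ c' i := by
    intro i; simp only [hc']; split
    · exact hc0 _
    · exact le_refl 0
  have hc1' : ∀ i, c' i ≤ 1 := by
    intro i; simp only [hc']; split
    · exact hc1 _
    · norm_num
  have hmN : Fintype.card κ ≤ N := by
    have h5 : (Fintype.card κ : ℝ) ≤ (N : ℝ) := by
      rw [← hreindex2]
      calc ∑ i ∈ range N, c' i ≤ ∑ _i ∈ range N, (1:ℝ) := Finset.sum_le_sum fun i _ => hc1' i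
        _ = N := by simp
    exact_mod_cast h5
  constructor
  · rw [htot, hreindex]
    exact abel_lower N _ hmN lam hmono c' hc0' hc1' hreindex2
  · rw [htot, hreindex]
    exact abel_upper N _ hmN lam hmono c' hc0' hc1' hreindex2

lemma mwLap_quad_nonneg (n k : ℕ) (W : Fin n → Fin n → Matrix (Fin k) (Fin k) ℝ)
    (hpsd : ∀ u v, (W u v).PosSemidef) (hsym : ∀ u v, W u v = W v u)
    (x : Fin n × Fin k → ℝ) : 0 ≤ x ⬝ᵥ (mwLap n k W *ᵥ x) := by
  classical
  set xv : Fin n → Fin k → ℝ := fun v a => x (v, a) with hxv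
  have hAT : ∀ u v, (W u v)ᵀ = W u v := by
    intro u v
    have h := (hpsd u v).1
    ext i j
    calc (W u v)ᵀ i j = W u v j i := rfl
      _ = star (W u v j i) := (star_trivial _).symm
      _ = (W u v)ᴴ i j := rfl
      _ = W u v i j := by rw [h]
  have hpsd' : ∀ u v (y : Fin k → ℝ), 0 ≤ y ⬝ᵥ (W u v *ᵥ y) := fun u v y => by
    have h := (hpsd u v).dotProduct_mulVec_nonneg y
    simpa using h
  have dot_sym : ∀ u v (y z : Fin k → ℝ), y ⬝ᵥ (W u v *ᵥ z) = z ⬝ᵥ (W u v *ᵥ y) := by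
    intro u v y z
    rw [Matrix.dotProduct_mulVec, ← Matrix.mulVec_transpose, hAT, dotProduct_comm]
  have hDeg : x ⬝ᵥ (mwDeg n k W *ᵥ x) = ∑ u, ∑ v, xv v ⬝ᵥ (W u v *ᵥ xv v) := by
    rw [Finset.sum_comm]
    simp only [dotProduct, Matrix.mulVec, mwDeg, Fintype.sum_prod_type, hxv,
      Matrix.sum_apply, ite_mul, zero_mul]
    refine Finset.sum_congr rfl fun v _ => ?_
    conv_rhs => rw [Finset.sum_comm]
    refine Finset.sum_congr rfl fun a _ => ?_
    rw [← Finset.mul_sum]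
    congr 1
    have hcollapse : (∑ u : Fin n, ∑ b : Fin k,
        if v = u then (∑ w : Fin n, W w v a b) * x (u, b) else 0)
        = ∑ b : Fin k, (∑ w : Fin n, W w v a b) * x (v, b) := by
      rw [Finset.sum_comm]
      simp [Finset.sum_ite_eq]
    rw [hcollapse, Finset.sum_comm]
    simp_rw [Finset.sum_mul]
  have hAdj : x ⬝ᵥ (mwAdj n k W *ᵥ x) = ∑ u, ∑ v, xv u ⬝ᵥ (W u v *ᵥ xv v) := by
    simp only [dotProduct, Matrix.mulVec, mwAdj, Fintype.sum_prod_type, hxv]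
    refine Finset.sum_congr rfl fun u _ => ?_
    conv_rhs => rw [Finset.sum_comm]
    refine Finset.sum_congr rfl fun a _ => ?_
    rw [Finset.mul_sum]
  have hL : x ⬝ᵥ (mwLap n k W *ᵥ x)
      = x ⬝ᵥ (mwDeg n k W *ᵥ x) - x ⬝ᵥ (mwAdj n k W *ᵥ x) := by
    rw [mwLap, Matrix.sub_mulVec, dotProduct_sub]
  have hf' : ∑ u, ∑ v, xv u ⬝ᵥ (W u v *ᵥ xv u) = ∑ u, ∑ v, xv v ⬝ᵥ (W u v *ᵥ xv v) := by
    rw [Finset.sum_comm]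
    exact Finset.sum_congr rfl fun a _ => Finset.sum_congr rfl fun b _ => by rw [hsym b a]
  have expand : ∀ u v, ((xv u - xv v) ⬝ᵥ (W u v *ᵥ (xv u - xv v)))
      = xv u ⬝ᵥ (W u v *ᵥ xv u) + xv v ⬝ᵥ (W u v *ᵥ xv v)
        - xv u ⬝ᵥ (W u v *ᵥ xv v) - xv u ⬝ᵥ (W u v *ᵥ xv v) := by
    intro u v
    rw [Matrix.mulVec_sub, dotProduct_sub, sub_dotProduct,
      sub_dotProduct, dot_sym u v (xv v) (xv u)]
    ring
  have hE : ∑ u, ∑ v, ((xv u - xv v) ⬝ᵥ (W u v *ᵥ (xv u - xv v)))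
      = 2 * (x ⬝ᵥ (mwLap n k W *ᵥ x)) := by
    simp_rw [expand]
    simp only [Finset.sum_sub_distrib, Finset.sum_add_distrib]
    rw [hL, hDeg, hAdj]
    linarith [hf']
  have hnn : 0 ≤ ∑ u, ∑ v, ((xv u - xv v) ⬝ᵥ (W u v *ᵥ (xv u - xv v))) :=
    Finset.sum_nonneg fun u _ => Finset.sum_nonneg fun v _ => hpsd' u v _
  linarith [hE, hnn]

/-- Rayleigh quotient of a column of `U` extracts the diagonal value. -/
lemma diag_val {ι : Type} [Fintype ι] [DecidableEq ι]
    (U : Matrix ι ι ℝ) (d : ι → ℝ) (hU : U * Uᵀ = 1) (j : ι) :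
    (fun p => U p j) ⬝ᵥ ((U * Matrix.diagonal d * Uᵀ) *ᵥ fun p => U p j) = d j := by
  have hU' : Uᵀ * U = 1 := mul_eq_one_comm.mp hU
  have hcol : (fun p => U p j) = U *ᵥ Pi.single j 1 := by
    ext p; simp [Matrix.mulVec_single]
  rw [hcol, Matrix.mulVec_mulVec]
  rw [show U *ᵥ Pi.single j 1 = Pi.single j 1 ᵥ* Uᵀ from (Matrix.vecMul_transpose U (Pi.single j 1)).symm]
  rw [← Matrix.dotProduct_mulVec, Matrix.mulVec_mulVec]
  have hmat : Uᵀ * (U * Matrix.diagonal d * Uᵀ * U) = Matrix.diagonal d := by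
    rw [Matrix.mul_assoc (U * Matrix.diagonal d) Uᵀ U, hU', Matrix.mul_one,
      ← Matrix.mul_assoc, hU', Matrix.one_mul]
  rw [hmat]
  simp [dotProduct, Matrix.mulVec_diagonal, Pi.single_apply]

/-- Block trace of the matrix Laplacian equals the trace-graph Laplacian. -/
lemma blockTrace (n k : ℕ) (W : Fin n → Fin n → Matrix (Fin k) (Fin k) ℝ)
    (hWdiag : ∀ v, W v v = 0) (v u : Fin n) :
    ∑ i : Fin k, mwLap n k W (v, i) (u, i) = trLap n k W v u := by
  simp only [mwLap, mwDeg, mwAdj, trLap, Matrix.sub_apply]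
  by_cases h : v = u
  · subst h
    rw [Finset.sum_sub_distrib]
    have h1 : ∑ i : Fin k, (∑ w, W w v) i i = ∑ w, (W w v).trace := by
      simp only [Matrix.sum_apply]
      rw [Finset.sum_comm]
      simp [Matrix.trace, Matrix.diag]
    have h2 : ∑ i : Fin k, W v v i i = 0 := by simp [hWdiag v]
    simp only [↓reduceIte]
    rw [h1, h2, sub_zero]
  · simp only [if_neg h]
    rw [Finset.sum_sub_distrib]
    simp [Matrix.trace, Matrix.diag]

/-- The embedding of a scalar vector into coordinate `i` of the block structure. -/
def emb (n k : ℕ) (i : Fin k) (x : Fin n → ℝ) : Fin n × Fin k → ℝ :=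
  fun p => if p.2 = i then x p.1 else 0

lemma emb_dot (n k : ℕ) (i i' : Fin k) (x x' : Fin n → ℝ) :
    emb n k i x ⬝ᵥ emb n k i' x' = if i = i' then x ⬝ᵥ x' else 0 := by
  simp only [emb, dotProduct, Fintype.sum_prod_type]
  by_cases h : i = i'
  · subst h
    simp only [if_pos rfl]
    refine Finset.sum_congr rfl fun v _ => ?_
    rw [Finset.sum_eq_single i]
    · simp
    · intro b _ hb; simp [hb]
    · intro hi; simp at hi
  · rw [if_neg h]
    refine Finset.sum_eq_zero fun v _ => Finset.sum_eq_zero fun a _ => ?_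
    by_cases ha : a = i
    · subst ha; simp [h]
    · simp [ha]

/-- Compression identity: summing the quadratic form over the `k` embeddings
gives the trace-Laplacian quadratic form. -/
lemma emb_quad_sum (n k : ℕ) (W : Fin n → Fin n → Matrix (Fin k) (Fin k) ℝ)
    (hWdiag : ∀ v, W v v = 0) (x : Fin n → ℝ) :
    ∑ i : Fin k, emb n k i x ⬝ᵥ (mwLap n k W *ᵥ emb n k i x)
      = x ⬝ᵥ (trLap n k W *ᵥ x) := by
  have key : ∀ i : Fin k, emb n k i x ⬝ᵥ (mwLap n k W *ᵥ emb n k i x)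
      = ∑ v, ∑ u, x v * (mwLap n k W (v, i) (u, i) * x u) := by
    intro i
    simp only [dotProduct, Matrix.mulVec, emb, Fintype.sum_prod_type, dotProduct]
    refine Finset.sum_congr rfl fun v _ => ?_
    rw [Finset.sum_eq_single i]
    · simp only [if_pos rfl]
      rw [Finset.mul_sum]
      refine Finset.sum_congr rfl fun u _ => ?_
      rw [Finset.sum_eq_single i]
      · simp
      · intro b _ hb; simp [hb]
      · intro hi; simp at hi
    · intro b _ hb; simp [hb]
    · intro hi; simp at hi
  simp_rw [key]
  rw [Finset.sum_comm]
  simp only [dotProduct, Matrix.mulVec]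
  refine Finset.sum_congr rfl fun v _ => ?_
  rw [Finset.sum_comm]
  have inner : ∀ y : Fin n, (∑ i : Fin k, x v * (mwLap n k W (v, i) (y, i) * x y))
      = x v * (trLap n k W v y * x y) := fun y => by
    rw [← Finset.mul_sum, ← Finset.sum_mul, blockTrace n k W hWdiag v y]
  simp_rw [inner]
  rw [Finset.mul_sum]


lemma quad_diag {ι : Type} [Fintype ι] [DecidableEq ι]
    (U : Matrix ι ι ℝ) (d : ι → ℝ) (v : ι → ℝ) :
    v ⬝ᵥ ((U * Matrix.diagonal d * Uᵀ) *ᵥ v) = ∑ p, d p * ((Uᵀ *ᵥ v) p)^2 := by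
  have h1 : (U * Matrix.diagonal d * Uᵀ) *ᵥ v
      = U *ᵥ (Matrix.diagonal d *ᵥ (Uᵀ *ᵥ v)) := by
    rw [Matrix.mulVec_mulVec, Matrix.mulVec_mulVec, Matrix.mul_assoc]
  rw [h1, Matrix.dotProduct_mulVec, ← Matrix.mulVec_transpose]
  simp only [dotProduct, Matrix.mulVec_diagonal]
  exact Finset.sum_congr rfl fun p _ => by ring

lemma dot_transpose_mulVec {ι : Type} [Fintype ι] [DecidableEq ι]
    (U : Matrix ι ι ℝ) (hU : U * Uᵀ = 1) (y y' : ι → ℝ) :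
    (Uᵀ *ᵥ y) ⬝ᵥ (Uᵀ *ᵥ y') = y ⬝ᵥ y' := by
  rw [show Uᵀ *ᵥ y = y ᵥ* U from Matrix.mulVec_transpose U y]
  rw [← Matrix.dotProduct_mulVec, Matrix.mulVec_mulVec, hU, Matrix.one_mulVec]


/-- Trace bound relating the Laplacian spectra of a matrix-weighted graph `(G, W)`
and its trace graph `(G, tr W)`:
`∑_{i=1}^k λ_{k+i}(L_W) ≤ λ_2(L_{tr W}) ≤ λ_n(L_{tr W}) ≤ ∑_{i=1}^k λ_{(n-1)k+i}(L_W)`.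
Here `lam` (resp. `nu`) enumerates the eigenvalues of `L_W` (resp. `L_{tr W}`) in
increasing order with multiplicity (0-indexed), as witnessed by an orthogonal
spectral decomposition. -/
theorem matrix_weighted_laplacian_trace_bound
    (n k : ℕ) (hn : 2 ≤ n) (G : SimpleGraph (Fin n))
    (W : Fin n → Fin n → Matrix (Fin k) (Fin k) ℝ)
    (hpsd : ∀ u v, (W u v).PosSemidef)
    (hsym : ∀ u v, W u v = W v u)
    (h0 : ∀ u v, ¬ G.Adj u v → W u v = 0)
    (lam : ℕ → ℝ) (hlam : MonotoneOn lam (Set.Iio (n * k)))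
    (U : Matrix (Fin n × Fin k) (Fin n × Fin k) ℝ) (hU : U * Uᵀ = 1)
    (hLW : mwLap n k W =
      U * Matrix.diagonal (fun p => lam (finProdFinEquiv p)) * Uᵀ)
    (nu : ℕ → ℝ) (hnu : MonotoneOn nu (Set.Iio n))
    (Ut : Matrix (Fin n) (Fin n) ℝ) (hUt : Ut * Utᵀ = 1)
    (hLtr : trLap n k W = Ut * Matrix.diagonal (fun v : Fin n => nu v) * Utᵀ) :
    (∑ i ∈ Finset.range k, lam (k + i)) ≤ nu 1 ∧
      nu 1 ≤ nu (n - 1) ∧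
      nu (n - 1) ≤ ∑ i ∈ Finset.range k, lam ((n - 1) * k + i) := by
  have hk : k ≤ n * k := Nat.le_mul_of_pos_left k (by omega)
  have hWdiag : ∀ v, W v v = 0 := fun v => h0 v v G.irrefl
  have hmono : ∀ i j : ℕ, i ≤ j → j < n * k → lam i ≤ lam j := fun i j hij hj =>
    hlam (Set.mem_Iio.mpr (lt_of_le_of_lt hij hj)) (Set.mem_Iio.mpr hj) hij
  have hUt' : Utᵀ * Ut = 1 := mul_eq_one_comm.mp hUt
  have hcolUt : ∀ j j' : Fin n,
      (fun v => Ut v j) ⬝ᵥ (fun v => Ut v j') = if j = j' then 1 else 0 := by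
    intro j j'
    have h := congrFun (congrFun hUt' j) j'
    simpa [Matrix.mul_apply, Matrix.one_apply, dotProduct, Matrix.transpose_apply] using h
  have hlam0 : ∀ i, i < n * k → 0 ≤ lam i := by
    intro i hi
    set p : Fin n × Fin k := finProdFinEquiv.symm ⟨i, hi⟩ with hp
    have h1 : (fun q => U q p) ⬝ᵥ (mwLap n k W *ᵥ fun q => U q p)
        = lam (finProdFinEquiv p) := by
      rw [hLW]; exact diag_val U _ hU p
    have h2 : ((finProdFinEquiv p : Fin (n * k)) : ℕ) = i := by
      rw [hp, Equiv.apply_symm_apply]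
    rw [h2] at h1
    rw [← h1]
    exact mwLap_quad_nonneg n k W hpsd hsym _
  have hnuval : ∀ j : Fin n,
      (∑ i : Fin k, emb n k i (fun v => Ut v j) ⬝ᵥ
        ((U * Matrix.diagonal (fun p => lam (finProdFinEquiv p)) * Uᵀ) *ᵥ
          emb n k i (fun v => Ut v j))) = nu j := by
    intro j
    rw [← hLW, emb_quad_sum n k W hWdiag (fun v => Ut v j), hLtr]
    exact diag_val Ut _ hUt j
  -- the all-ones vector is in the kernel of the trace Laplacian
  have hones : trLap n k W *ᵥ (fun _ => (1 : ℝ)) = 0 := by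
    funext u
    have hterm : ∀ v : Fin n, trLap n k W u v
        = -(W u v).trace
          + (if u = v then ((∑ w, (W w v).trace) + (W u v).trace) else 0) := by
      intro v
      by_cases h : u = v
      · subst h; simp [trLap]
      · simp [trLap, h]
    have hc : (trLap n k W *ᵥ fun _ => (1 : ℝ)) u = ∑ v, trLap n k W u v := by
      simp [Matrix.mulVec, dotProduct]
    rw [hc]
    calc ∑ v, trLap n k W u v
        = ∑ v, (-(W u v).trace
            + (if u = v then ((∑ w, (W w v).trace) + (W u v).trace) else 0)) :=
          Finset.sum_congr rfl fun v _ => hterm v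
      _ = (∑ v, -(W u v).trace) + ((∑ w, (W w u).trace) + (W u u).trace) := by
          rw [Finset.sum_add_distrib]
          congr 1
          simp
      _ = (0 : Matrix (Fin n) (Fin n) ℝ → ℝ) 0 := by
          rw [hWdiag u]
          have h3 : ∑ w, (W w u).trace = ∑ v, (W u v).trace :=
            Finset.sum_congr rfl fun w _ => by rw [hsym]
          rw [h3]
          simp
  have hnu0 : nu 0 ≤ 0 := by
    have hzq : (fun _ : Fin n => (1 : ℝ)) ⬝ᵥ
        ((Ut * Matrix.diagonal (fun v : Fin n => nu v) * Utᵀ) *ᵥ (fun _ => 1)) = 0 := by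
      rw [← hLtr, hones, dotProduct_zero]
    rw [quad_diag] at hzq
    have hznorm : ∑ p, ((Utᵀ *ᵥ fun _ : Fin n => (1 : ℝ)) p) ^ 2 = n := by
      have h4 := dot_transpose_mulVec Ut hUt (fun _ => (1 : ℝ)) (fun _ => 1)
      simp only [dotProduct] at h4
      calc ∑ p, ((Utᵀ *ᵥ fun _ : Fin n => (1 : ℝ)) p) ^ 2
          = ∑ p, (Utᵀ *ᵥ fun _ : Fin n => (1 : ℝ)) p
              * (Utᵀ *ᵥ fun _ : Fin n => (1 : ℝ)) p :=
            Finset.sum_congr rfl fun p _ => by ring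
        _ = ∑ _p : Fin n, (1 : ℝ) * 1 := h4
        _ = n := by simp
    have hge : ∀ j : Fin n, nu 0 ≤ nu j := fun j =>
      hnu (Set.mem_Iio.mpr (by omega)) (Set.mem_Iio.mpr j.isLt) (Nat.zero_le _)
    have hb : nu 0 * n ≤ 0 := by
      calc nu 0 * (n : ℝ)
          = ∑ p : Fin n, nu 0 * ((Utᵀ *ᵥ fun _ => (1 : ℝ)) p) ^ 2 := by
            rw [← Finset.mul_sum, hznorm]
        _ ≤ ∑ p : Fin n, nu p * ((Utᵀ *ᵥ fun _ => (1 : ℝ)) p) ^ 2 :=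
            Finset.sum_le_sum fun p _ =>
              mul_le_mul_of_nonneg_right (hge p) (sq_nonneg _)
        _ = 0 := hzq
    nlinarith [hb, show (0 : ℝ) < n by exact_mod_cast (by omega : 0 < n)]
  have hn1 : n - 1 < n := by omega
  -- part (A): the upper bound
  have hqA := kyFan finProdFinEquiv lam hmono U hU
    (fun i : Fin k => emb n k i (fun v => Ut v ⟨n - 1, hn1⟩))
    (fun i i' => by rw [emb_dot, hcolUt]; simp)
  obtain ⟨-, hA2⟩ := hqA
  simp only [Fintype.card_fin] at hA2
  have hA3 : nu (n - 1) ≤ ∑ i ∈ Finset.range k, lam (n * k - k + i) := by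
    have hv := hnuval ⟨n - 1, hn1⟩
    calc nu (n - 1) = ∑ i : Fin k, emb n k i (fun v => Ut v ⟨n - 1, hn1⟩) ⬝ᵥ
        ((U * Matrix.diagonal (fun p => lam (finProdFinEquiv p)) * Uᵀ) *ᵥ
          emb n k i (fun v => Ut v ⟨n - 1, hn1⟩)) := hv.symm
      _ ≤ ∑ i ∈ Finset.range k, lam (n * k - k + i) := hA2
  -- part (B): the lower bound
  have h2n : ∀ a : Fin 2, (a : ℕ) < n := fun a => lt_of_lt_of_le a.isLt hn
  have hjj : ∀ a b : Fin 2, (⟨a, h2n a⟩ : Fin n) = ⟨b, h2n b⟩ ↔ a = b := by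
    intro a b
    constructor
    · intro h; exact Fin.ext (by simpa using congrArg Fin.val h)
    · intro h; rw [h]
  have hqB := kyFan finProdFinEquiv lam hmono U hU
    (fun q : Fin 2 × Fin k => emb n k q.2 (fun v => Ut v ⟨q.1, h2n q.1⟩))
    (fun q q' => by
      rcases q with ⟨a, i⟩
      rcases q' with ⟨b, i'⟩
      rw [emb_dot, hcolUt]
      by_cases hii : i = i' <;> by_cases hab : a = b <;>
        simp [hii, hab, hjj, Prod.ext_iff])
  obtain ⟨hB1, -⟩ := hqB
  simp only [Fintype.card_prod, Fintype.card_fin] at hB1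
  have hvalB : (∑ q : Fin 2 × Fin k,
      emb n k q.2 (fun v => Ut v ⟨q.1, h2n q.1⟩) ⬝ᵥ
        ((U * Matrix.diagonal (fun p => lam (finProdFinEquiv p)) * Uᵀ) *ᵥ
          emb n k q.2 (fun v => Ut v ⟨q.1, h2n q.1⟩))) = nu 0 + nu 1 := by
    rw [Fintype.sum_prod_type, Fin.sum_univ_two]
    simp only [Fin.val_zero, Fin.val_one]
    rw [hnuval ⟨0, h2n 0⟩, hnuval ⟨1, h2n 1⟩]
  have hB2 : ∑ i ∈ Finset.range (2 * k), lam i ≤ nu 0 + nu 1 := by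
    calc ∑ i ∈ Finset.range (2 * k), lam i
        ≤ ∑ q : Fin 2 × Fin k,
          emb n k q.2 (fun v => Ut v ⟨q.1, h2n q.1⟩) ⬝ᵥ
            ((U * Matrix.diagonal (fun p => lam (finProdFinEquiv p)) * Uᵀ) *ᵥ
              emb n k q.2 (fun v => Ut v ⟨q.1, h2n q.1⟩)) := hB1
      _ = nu 0 + nu 1 := hvalB
  rw [two_mul, Finset.sum_range_add] at hB2
  have hpos : 0 ≤ ∑ i ∈ Finset.range k, lam i :=
    Finset.sum_nonneg fun i hi =>
      hlam0 i (lt_of_lt_of_le (Finset.mem_range.1 hi) hk)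
  refine ⟨by linarith, ?_, ?_⟩
  · exact hnu (Set.mem_Iio.mpr (by omega)) (Set.mem_Iio.mpr (by omega)) (by omega)
  · calc nu (n - 1) ≤ ∑ i ∈ Finset.range k, lam (n * k - k + i) := hA3
      _ = ∑ i ∈ Finset.range k, lam ((n - 1) * k + i) :=
        Finset.sum_congr rfl fun i _ => by rw [Nat.sub_one_mul]
end
end

section
/- Let (G,W) be a matrix-weighted graph with n vertices and k×k weights, with Laplacian L_W having eigenvalues λ_1(L_W) ≤ … ≤ λ_{nk}(L_W), and let L_{tr W} be the Laplacian of the scalar-weighted graph (G, tr W), with eigenvalues λ_1(L_{tr W}) ≤ … ≤ λ_n(L_{tr W}). Then λ_{k+1}(L_W) ≤ (1/k)·λ_2(L_{tr W}) and λ_{nk}(L_W) ≥ (1/k)·λ_n(L_{tr W}). -/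
open Matrix Finset

noncomputable section

section Aux

variable {n k : ℕ} (W : Fin n → Fin n → Matrix (Fin k) (Fin k) ℝ)

lemma psd_trace_nonneg {A : Matrix (Fin k) (Fin k) ℝ} (h : A.PosSemidef) : 0 ≤ A.trace := by
  rw [Matrix.trace]
  refine Finset.sum_nonneg fun i _ => ?_
  exact h.diag_nonneg

lemma mwLap_apply (p q : Fin n × Fin k) :
    mwLap n k W p q =
      (if p.1 = q.1 then (∑ u, W u p.1) p.2 q.2 else 0) - W p.1 q.1 p.2 q.2 := rfl


lemma mwLap_mulVec_basis (hsym : ∀ u v, W u v = W v u) (i : Fin k) :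
    mwLap n k W *ᵥ (fun q : Fin n × Fin k => if q.2 = i then (1:ℝ) else 0) = 0 := by
  funext p
  simp only [Matrix.mulVec, dotProduct, Pi.zero_apply]
  rw [Fintype.sum_prod_type]
  have h1 : ∀ u : Fin n,
      (∑ j : Fin k, mwLap n k W p (u, j) * (if j = i then (1:ℝ) else 0))
        = mwLap n k W p (u, i) := by
    intro u
    rw [Finset.sum_eq_single i]
    · simp
    · intro b _ hb; simp [hb]
    · simp
  rw [Finset.sum_congr rfl fun u _ => h1 u]
  simp only [mwLap_apply]
  rw [Finset.sum_sub_distrib]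
  have h2 : (∑ u : Fin n, if p.1 = u then (∑ w, W w p.1) p.2 i else 0)
      = (∑ w, W w p.1) p.2 i := by simp
  rw [h2, Matrix.sum_apply]
  rw [Finset.sum_congr rfl fun u _ => show W u p.1 p.2 i = W p.1 u p.2 i by rw [hsym]]
  ring

lemma went (hpsd : ∀ u v, (W u v).PosSemidef) :
    ∀ u v (i j : Fin k), W u v i j = W u v j i := fun u v i j => by
  have := (hpsd u v).1.apply j i
  simpa using this

lemma mwLap_transpose (hpsd : ∀ u v, (W u v).PosSemidef)
    (hsym : ∀ u v, W u v = W v u) : (mwLap n k W)ᵀ = mwLap n k W := by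
  funext p q
  obtain ⟨p1, p2⟩ := p
  obtain ⟨q1, q2⟩ := q
  rw [Matrix.transpose_apply, mwLap_apply, mwLap_apply]
  by_cases h : p1 = q1
  · subst h
    simp only [if_pos rfl]
    congr 1
    · rw [Matrix.sum_apply, Matrix.sum_apply]
      exact Finset.sum_congr rfl fun u _ => went W hpsd u p1 q2 p2
    · rw [hsym, went W hpsd]
  · rw [if_neg (fun hh => h hh.symm), if_neg h]
    rw [hsym, went W hpsd]

lemma sum_diag_block (G : SimpleGraph (Fin n)) (h0 : ∀ u v, ¬ G.Adj u v → W u v = 0)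
    (v u : Fin n) :
    ∑ j : Fin k, mwLap n k W (v, j) (u, j) = trLap n k W v u := by
  have hWvv : W v v = 0 := h0 v v (G.irrefl)
  simp only [mwLap_apply, trLap]
  by_cases h : v = u
  · subst h
    simp only [eq_self_iff_true, if_true]
    rw [Finset.sum_sub_distrib]
    have h1 : (∑ j : Fin k, (∑ w, W w v) j j) = ∑ w, (W w v).trace := by
      simp only [Matrix.sum_apply, Matrix.trace, Matrix.diag]
      exact Finset.sum_comm
    rw [h1]
    simp [hWvv]
  · simp only [if_neg h]
    rw [Finset.sum_sub_distrib]
    simp [Matrix.trace, Matrix.diag]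


lemma block_quadform_sum (G : SimpleGraph (Fin n)) (h0 : ∀ u v, ¬ G.Adj u v → W u v = 0)
    (y : Fin n → ℝ) :
    (∑ j : Fin k, (fun q : Fin n × Fin k => y q.1 * (if q.2 = j then (1:ℝ) else 0)) ⬝ᵥ
      (mwLap n k W *ᵥ fun q : Fin n × Fin k => y q.1 * (if q.2 = j then (1:ℝ) else 0)))
    = y ⬝ᵥ (trLap n k W *ᵥ y) := by
  have hMx : ∀ (j : Fin k) (v : Fin n),
      (mwLap n k W *ᵥ fun q : Fin n × Fin k => y q.1 * (if q.2 = j then (1:ℝ) else 0)) (v, j)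
        = ∑ u, mwLap n k W (v,j) (u,j) * y u := by
    intro j v
    simp only [Matrix.mulVec, dotProduct]
    rw [Fintype.sum_prod_type]
    refine Finset.sum_congr rfl fun u _ => ?_
    rw [Finset.sum_eq_single j]
    · simp [mul_comm]
    · intro b _ hb; simp [hb]
    · simp
  have hdot : ∀ j : Fin k,
      ((fun q : Fin n × Fin k => y q.1 * (if q.2 = j then (1:ℝ) else 0)) ⬝ᵥ
        (mwLap n k W *ᵥ fun q : Fin n × Fin k => y q.1 * (if q.2 = j then (1:ℝ) else 0)))
      = ∑ v, y v * ∑ u, mwLap n k W (v,j) (u,j) * y u := by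
    intro j
    simp only [dotProduct]
    rw [Fintype.sum_prod_type]
    refine Finset.sum_congr rfl fun v _ => ?_
    rw [← hMx j v]
    rw [Finset.sum_eq_single j]
    · simp
    · intro b _ hb; simp [hb]
    · simp
  rw [Finset.sum_congr rfl fun j _ => hdot j]
  rw [Finset.sum_comm]
  have hrhs : y ⬝ᵥ (trLap n k W *ᵥ y) = ∑ v, y v * ∑ u, trLap n k W v u * y u := by
    simp [dotProduct, Matrix.mulVec]
  rw [hrhs]
  refine Finset.sum_congr rfl fun v _ => ?_
  rw [← Finset.mul_sum]
  congr 1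
  rw [Finset.sum_comm]
  refine Finset.sum_congr rfl fun u _ => ?_
  rw [← Finset.sum_mul, sum_diag_block W G h0 v u]

lemma trLap_eq (G : SimpleGraph (Fin n)) (h0 : ∀ u v, ¬ G.Adj u v → W u v = 0)
    (u v : Fin n) :
    trLap n k W u v = (if u = v then ∑ w, (W w v).trace else 0) - (W u v).trace := by
  unfold trLap
  by_cases h : u = v
  · subst h
    rw [if_pos rfl, if_pos rfl, h0 u u G.irrefl]
    simp
  · rw [if_neg h, if_neg h]
    ring

lemma trLap_quadform_nonneg (G : SimpleGraph (Fin n))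
    (hpsd : ∀ u v, (W u v).PosSemidef)
    (hsym : ∀ u v, W u v = W v u)
    (h0 : ∀ u v, ¬ G.Adj u v → W u v = 0) (x : Fin n → ℝ) :
    0 ≤ x ⬝ᵥ (trLap n k W *ᵥ x) := by
  set tw : Fin n → Fin n → ℝ := fun u v => (W u v).trace with htw
  have htws : ∀ u v, tw u v = tw v u := fun u v => by rw [htw]; simp only; rw [hsym]
  have hform : x ⬝ᵥ (trLap n k W *ᵥ x)
      = (∑ u, x u ^ 2 * ∑ w, tw w u) - ∑ u, ∑ v, tw u v * (x u * x v) := by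
    have h1 : x ⬝ᵥ (trLap n k W *ᵥ x) = ∑ u, x u * ∑ v, trLap n k W u v * x v := by
      simp [dotProduct, Matrix.mulVec]
    rw [h1]
    have h2 : ∀ u : Fin n, (∑ v, trLap n k W u v * x v)
        = (∑ w, tw w u) * x u - ∑ v, tw u v * x v := by
      intro u
      rw [Finset.sum_congr rfl fun v _ => by rw [trLap_eq W G h0 u v, sub_mul]]
      rw [Finset.sum_sub_distrib]
      congr 1
      rw [Finset.sum_eq_single u]
      · simp [htw]
      · intro b _ hb; simp [Ne.symm hb]
      · simp
    rw [Finset.sum_congr rfl fun u _ => by rw [h2 u]]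
    rw [Finset.sum_congr rfl fun u _ => mul_sub (x u) _ _]
    rw [Finset.sum_sub_distrib]
    congr 1
    · exact Finset.sum_congr rfl fun u _ => by ring
    · exact Finset.sum_congr rfl fun u _ => by rw [Finset.mul_sum]; exact Finset.sum_congr rfl fun v _ => by ring
  have hkey : (∑ u, ∑ v, tw u v * (x u - x v)^2)
      = 2 * ((∑ u, x u ^ 2 * ∑ w, tw w u) - ∑ u, ∑ v, tw u v * (x u * x v)) := by
    have e1 : ∀ u v : Fin n, tw u v * (x u - x v)^2
        = tw u v * x u ^2 + tw u v * x v ^2 - 2 * (tw u v * (x u * x v)) := by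
      intro u v; ring
    rw [Finset.sum_congr rfl fun u _ => Finset.sum_congr rfl fun v _ => e1 u v]
    rw [Finset.sum_congr rfl fun u _ => Finset.sum_sub_distrib _ _]
    rw [Finset.sum_sub_distrib]
    rw [Finset.sum_congr rfl fun u _ => Finset.sum_add_distrib]
    rw [Finset.sum_add_distrib]
    have e2 : (∑ u, ∑ v, tw u v * x u ^ 2) = ∑ u, x u ^2 * ∑ w, tw w u := by
      refine Finset.sum_congr rfl fun u _ => ?_
      rw [Finset.mul_sum]
      exact Finset.sum_congr rfl fun v _ => by rw [htws u v]; ring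
    have e3 : (∑ u, ∑ v, tw u v * x v ^ 2) = ∑ u, x u ^2 * ∑ w, tw w u := by
      rw [Finset.sum_comm]
      refine Finset.sum_congr rfl fun v _ => ?_
      rw [Finset.mul_sum]
      exact Finset.sum_congr rfl fun u _ => by ring
    have e4 : (∑ u, ∑ v, 2 * (tw u v * (x u * x v))) = 2 * ∑ u, ∑ v, tw u v * (x u * x v) := by
      rw [Finset.mul_sum]
      exact Finset.sum_congr rfl fun u _ => (Finset.mul_sum _ _ _).symm
    rw [e2, e3, e4]
    ring
  have hnn : 0 ≤ ∑ u, ∑ v, tw u v * (x u - x v)^2 := by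
    refine Finset.sum_nonneg fun u _ => Finset.sum_nonneg fun v _ => ?_
    exact mul_nonneg (psd_trace_nonneg (hpsd u v)) (sq_nonneg _)
  rw [hform]
  nlinarith [hnn, hkey]

lemma spectral_quadform {ι : Type*} [Fintype ι] [DecidableEq ι]
    (U : Matrix ι ι ℝ) (f : ι → ℝ) (x : ι → ℝ) :
    x ⬝ᵥ ((U * Matrix.diagonal f * Uᵀ) *ᵥ x) = ∑ p, f p * ((Uᵀ *ᵥ x) p)^2 := by
  rw [← Matrix.mulVec_mulVec, ← Matrix.mulVec_mulVec]
  rw [Matrix.dotProduct_mulVec, ← Matrix.mulVec_transpose]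
  simp only [Matrix.mulVec_diagonal, dotProduct, Pi.mul_apply]
  exact Finset.sum_congr rfl fun p _ => by ring

lemma spectral_norm {ι : Type*} [Fintype ι] [DecidableEq ι]
    (U : Matrix ι ι ℝ) (hU : U * Uᵀ = 1) (x : ι → ℝ) :
    x ⬝ᵥ x = ∑ p, ((Uᵀ *ᵥ x) p)^2 := by
  have h : U *ᵥ (Uᵀ *ᵥ x) = x := by rw [Matrix.mulVec_mulVec, hU, Matrix.one_mulVec]
  calc x ⬝ᵥ x = x ⬝ᵥ (U *ᵥ (Uᵀ *ᵥ x)) := by rw [h]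
    _ = (x ᵥ* U) ⬝ᵥ (Uᵀ *ᵥ x) := Matrix.dotProduct_mulVec _ _ _
    _ = (Uᵀ *ᵥ x) ⬝ᵥ (Uᵀ *ᵥ x) := by rw [← Matrix.mulVec_transpose]
    _ = ∑ p, ((Uᵀ *ᵥ x) p)^2 := by simp [dotProduct, sq]

lemma col_transform {ι : Type*} [Fintype ι] [DecidableEq ι]
    (U : Matrix ι ι ℝ) (hU : U * Uᵀ = 1) (r : ι) :
    Uᵀ *ᵥ (fun q => U q r) = fun p => if p = r then (1:ℝ) else 0 := by
  have hU' : Uᵀ * U = 1 := mul_eq_one_comm.mp hU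
  funext p
  have h : (Uᵀ * U) p r = (1 : Matrix ι ι ℝ) p r := by rw [hU']
  simpa [Matrix.mul_apply, Matrix.mulVec, dotProduct, Matrix.one_apply] using h


lemma dot_expand {ι κ : Type*} [Fintype ι] [Fintype κ] (a b : κ → ℝ) (f g : κ → ι → ℝ) :
    (fun q => ∑ s, a s * f s q) ⬝ᵥ (fun q => ∑ t, b t * g t q)
      = ∑ s, ∑ t, a s * b t * (f s ⬝ᵥ g t) := by
  simp only [dotProduct]
  rw [Finset.sum_congr rfl fun q _ => Finset.sum_mul_sum univ univ _ _]
  rw [Finset.sum_comm]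
  refine Finset.sum_congr rfl fun s _ => ?_
  rw [Finset.sum_comm]
  refine Finset.sum_congr rfl fun t _ => ?_
  rw [Finset.mul_sum]
  exact Finset.sum_congr rfl fun q _ => by ring

lemma mulVec_expand {ι κ : Type*} [Fintype ι] [Fintype κ]
    (M : Matrix ι ι ℝ) (a : κ → ℝ) (f : κ → ι → ℝ) :
    M *ᵥ (fun q => ∑ t, a t * f t q) = fun p => ∑ t, a t * (M *ᵥ f t) p := by
  funext p
  simp only [Matrix.mulVec, dotProduct]
  rw [Finset.sum_congr rfl fun q _ => Finset.mul_sum univ _ _]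
  rw [Finset.sum_comm]
  refine Finset.sum_congr rfl fun t _ => ?_
  rw [Finset.mul_sum]
  exact Finset.sum_congr rfl fun q _ => by ring


lemma gram_aux (y : Fin n → ℝ) (hy1 : (∑ v, y v) = 0) (j0 : Fin k) (s t : Fin (k+1)) :
    ((fun q : Fin n × Fin k => if h : (s:ℕ) < k then (if q.2 = ⟨(s:ℕ), h⟩ then (1:ℝ) else 0)
        else y q.1 * (if q.2 = j0 then 1 else 0)) ⬝ᵥ
      (fun q : Fin n × Fin k => if h : (t:ℕ) < k then (if q.2 = ⟨(t:ℕ), h⟩ then (1:ℝ) else 0)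
        else y q.1 * (if q.2 = j0 then 1 else 0)))
      = if s = t then (if (s:ℕ) < k then (n:ℝ) else y ⬝ᵥ y) else 0 := by
  by_cases hs : (s:ℕ) < k <;> by_cases ht : (t:ℕ) < k
  · -- both < k
    have f1 : (fun q : Fin n × Fin k => if h : (s:ℕ) < k then (if q.2 = ⟨(s:ℕ), h⟩ then (1:ℝ) else 0)
        else y q.1 * (if q.2 = j0 then 1 else 0))
        = fun q : Fin n × Fin k => if q.2 = ⟨(s:ℕ), hs⟩ then (1:ℝ) else 0 := by
      funext q; rw [dif_pos hs]
    have f2 : (fun q : Fin n × Fin k => if h : (t:ℕ) < k then (if q.2 = ⟨(t:ℕ), h⟩ then (1:ℝ) else 0)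
        else y q.1 * (if q.2 = j0 then 1 else 0))
        = fun q : Fin n × Fin k => if q.2 = ⟨(t:ℕ), ht⟩ then (1:ℝ) else 0 := by
      funext q; rw [dif_pos ht]
    rw [f1, f2]
    simp only [dotProduct]
    rw [Fintype.sum_prod_type]
    have hinner : ∀ v : Fin n,
        (∑ i : Fin k, (if i = ⟨(s:ℕ), hs⟩ then (1:ℝ) else 0) * (if i = ⟨(t:ℕ), ht⟩ then 1 else 0))
          = if s = t then 1 else 0 := by
      intro v
      rw [Finset.sum_eq_single (⟨(s:ℕ), hs⟩ : Fin k)]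
      · rw [if_pos rfl, one_mul]
        by_cases h : s = t
        · have h2 : (⟨(s:ℕ), hs⟩ : Fin k) = ⟨(t:ℕ), ht⟩ := Fin.mk_eq_mk.mpr (congrArg Fin.val h)
          rw [if_pos h2, if_pos h]
        · have h2 : (⟨(s:ℕ), hs⟩ : Fin k) ≠ ⟨(t:ℕ), ht⟩ :=
            fun hh => h (Fin.val_injective (Fin.mk_eq_mk.mp hh))
          rw [if_neg h2, if_neg h]
      · intro b _ hb; simp [hb]
      · simp
    rw [Finset.sum_congr rfl fun v _ => hinner v]
    rw [Finset.sum_const, Finset.card_univ, Fintype.card_fin, nsmul_eq_mul]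
    by_cases h : s = t <;> simp [h, hs, ht]
  · -- s < k, t not
    have f1 : (fun q : Fin n × Fin k => if h : (s:ℕ) < k then (if q.2 = ⟨(s:ℕ), h⟩ then (1:ℝ) else 0)
        else y q.1 * (if q.2 = j0 then 1 else 0))
        = fun q : Fin n × Fin k => if q.2 = ⟨(s:ℕ), hs⟩ then (1:ℝ) else 0 := by
      funext q; rw [dif_pos hs]
    have f2 : (fun q : Fin n × Fin k => if h : (t:ℕ) < k then (if q.2 = ⟨(t:ℕ), h⟩ then (1:ℝ) else 0)
        else y q.1 * (if q.2 = j0 then 1 else 0))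
        = fun q : Fin n × Fin k => y q.1 * (if q.2 = j0 then (1:ℝ) else 0) := by
      funext q; rw [dif_neg ht]
    have hst : s ≠ t := fun h => ht (h ▸ hs)
    rw [f1, f2, if_neg hst]
    simp only [dotProduct]
    rw [Fintype.sum_prod_type]
    have hinner : ∀ v : Fin n,
        (∑ i : Fin k, (if i = ⟨(s:ℕ), hs⟩ then (1:ℝ) else 0) * (y v * if i = j0 then 1 else 0))
          = y v * (if (⟨(s:ℕ), hs⟩ : Fin k) = j0 then 1 else 0) := by
      intro v
      rw [Finset.sum_eq_single (⟨(s:ℕ), hs⟩ : Fin k)]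
      · simp
      · intro b _ hb; simp [hb]
      · simp
    rw [Finset.sum_congr rfl fun v _ => hinner v, ← Finset.sum_mul, hy1, zero_mul]
  · -- t < k, s not
    have f1 : (fun q : Fin n × Fin k => if h : (s:ℕ) < k then (if q.2 = ⟨(s:ℕ), h⟩ then (1:ℝ) else 0)
        else y q.1 * (if q.2 = j0 then 1 else 0))
        = fun q : Fin n × Fin k => y q.1 * (if q.2 = j0 then (1:ℝ) else 0) := by
      funext q; rw [dif_neg hs]
    have f2 : (fun q : Fin n × Fin k => if h : (t:ℕ) < k then (if q.2 = ⟨(t:ℕ), h⟩ then (1:ℝ) else 0)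
        else y q.1 * (if q.2 = j0 then 1 else 0))
        = fun q : Fin n × Fin k => if q.2 = ⟨(t:ℕ), ht⟩ then (1:ℝ) else 0 := by
      funext q; rw [dif_pos ht]
    have hst : s ≠ t := fun h => hs (h ▸ ht)
    rw [f1, f2, if_neg hst]
    simp only [dotProduct]
    rw [Fintype.sum_prod_type]
    have hinner : ∀ v : Fin n,
        (∑ i : Fin k, (y v * (if i = j0 then (1:ℝ) else 0)) * (if i = ⟨(t:ℕ), ht⟩ then 1 else 0))
          = y v * (if j0 = (⟨(t:ℕ), ht⟩ : Fin k) then 1 else 0) := by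
      intro v
      rw [Finset.sum_eq_single j0]
      · simp
      · intro b _ hb; simp [hb]
      · simp
    rw [Finset.sum_congr rfl fun v _ => hinner v, ← Finset.sum_mul, hy1, zero_mul]
  · -- neither
    have f1 : (fun q : Fin n × Fin k => if h : (s:ℕ) < k then (if q.2 = ⟨(s:ℕ), h⟩ then (1:ℝ) else 0)
        else y q.1 * (if q.2 = j0 then 1 else 0))
        = fun q : Fin n × Fin k => y q.1 * (if q.2 = j0 then (1:ℝ) else 0) := by
      funext q; rw [dif_neg hs]
    have f2 : (fun q : Fin n × Fin k => if h : (t:ℕ) < k then (if q.2 = ⟨(t:ℕ), h⟩ then (1:ℝ) else 0)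
        else y q.1 * (if q.2 = j0 then 1 else 0))
        = fun q : Fin n × Fin k => y q.1 * (if q.2 = j0 then (1:ℝ) else 0) := by
      funext q; rw [dif_neg ht]
    have hst : s = t := by
      have h1 := s.isLt
      have h2 := t.isLt
      exact Fin.val_injective (by omega : (s:ℕ) = (t:ℕ))
    rw [f1, f2, if_pos hst, if_neg hs]
    simp only [dotProduct]
    rw [Fintype.sum_prod_type]
    have hinner : ∀ v : Fin n,
        (∑ i : Fin k, (y v * (if i = j0 then (1:ℝ) else 0)) * (y v * (if i = j0 then 1 else 0)))
          = y v * y v := by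
      intro v
      rw [Finset.sum_eq_single j0]
      · simp
      · intro b _ hb; simp [hb]
      · simp
    rw [Finset.sum_congr rfl fun v _ => hinner v]


lemma exists_test_vector {n k : ℕ} (hklt : k < n * k)
    (U : Matrix (Fin n × Fin k) (Fin n × Fin k) ℝ)
    (wv : Fin (k+1) → (Fin n × Fin k → ℝ)) :
    ∃ a : Fin (k+1) → ℝ, a ≠ 0 ∧
      ∀ p : Fin n × Fin k, (finProdFinEquiv p : ℕ) < k →
        (Uᵀ *ᵥ (fun q => ∑ s, a s * wv s q)) p = 0 := by
  set Mc : Matrix (Fin (k+1)) (Fin (k+1)) ℝ := fun rr ss =>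
    if h : (rr:ℕ) < k then
      ∑ q : Fin n × Fin k, U q (finProdFinEquiv.symm ⟨(rr:ℕ), lt_trans h hklt⟩) * wv ss q
    else 0 with hMc
  have hdet : Mc.det = 0 :=
    Matrix.det_eq_zero_of_row_eq_zero (Fin.last k) (fun ss => by rw [hMc]; simp)
  obtain ⟨a, ha0, haM⟩ := Matrix.exists_mulVec_eq_zero_iff.mpr hdet
  refine ⟨a, ha0, ?_⟩
  intro p hp
  have hrr : (((⟨(finProdFinEquiv p : ℕ), by omega⟩ : Fin (k+1))) : ℕ) < k := hp
  have hpe : (finProdFinEquiv.symm ⟨((⟨(finProdFinEquiv p : ℕ), by omega⟩ : Fin (k+1)) : ℕ), lt_trans hrr hklt⟩ : Fin n × Fin k) = p := by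
    have h2 : (⟨((⟨(finProdFinEquiv p : ℕ), by omega⟩ : Fin (k+1)) : ℕ), lt_trans hrr hklt⟩ : Fin (n*k)) = finProdFinEquiv p :=
      Fin.val_injective rfl
    rw [h2, Equiv.symm_apply_apply]
  have h3 : (Mc *ᵥ a) (⟨(finProdFinEquiv p : ℕ), by omega⟩ : Fin (k+1)) = 0 := by
    rw [haM]; rfl
  calc (Uᵀ *ᵥ (fun q => ∑ s, a s * wv s q)) p
      = ∑ s, (∑ q : Fin n × Fin k, U q p * wv s q) * a s := by
        simp only [Matrix.mulVec, dotProduct, Matrix.transpose_apply]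
        rw [Finset.sum_congr rfl fun q _ => Finset.mul_sum Finset.univ _ _]
        rw [Finset.sum_comm]
        exact Finset.sum_congr rfl fun s _ => by
          rw [Finset.sum_mul]
          exact Finset.sum_congr rfl fun q _ => by ring
    _ = 0 := by
        rw [← h3]
        simp only [Matrix.mulVec, dotProduct, hMc]
        refine Finset.sum_congr rfl fun s _ => ?_
        rw [dif_pos hrr, hpe]

end Aux

set_option maxHeartbeats 2000000 in
/-- Corollary of the trace bound: `λ_{k+1}(L_W) ≤ (1/k) λ_2(L_{tr W})` and
`λ_{nk}(L_W) ≥ (1/k) λ_n(L_{tr W})`.  Eigenvalues are enumerated in increasing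
order with multiplicity (0-indexed), witnessed by orthogonal spectral
decompositions. -/
theorem matrix_weighted_laplacian_trace_bound_corollary
    (n k : ℕ) (hn : 2 ≤ n) (hk : 0 < k) (G : SimpleGraph (Fin n))
    (W : Fin n → Fin n → Matrix (Fin k) (Fin k) ℝ)
    (hpsd : ∀ u v, (W u v).PosSemidef)
    (hsym : ∀ u v, W u v = W v u)
    (h0 : ∀ u v, ¬ G.Adj u v → W u v = 0)
    (lam : ℕ → ℝ) (hlam : MonotoneOn lam (Set.Iio (n * k)))
    (U : Matrix (Fin n × Fin k) (Fin n × Fin k) ℝ) (hU : U * Uᵀ = 1)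
    (hLW : mwLap n k W =
      U * Matrix.diagonal (fun p => lam (finProdFinEquiv p)) * Uᵀ)
    (nu : ℕ → ℝ) (hnu : MonotoneOn nu (Set.Iio n))
    (Ut : Matrix (Fin n) (Fin n) ℝ) (hUt : Ut * Utᵀ = 1)
    (hLtr : trLap n k W = Ut * Matrix.diagonal (fun v : Fin n => nu v) * Utᵀ) :
    lam k ≤ (1 / (k : ℝ)) * nu 1 ∧ (1 / (k : ℝ)) * nu (n - 1) ≤ lam (n * k - 1) := by
  have hk0 : (k:ℝ) ≠ 0 := Nat.cast_ne_zero.mpr hk.ne'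
  have hklt : k < n * k := by nlinarith
  have hnkpos : 0 < n * k := Nat.mul_pos (by omega) hk
  have quadU : ∀ x : Fin n × Fin k → ℝ, x ⬝ᵥ (mwLap n k W *ᵥ x)
      = ∑ p, lam (finProdFinEquiv p) * ((Uᵀ *ᵥ x) p)^2 := fun x => by
    rw [hLW]; exact spectral_quadform U _ x
  have normU : ∀ x : Fin n × Fin k → ℝ, x ⬝ᵥ x = ∑ p, ((Uᵀ *ᵥ x) p)^2 :=
    fun x => spectral_norm U hU x
  have quadUt : ∀ x : Fin n → ℝ, x ⬝ᵥ (trLap n k W *ᵥ x)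
      = ∑ p : Fin n, nu p * ((Utᵀ *ᵥ x) p)^2 := fun x => by
    rw [hLtr]; exact spectral_quadform Ut _ x
  have normUt : ∀ x : Fin n → ℝ, x ⬝ᵥ x = ∑ p : Fin n, ((Utᵀ *ᵥ x) p)^2 :=
    fun x => spectral_norm Ut hUt x
  have hcol : ∀ r : Fin n, ((fun v => Ut v r) ⬝ᵥ (trLap n k W *ᵥ (fun v => Ut v r))) = nu r := by
    intro r
    rw [quadUt, col_transform Ut hUt r]
    rw [Finset.sum_eq_single r]
    · simp
    · intro b _ hb; simp [hb]
    · simp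
  have hcolnorm : ∀ r : Fin n, ((fun v => Ut v r) ⬝ᵥ (fun v => Ut v r)) = 1 := by
    intro r
    rw [normUt, col_transform Ut hUt r, Finset.sum_eq_single r]
    · simp
    · intro b _ hb; simp [hb]
    · simp
  have hnuno : ∀ r : Fin n, 0 ≤ nu r := fun r => by
    rw [← hcol r]; exact trLap_quadform_nonneg W G hpsd hsym h0 _
  constructor
  · -- LEFT: lam k ≤ (1/k) * nu 1
    set r0 : Fin n := ⟨0, by omega⟩ with hr0
    set r1 : Fin n := ⟨1, by omega⟩ with hr1
    have hr01 : r0 ≠ r1 := by simp [hr0, hr1, Fin.ext_iff]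
    have hnu1 : 0 ≤ nu 1 := hnuno r1
    set c0 : Fin n → ℝ := fun v => Ut v r0 with hc0
    set c1 : Fin n → ℝ := fun v => Ut v r1 with hc1
    obtain ⟨b0, b1, hb, hbs⟩ : ∃ b0 b1 : ℝ, (b0 ≠ 0 ∨ b1 ≠ 0) ∧
        b0 * (∑ v, c0 v) + b1 * (∑ v, c1 v) = 0 := by
      by_cases h : (∑ v, c1 v) = 0
      · exact ⟨0, 1, Or.inr one_ne_zero, by simp [h]⟩
      · refine ⟨1, -((∑ v, c0 v)/(∑ v, c1 v)), Or.inl one_ne_zero, ?_⟩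
        field_simp
        ring
    set y : Fin n → ℝ := fun v => b0 * c0 v + b1 * c1 v with hy
    have h1y : (∑ v, y v) = 0 := by
      rw [hy]
      rw [Finset.sum_add_distrib, ← Finset.mul_sum, ← Finset.mul_sum]
      exact hbs
    have hcy : Utᵀ *ᵥ y = fun p => b0 * (if p = r0 then (1:ℝ) else 0) + b1 * (if p = r1 then 1 else 0) := by
      have hy2 : y = b0 • c0 + b1 • c1 := by funext v; simp [hy]
      rw [hy2, Matrix.mulVec_add, Matrix.mulVec_smul, Matrix.mulVec_smul,
        col_transform Ut hUt r0, col_transform Ut hUt r1]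
      funext p
      simp
    have hsq : ∀ p : Fin n, ((Utᵀ *ᵥ y) p)^2
        = b0^2 * (if p = r0 then (1:ℝ) else 0) + b1^2 * (if p = r1 then 1 else 0) := by
      intro p
      simp only [hcy]
      by_cases h0' : p = r0
      · have h1' : p ≠ r1 := fun h => hr01 (h0' ▸ h ▸ rfl)
        rw [if_pos h0', if_neg h1']
        ring
      · by_cases h1' : p = r1
        · rw [if_neg h0', if_pos h1']
          ring
        · rw [if_neg h0', if_neg h1']
          ring
    have hyy : y ⬝ᵥ y = b0^2 + b1^2 := by
      rw [normUt y, Finset.sum_congr rfl fun p _ => hsq p, Finset.sum_add_distrib,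
        ← Finset.mul_sum, ← Finset.mul_sum]
      simp [Finset.sum_ite_eq']
    have hyypos : 0 < y ⬝ᵥ y := by
      rw [hyy]
      rcases hb with h | h
      · have h2 : 0 < b0^2 := by positivity
        nlinarith [sq_nonneg b1]
      · have h2 : 0 < b1^2 := by positivity
        nlinarith [sq_nonneg b0]
    have hyLy : y ⬝ᵥ (trLap n k W *ᵥ y) ≤ nu 1 * (y ⬝ᵥ y) := by
      rw [quadUt y, hyy]
      rw [Finset.sum_congr rfl fun p _ => by rw [hsq p]]
      have e : ∀ p : Fin n, nu p * (b0^2 * (if p = r0 then (1:ℝ) else 0) + b1^2 * (if p = r1 then 1 else 0))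
          = (if p = r0 then nu p * b0^2 else 0) + (if p = r1 then nu p * b1^2 else 0) := by
        intro p
        by_cases h0' : p = r0
        · have h1' : p ≠ r1 := fun h => hr01 (h0' ▸ h ▸ rfl)
          rw [if_pos h0', if_neg h1', if_pos h0', if_neg h1']
          ring
        · by_cases h1' : p = r1
          · rw [if_neg h0', if_pos h1', if_neg h0', if_pos h1']
            ring
          · rw [if_neg h0', if_neg h1', if_neg h0', if_neg h1']
            ring
      rw [Finset.sum_congr rfl fun p _ => e p, Finset.sum_add_distrib]
      simp only [Finset.sum_ite_eq', Finset.mem_univ, if_true]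
      have hmono : nu 0 ≤ nu 1 := hnu (Set.mem_Iio.mpr (by omega)) (Set.mem_Iio.mpr (by omega)) (by omega)
      nlinarith [sq_nonneg b0, sq_nonneg b1]
    have hsumq : (∑ j : Fin k, ((fun q : Fin n × Fin k => y q.1 * (if q.2 = j then (1:ℝ) else 0)) ⬝ᵥ
        (mwLap n k W *ᵥ fun q : Fin n × Fin k => y q.1 * (if q.2 = j then (1:ℝ) else 0))))
        = y ⬝ᵥ (trLap n k W *ᵥ y) := block_quadform_sum W G h0 y
    obtain ⟨j0, -, hj0⟩ : ∃ j ∈ Finset.univ,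
        ((fun q : Fin n × Fin k => y q.1 * (if q.2 = j then (1:ℝ) else 0)) ⬝ᵥ
        (mwLap n k W *ᵥ fun q : Fin n × Fin k => y q.1 * (if q.2 = j then (1:ℝ) else 0)))
        ≤ (1/(k:ℝ)) * (nu 1 * (y ⬝ᵥ y)) := by
      apply Finset.exists_le_of_sum_le ⟨⟨0, hk⟩, Finset.mem_univ _⟩
      rw [hsumq]
      have hconst : (∑ _j : Fin k, (1/(k:ℝ)) * (nu 1 * (y ⬝ᵥ y))) = nu 1 * (y ⬝ᵥ y) := by
        rw [Finset.sum_const, Finset.card_univ, Fintype.card_fin, nsmul_eq_mul]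
        rw [← mul_assoc, mul_one_div, div_self hk0, one_mul]
      rw [hconst]
      exact hyLy
    set wv : Fin (k+1) → (Fin n × Fin k → ℝ) := fun s q =>
      if h : (s:ℕ) < k then (if q.2 = ⟨(s:ℕ), h⟩ then (1:ℝ) else 0)
      else y q.1 * (if q.2 = j0 then 1 else 0) with hwv
    have hklast : ¬ ((Fin.last k : ℕ) < k) := by simp
    have hwlast : wv (Fin.last k) = fun q : Fin n × Fin k => y q.1 * (if q.2 = j0 then (1:ℝ) else 0) := by
      funext q; rw [hwv]; simp
    have hwker : ∀ s : Fin (k+1), (s:ℕ) < k → mwLap n k W *ᵥ wv s = 0 := by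
      intro s hs
      have hws : wv s = fun q : Fin n × Fin k => if q.2 = ⟨(s:ℕ), hs⟩ then (1:ℝ) else 0 := by
        funext q; rw [hwv]; simp only; rw [dif_pos hs]
      rw [hws]
      exact mwLap_mulVec_basis W hsym _
    have hLsym := mwLap_transpose W hpsd hsym
    have hB0 : ∀ s t : Fin (k+1), ((s:ℕ) < k ∨ (t:ℕ) < k) →
        (wv s ⬝ᵥ (mwLap n k W *ᵥ wv t)) = 0 := by
      intro s t hst
      by_cases ht : (t:ℕ) < k
      · rw [hwker t ht, dotProduct_zero]
      · have hs : (s:ℕ) < k := hst.resolve_right ht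
        rw [Matrix.dotProduct_mulVec, ← Matrix.mulVec_transpose, hLsym, hwker s hs,
          zero_dotProduct]
    have hgram : ∀ s t : Fin (k+1), (wv s ⬝ᵥ wv t)
        = if s = t then (if (s:ℕ) < k then (n:ℝ) else y ⬝ᵥ y) else 0 := by
      intro s t
      rw [hwv]
      exact gram_aux y h1y j0 s t
    obtain ⟨a, ha0, hc⟩ := exists_test_vector hklt U wv
    set x : Fin n × Fin k → ℝ := fun q => ∑ s, a s * wv s q with hx
    have hqLx : x ⬝ᵥ (mwLap n k W *ᵥ x) = (a (Fin.last k))^2 *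
        ((fun q : Fin n × Fin k => y q.1 * (if q.2 = j0 then (1:ℝ) else 0)) ⬝ᵥ
          (mwLap n k W *ᵥ fun q : Fin n × Fin k => y q.1 * (if q.2 = j0 then (1:ℝ) else 0))) := by
      rw [hx, mulVec_expand, dot_expand]
      rw [Finset.sum_eq_single (Fin.last k)]
      · rw [Finset.sum_eq_single (Fin.last k)]
        · rw [hwlast]; ring
        · intro t _ htl
          rw [hB0 _ _ (Or.inr (Fin.val_lt_last htl)), mul_zero]
        · intro h; exact absurd (Finset.mem_univ _) h
      · intro s _ hsl
        refine Finset.sum_eq_zero fun t _ => ?_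
        rw [hB0 _ _ (Or.inl (Fin.val_lt_last hsl)), mul_zero]
      · intro h; exact absurd (Finset.mem_univ _) h
    have hxx : x ⬝ᵥ x = ∑ s, (a s)^2 * (if (s:ℕ) < k then (n:ℝ) else y ⬝ᵥ y) := by
      rw [hx, dot_expand]
      refine Finset.sum_congr rfl fun s _ => ?_
      rw [Finset.sum_eq_single s]
      · rw [hgram s s, if_pos rfl]; ring
      · intro t _ hts
        rw [hgram s t, if_neg (fun h => hts h.symm), mul_zero]
      · intro h; exact absurd (Finset.mem_univ _) h
    have hterm : ∀ s : Fin (k+1), 0 ≤ (a s)^2 * (if (s:ℕ) < k then (n:ℝ) else y ⬝ᵥ y) := by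
      intro s
      refine mul_nonneg (sq_nonneg _) ?_
      by_cases h : (s:ℕ) < k
      · rw [if_pos h]; positivity
      · rw [if_neg h]; exact le_of_lt hyypos
    have hxxge : (a (Fin.last k))^2 * (y ⬝ᵥ y) ≤ x ⬝ᵥ x := by
      rw [hxx]
      have h4 := Finset.single_le_sum
        (f := fun s : Fin (k+1) => (a s)^2 * (if (s:ℕ) < k then (n:ℝ) else y ⬝ᵥ y))
        (fun s _ => hterm s) (Finset.mem_univ (Fin.last k))
      simp only [if_neg hklast] at h4
      exact h4
    have hxxpos : 0 < x ⬝ᵥ x := by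
      rw [hxx]
      obtain ⟨s, hs⟩ : ∃ s, a s ≠ 0 := by
        by_contra hcon
        push_neg at hcon
        exact ha0 (funext hcon)
      refine Finset.sum_pos' (fun s _ => hterm s) ⟨s, Finset.mem_univ s, ?_⟩
      have h2 : 0 < (a s)^2 := by positivity
      by_cases h : (s:ℕ) < k
      · rw [if_pos h]
        have h3 : (0:ℝ) < n := by exact_mod_cast (by omega : 0 < n)
        exact mul_pos h2 h3
      · rw [if_neg h]
        exact mul_pos h2 hyypos
    have hlow : lam k * (x ⬝ᵥ x) ≤ x ⬝ᵥ (mwLap n k W *ᵥ x) := by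
      rw [quadU x, normU x, Finset.mul_sum]
      refine Finset.sum_le_sum fun p _ => ?_
      by_cases hp : (finProdFinEquiv p : ℕ) < k
      · rw [hc p hp]
        simp
      · refine mul_le_mul_of_nonneg_right ?_ (sq_nonneg _)
        refine hlam (Set.mem_Iio.mpr hklt) (Set.mem_Iio.mpr (finProdFinEquiv p).isLt) (by omega)
    by_cases hlk : lam k ≤ 0
    · have h5 : 0 ≤ (1/(k:ℝ)) * nu 1 := mul_nonneg (by positivity) hnu1
      linarith
    · push_neg at hlk
      by_cases hal : a (Fin.last k) = 0
      · exfalso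
        rw [hal] at hqLx
        simp only [ne_eq, OfNat.ofNat_ne_zero, not_false_eq_true, zero_pow, zero_mul] at hqLx
        nlinarith [hlow, hxxpos]
      · have hal2 : 0 < (a (Fin.last k))^2 := by positivity
        have h6 := mul_le_mul_of_nonneg_left hj0 (le_of_lt hal2)
        have h7 : lam k * ((a (Fin.last k))^2 * (y ⬝ᵥ y)) ≤ lam k * (x ⬝ᵥ x) :=
          mul_le_mul_of_nonneg_left hxxge (le_of_lt hlk)
        have key : lam k * ((a (Fin.last k))^2 * (y ⬝ᵥ y))
            ≤ (a (Fin.last k))^2 * ((1/(k:ℝ)) * (nu 1 * (y ⬝ᵥ y))) := by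
          calc lam k * ((a (Fin.last k))^2 * (y ⬝ᵥ y)) ≤ lam k * (x ⬝ᵥ x) := h7
            _ ≤ x ⬝ᵥ (mwLap n k W *ᵥ x) := hlow
            _ = _ := hqLx
            _ ≤ _ := h6
        nlinarith [key, mul_pos hal2 hyypos]

  · -- RIGHT
    have hup : ∀ x : Fin n × Fin k → ℝ,
        x ⬝ᵥ (mwLap n k W *ᵥ x) ≤ lam (n*k-1) * (x ⬝ᵥ x) := by
      intro x
      rw [quadU x, normU x, Finset.mul_sum]
      refine Finset.sum_le_sum fun p _ => ?_
      refine mul_le_mul_of_nonneg_right ?_ (sq_nonneg _)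
      refine hlam (Set.mem_Iio.mpr (finProdFinEquiv p).isLt)
        (Set.mem_Iio.mpr (by omega)) ?_
      have := (finProdFinEquiv p).isLt
      omega
    set r : Fin n := ⟨n-1, by omega⟩ with hrdef
    set z : Fin n → ℝ := fun v => Ut v r with hzdef
    have hsum : (∑ j : Fin k, ((fun q : Fin n × Fin k => z q.1 * (if q.2 = j then (1:ℝ) else 0)) ⬝ᵥ
        (mwLap n k W *ᵥ fun q : Fin n × Fin k => z q.1 * (if q.2 = j then (1:ℝ) else 0))))
        = nu (n-1) := by
      rw [block_quadform_sum W G h0 z]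
      exact hcol r
    obtain ⟨j1, -, hj1⟩ : ∃ j ∈ Finset.univ, (1/(k:ℝ)) * nu (n-1) ≤
        ((fun q : Fin n × Fin k => z q.1 * (if q.2 = j then (1:ℝ) else 0)) ⬝ᵥ
        (mwLap n k W *ᵥ fun q : Fin n × Fin k => z q.1 * (if q.2 = j then (1:ℝ) else 0))) := by
      apply Finset.exists_le_of_sum_le ⟨⟨0, hk⟩, Finset.mem_univ _⟩
      rw [hsum]
      rw [Finset.sum_const, Finset.card_univ, Fintype.card_fin, nsmul_eq_mul]
      rw [← mul_assoc, mul_one_div, div_self hk0, one_mul]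
    have hzn : ((fun q : Fin n × Fin k => z q.1 * (if q.2 = j1 then (1:ℝ) else 0)) ⬝ᵥ
        (fun q : Fin n × Fin k => z q.1 * (if q.2 = j1 then (1:ℝ) else 0))) = 1 := by
      simp only [dotProduct]
      rw [Fintype.sum_prod_type]
      have h1 : ∀ v : Fin n, (∑ i : Fin k,
          (z v * (if i = j1 then (1:ℝ) else 0)) * (z v * (if i = j1 then 1 else 0))) = z v * z v := by
        intro v
        rw [Finset.sum_eq_single j1]
        · simp
        · intro b _ hb; simp [hb]
        · simp
      rw [Finset.sum_congr rfl fun v _ => h1 v]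
      exact hcolnorm r
    have h2 := hup (fun q : Fin n × Fin k => z q.1 * (if q.2 = j1 then (1:ℝ) else 0))
    rw [hzn, mul_one] at h2
    linarith
end
end

section
/- Let (G,W) be a matrix-weighted graph with n vertices and k×k weights, with adjacency matrix A_W having eigenvalues μ_1(A_W) ≥ … ≥ μ_{nk}(A_W), and let A_{tr W} be the adjacency matrix of the scalar-weighted graph (G, tr W), with eigenvalues μ_1(A_{tr W}) ≥ … ≥ μ_n(A_{tr W}). Then ∑_{i=1}^{k} μ_i(A_W) ≥ μ_1(A_{tr W}) ≥ μ_n(A_{tr W}) ≥ ∑_{i=1}^{k} μ_{(n−1)k+i}(A_W). -/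
open Matrix Finset

noncomputable section

/-- The adjacency matrix of the scalar-weighted trace graph `(G, tr W)`, with
entries `tr (W u v)`. -/
def trAdj (n k : ℕ) (W : Fin n → Fin n → Matrix (Fin k) (Fin k) ℝ) :
    Matrix (Fin n) (Fin n) ℝ :=
  fun u v => (W u v).trace

/-- Ky Fan type upper bound: if `0 ≤ c ≤ 1` on `range N`, `∑ c = k`, and `mu` is
antitone on `Iio N`, then `∑ mu p * c p ≤ ∑_{i<k} mu i`. -/
lemma kyfan_upper (N k : ℕ) (hk : k ≤ N) (mu : ℕ → ℝ)
    (hmu : AntitoneOn mu (Set.Iio (N:ℕ)))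
    (c : ℕ → ℝ) (hc0 : ∀ p ∈ Finset.range N, 0 ≤ c p)
    (hc1 : ∀ p ∈ Finset.range N, c p ≤ 1)
    (hs : ∑ p ∈ Finset.range N, c p = k) :
    ∑ p ∈ Finset.range N, mu p * c p ≤ ∑ i ∈ Finset.range k, mu i := by
  rcases Nat.eq_zero_or_pos k with rfl | hk1
  · have h0 : ∀ p ∈ Finset.range N, c p = 0 :=
      (Finset.sum_eq_zero_iff_of_nonneg hc0).mp (by simpa using hs)
    have : ∑ p ∈ Finset.range N, mu p * c p = 0 :=
      Finset.sum_eq_zero fun p hp => by rw [h0 p hp, mul_zero]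
    simp [this]
  · set t := mu (k - 1) with ht
    have hkN : (k : ℕ) - 1 < N := lt_of_lt_of_le (Nat.sub_lt hk1 one_pos) hk
    have split : ∑ p ∈ Finset.range k, ((mu p - t) * c p) +
        ∑ p ∈ Finset.Ico k N, ((mu p - t) * c p) = ∑ p ∈ Finset.range N, ((mu p - t) * c p) :=
      Finset.sum_range_add_sum_Ico _ hk
    have h1 : ∑ p ∈ Finset.range k, ((mu p - t) * c p) ≤ ∑ p ∈ Finset.range k, (mu p - t) := by
      apply Finset.sum_le_sum
      intro p hp
      have hp' : p < k := Finset.mem_range.mp hp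
      have hpN : p ∈ Finset.range N := Finset.mem_range.mpr (lt_of_lt_of_le hp' hk)
      have hge : t ≤ mu p := hmu (Set.mem_Iio.mpr (lt_of_lt_of_le hp' hk)) hkN
        (Nat.le_sub_one_of_lt hp')
      nlinarith [hc0 p hpN, hc1 p hpN]
    have h2 : ∑ p ∈ Finset.Ico k N, ((mu p - t) * c p) ≤ 0 := by
      apply Finset.sum_nonpos
      intro p hp
      obtain ⟨hp1, hp2⟩ := Finset.mem_Ico.mp hp
      have hle : mu p ≤ t := hmu hkN (Set.mem_Iio.mpr hp2) (le_trans (Nat.sub_le k 1) hp1)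
      have := hc0 p (Finset.mem_range.mpr hp2)
      nlinarith
    have expand : ∑ p ∈ Finset.range N, ((mu p - t) * c p)
        = (∑ p ∈ Finset.range N, mu p * c p) - t * k := by
      simp only [sub_mul]
      rw [Finset.sum_sub_distrib, ← Finset.mul_sum, hs]
    have expand2 : ∑ p ∈ Finset.range k, (mu p - t) = (∑ i ∈ Finset.range k, mu i) - t * k := by
      rw [Finset.sum_sub_distrib, Finset.sum_const, Finset.card_range, nsmul_eq_mul, mul_comm]
    linarith

/-- Ky Fan type lower bound: the corresponding lower bound by the `k` smallest values. -/
lemma kyfan_lower (N k : ℕ) (hk : k ≤ N) (mu : ℕ → ℝ)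
    (hmu : AntitoneOn mu (Set.Iio (N:ℕ)))
    (c : ℕ → ℝ) (hc0 : ∀ p ∈ Finset.range N, 0 ≤ c p)
    (hc1 : ∀ p ∈ Finset.range N, c p ≤ 1)
    (hs : ∑ p ∈ Finset.range N, c p = k) :
    ∑ i ∈ Finset.range k, mu (N - k + i) ≤ ∑ p ∈ Finset.range N, mu p * c p := by
  rcases Nat.eq_zero_or_pos k with rfl | hk1
  · have h0 : ∀ p ∈ Finset.range N, c p = 0 :=
      (Finset.sum_eq_zero_iff_of_nonneg hc0).mp (by simpa using hs)
    have : ∑ p ∈ Finset.range N, mu p * c p = 0 :=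
      Finset.sum_eq_zero fun p hp => by rw [h0 p hp, mul_zero]
    simp [this]
  · set t := mu (N - k) with ht
    have hNk : N - k < N := Nat.sub_lt (lt_of_lt_of_le hk1 hk) hk1
    have split : ∑ p ∈ Finset.range (N - k), ((mu p - t) * c p) +
        ∑ p ∈ Finset.Ico (N - k) N, ((mu p - t) * c p)
          = ∑ p ∈ Finset.range N, ((mu p - t) * c p) :=
      Finset.sum_range_add_sum_Ico _ (Nat.sub_le N k)
    have h1 : 0 ≤ ∑ p ∈ Finset.range (N - k), ((mu p - t) * c p) := by
      apply Finset.sum_nonneg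
      intro p hp
      have hp' : p < N - k := Finset.mem_range.mp hp
      have hpN : p < N := lt_trans hp' hNk
      have hge : t ≤ mu p := hmu (Set.mem_Iio.mpr hpN) (Set.mem_Iio.mpr hNk) (le_of_lt hp')
      have := hc0 p (Finset.mem_range.mpr hpN)
      nlinarith
    have h2 : ∑ p ∈ Finset.Ico (N - k) N, (mu p - t) ≤
        ∑ p ∈ Finset.Ico (N - k) N, ((mu p - t) * c p) := by
      apply Finset.sum_le_sum
      intro p hp
      obtain ⟨hp1, hp2⟩ := Finset.mem_Ico.mp hp
      have hle : mu p ≤ t := hmu (Set.mem_Iio.mpr hNk) (Set.mem_Iio.mpr hp2) hp1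
      have := hc1 p (Finset.mem_range.mpr hp2)
      nlinarith
    have expand : ∑ p ∈ Finset.range N, ((mu p - t) * c p)
        = (∑ p ∈ Finset.range N, mu p * c p) - t * k := by
      simp only [sub_mul]
      rw [Finset.sum_sub_distrib, ← Finset.mul_sum, hs]
    have expand3 : ∑ p ∈ Finset.Ico (N - k) N, (mu p - t)
        = (∑ i ∈ Finset.range k, mu (N - k + i)) - t * k := by
      rw [Finset.sum_sub_distrib, Finset.sum_const, Nat.card_Ico, nsmul_eq_mul,
        Finset.sum_Ico_eq_sum_range, Nat.sub_sub_self hk, mul_comm]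
    linarith

/-- The quadratic form of the trace adjacency matrix at any unit vector is bounded
between the sums of the `k` smallest and the `k` largest eigenvalues of `mwAdj`. -/
lemma quad_bound (n k : ℕ) (hn : 0 < n)
    (W : Fin n → Fin n → Matrix (Fin k) (Fin k) ℝ)
    (mu : ℕ → ℝ) (hmu : AntitoneOn mu (Set.Iio (n * k)))
    (U : Matrix (Fin n × Fin k) (Fin n × Fin k) ℝ) (hU : U * Uᵀ = 1)
    (hAW : mwAdj n k W =
      U * Matrix.diagonal (fun p => mu (finProdFinEquiv p)) * Uᵀ)
    (x : Fin n → ℝ) (hx : ∑ u, x u ^ 2 = 1) :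
    (∑ i ∈ Finset.range k, mu ((n - 1) * k + i)) ≤
        (∑ u, ∑ w, x u * trAdj n k W u w * x w) ∧
      (∑ u, ∑ w, x u * trAdj n k W u w * x w) ≤ ∑ i ∈ Finset.range k, mu i := by
  classical
  set Y : Matrix (Fin n × Fin k) (Fin k) ℝ :=
    fun p j => if p.2 = j then x p.1 else 0 with hYdef
  have hU' : Uᵀ * U = 1 := mul_eq_one_comm.mp hU
  set Z : Matrix (Fin n × Fin k) (Fin k) ℝ := Uᵀ * Y with hZdef
  have hYY : Yᵀ * Y = 1 := by
    ext j j'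
    rw [Matrix.mul_apply, Fintype.sum_prod_type]
    simp only [Matrix.transpose_apply]
    simp only [Matrix.transpose_apply, hYdef, ite_mul, mul_ite, zero_mul, mul_zero,
      Finset.sum_ite_eq, Finset.mem_univ, if_true]
    by_cases h : j = j'
    · subst h
      simp only [Finset.sum_ite_eq', Finset.mem_univ, if_true, Matrix.one_apply_eq]
      simpa [sq] using hx
    · simp [Finset.sum_ite_eq', Ne.symm h, Matrix.one_apply, h]
  have hZZ : Zᵀ * Z = 1 := by
    rw [hZdef, Matrix.transpose_mul, Matrix.transpose_transpose, Matrix.mul_assoc,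
      ← Matrix.mul_assoc U, hU, Matrix.one_mul, hYY]
  have hQ : (∑ u, ∑ w, x u * trAdj n k W u w * x w)
      = ∑ j, (Yᵀ * mwAdj n k W * Y) j j := by
    simp only [Matrix.mul_apply, Matrix.transpose_apply]
    simp only [Matrix.mul_apply, Matrix.transpose_apply, Fintype.sum_prod_type, hYdef,
      mwAdj, trAdj, Matrix.trace, Matrix.diag, ite_mul, mul_ite, zero_mul, mul_zero,
      Finset.sum_ite_eq, Finset.sum_ite_eq', Finset.mem_univ, if_true,
      Finset.sum_mul, Finset.mul_sum]
    have h1 : ∀ u : Fin n, ∑ w : Fin n, ∑ i : Fin k, x u * W u w i i * x w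
        = ∑ i : Fin k, ∑ w : Fin n, x u * W u w i i * x w := fun u => Finset.sum_comm
    simp_rw [h1]
    exact Finset.sum_comm.trans (Finset.sum_congr rfl fun i _ => Finset.sum_comm)
  set c : Fin n × Fin k → ℝ := fun p => ∑ j, (Z p j) ^ 2 with hcdef
  have hdiag : ∑ j, (Yᵀ * mwAdj n k W * Y) j j
      = ∑ p, mu (finProdFinEquiv p) * c p := by
    have hmat : Yᵀ * mwAdj n k W * Y
        = Zᵀ * (Matrix.diagonal (fun p => mu (finProdFinEquiv p)) :
          Matrix (Fin n × Fin k) (Fin n × Fin k) ℝ) * Z := by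
      rw [hAW, hZdef]
      simp only [Matrix.transpose_mul, Matrix.transpose_transpose, Matrix.mul_assoc]
    rw [hmat]
    have h2 : ∀ j : Fin k,
        ((Zᵀ * (Matrix.diagonal (fun p => mu (finProdFinEquiv p)) :
          Matrix (Fin n × Fin k) (Fin n × Fin k) ℝ) * Z :
            Matrix (Fin k) (Fin k) ℝ)) j j
          = ∑ p, mu (finProdFinEquiv p) * (Z p j) ^ 2 := by
      intro j
      rw [Matrix.mul_apply]
      refine Finset.sum_congr rfl fun p _ => ?_
      rw [Matrix.mul_diagonal, Matrix.transpose_apply]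
      ring
    rw [Finset.sum_congr rfl fun j _ => h2 j, Finset.sum_comm]
    exact Finset.sum_congr rfl fun p _ => (Finset.mul_sum _ _ _).symm
  have hcsum : ∑ p, c p = (k : ℝ) := by
    calc ∑ p, c p = ∑ j : Fin k, ∑ p, (Z p j) ^ 2 := Finset.sum_comm
      _ = ∑ j : Fin k, (Zᵀ * Z) j j := by
          refine Finset.sum_congr rfl fun j _ => ?_
          rw [Matrix.mul_apply]
          exact Finset.sum_congr rfl fun p _ => by rw [Matrix.transpose_apply, sq]
      _ = ∑ j : Fin k, (1 : Matrix (Fin k) (Fin k) ℝ) j j := by rw [hZZ]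
      _ = (k : ℝ) := by simp [Matrix.one_apply]
  have hc0 : ∀ p, 0 ≤ c p := fun p => Finset.sum_nonneg fun j _ => sq_nonneg _
  have hc1 : ∀ p, c p ≤ 1 := by
    intro p
    have hM : (Z * Zᵀ) * (Z * Zᵀ) = Z * Zᵀ := by
      rw [Matrix.mul_assoc, ← Matrix.mul_assoc Zᵀ, hZZ, Matrix.one_mul]
    have hcp : c p = (Z * Zᵀ) p p := by
      rw [Matrix.mul_apply]
      simp only [Matrix.transpose_apply, hcdef, sq]
    have hsymM : ∀ q, (Z * Zᵀ) q p = (Z * Zᵀ) p q := by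
      intro q
      rw [Matrix.mul_apply, Matrix.mul_apply]
      simp only [Matrix.transpose_apply]
      exact Finset.sum_congr rfl fun j _ => mul_comm _ _
    have hsq : c p = ∑ q, ((Z * Zᵀ) p q) ^ 2 := by
      conv_lhs => rw [hcp, ← hM, Matrix.mul_apply]
      exact Finset.sum_congr rfl fun q _ => by rw [hsymM q, sq]
    have hle : c p ^ 2 ≤ c p := by
      have h := Finset.single_le_sum (f := fun q => ((Z * Zᵀ) p q) ^ 2)
        (fun q _ => sq_nonneg _) (Finset.mem_univ p)
      rw [← hsq] at h
      calc c p ^ 2 = ((Z * Zᵀ) p p) ^ 2 := by rw [hcp]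
        _ ≤ c p := h
    nlinarith [hc0 p]
  -- transfer to ℕ-indexed sums
  set cN : ℕ → ℝ := fun m => if h : m < n * k then c (finProdFinEquiv.symm ⟨m, h⟩) else 0
    with hcNdef
  have hcNi : ∀ i : Fin (n * k), cN (i : ℕ) = c (finProdFinEquiv.symm i) := by
    intro i
    rw [hcNdef]
    simp only [i.isLt, dif_pos, Fin.eta]
  have hsum_eq : ∑ p, mu (finProdFinEquiv p) * c p
      = ∑ m ∈ Finset.range (n * k), mu m * cN m := by
    rw [← Fin.sum_univ_eq_sum_range (fun m => mu m * cN m) (n * k),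
      ← Equiv.sum_comp finProdFinEquiv (fun i : Fin (n * k) => mu (i : ℕ) * cN (i : ℕ))]
    refine Finset.sum_congr rfl fun p _ => ?_
    rw [hcNi, Equiv.symm_apply_apply]
  have hcN0 : ∀ m ∈ Finset.range (n * k), 0 ≤ cN m := by
    intro m hm
    rw [hcNdef]
    simp only [Finset.mem_range.mp hm, dif_pos]
    exact hc0 _
  have hcN1 : ∀ m ∈ Finset.range (n * k), cN m ≤ 1 := by
    intro m hm
    rw [hcNdef]
    simp only [Finset.mem_range.mp hm, dif_pos]
    exact hc1 _
  have hsN : ∑ m ∈ Finset.range (n * k), cN m = (k : ℝ) := by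
    rw [← Fin.sum_univ_eq_sum_range cN (n * k)]
    calc ∑ i : Fin (n * k), cN (i : ℕ)
        = ∑ i : Fin (n * k), c (finProdFinEquiv.symm i) :=
          Finset.sum_congr rfl fun i _ => hcNi i
      _ = ∑ p, c p := Equiv.sum_comp finProdFinEquiv.symm c
      _ = (k : ℝ) := hcsum
  have hkN : k ≤ n * k := Nat.le_mul_of_pos_left k hn
  have hsub : n * k - k = (n - 1) * k := (Nat.sub_one_mul n k).symm
  constructor
  · have hlow := kyfan_lower (n * k) k hkN mu hmu cN hcN0 hcN1 hsN
    rw [hsub] at hlow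
    rw [hQ, hdiag, hsum_eq]
    exact hlow
  · have hup := kyfan_upper (n * k) k hkN mu hmu cN hcN0 hcN1 hsN
    rw [hQ, hdiag, hsum_eq]
    exact hup

/-- Trace bound relating the adjacency spectra of a matrix-weighted graph `(G, W)`
and its trace graph `(G, tr W)`:
`∑_{i=1}^k μ_i(A_W) ≥ μ_1(A_{tr W}) ≥ μ_n(A_{tr W}) ≥ ∑_{i=1}^k μ_{(n-1)k+i}(A_W)`.
Here `mu` (resp. `nu`) enumerates the eigenvalues of `A_W` (resp. `A_{tr W}`) in
decreasing order with multiplicity (0-indexed), witnessed by orthogonal spectral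
decompositions. -/
theorem matrix_weighted_adjacency_trace_bound
    (n k : ℕ) (hn : 0 < n) (G : SimpleGraph (Fin n))
    (W : Fin n → Fin n → Matrix (Fin k) (Fin k) ℝ)
    (hpsd : ∀ u v, (W u v).PosSemidef)
    (hsym : ∀ u v, W u v = W v u)
    (h0 : ∀ u v, ¬ G.Adj u v → W u v = 0)
    (mu : ℕ → ℝ) (hmu : AntitoneOn mu (Set.Iio (n * k)))
    (U : Matrix (Fin n × Fin k) (Fin n × Fin k) ℝ) (hU : U * Uᵀ = 1)
    (hAW : mwAdj n k W =
      U * Matrix.diagonal (fun p => mu (finProdFinEquiv p)) * Uᵀ)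
    (nu : ℕ → ℝ) (hnu : AntitoneOn nu (Set.Iio n))
    (Ut : Matrix (Fin n) (Fin n) ℝ) (hUt : Ut * Utᵀ = 1)
    (hAtr : trAdj n k W = Ut * Matrix.diagonal (fun v : Fin n => nu v) * Utᵀ) :
    nu 0 ≤ (∑ i ∈ Finset.range k, mu i) ∧
      nu (n - 1) ≤ nu 0 ∧
      (∑ i ∈ Finset.range k, mu ((n - 1) * k + i)) ≤ nu (n - 1) := by
  have hUt' : Utᵀ * Ut = 1 := mul_eq_one_comm.mp hUt
  have hDtr : Utᵀ * trAdj n k W * Ut = Matrix.diagonal (fun v : Fin n => nu v) := by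
    rw [hAtr, ← Matrix.mul_assoc, ← Matrix.mul_assoc, hUt', Matrix.one_mul,
      Matrix.mul_assoc, hUt', Matrix.mul_one]
  have hnuj : ∀ j : Fin n, nu (j : ℕ) = ∑ u, ∑ w, Ut u j * trAdj n k W u w * Ut w j := by
    intro j
    have h1 : (Utᵀ * trAdj n k W * Ut) j j = nu (j : ℕ) := by
      rw [hDtr, Matrix.diagonal_apply_eq]
    rw [← h1]
    simp only [Matrix.mul_apply, Matrix.transpose_apply, Finset.sum_mul]
    exact Finset.sum_comm
  have hxj : ∀ j : Fin n, ∑ u, (Ut u j) ^ 2 = 1 := by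
    intro j
    have h1 : (Utᵀ * Ut) j j = (1 : ℝ) := by rw [hUt', Matrix.one_apply_eq]
    rw [Matrix.mul_apply] at h1
    simp only [Matrix.transpose_apply] at h1
    simpa [sq] using h1
  have j0 : Fin n := ⟨0, hn⟩
  have hn1 : n - 1 < n := Nat.sub_lt hn one_pos
  obtain ⟨hl0, hu0⟩ := quad_bound n k hn W mu hmu U hU hAW
    (fun u => Ut u ⟨0, hn⟩) (hxj ⟨0, hn⟩)
  obtain ⟨hl1, hu1⟩ := quad_bound n k hn W mu hmu U hU hAW
    (fun u => Ut u ⟨n - 1, hn1⟩) (hxj ⟨n - 1, hn1⟩)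
  have e0 : nu 0 = ∑ u, ∑ w, Ut u ⟨0, hn⟩ * trAdj n k W u w * Ut w ⟨0, hn⟩ :=
    hnuj ⟨0, hn⟩
  have e1 : nu (n - 1) = ∑ u, ∑ w, Ut u ⟨n - 1, hn1⟩ * trAdj n k W u w * Ut w ⟨n - 1, hn1⟩ :=
    hnuj ⟨n - 1, hn1⟩
  refine ⟨?_, ?_, ?_⟩
  · rw [e0]; exact hu0
  · exact hnu (Set.mem_Iio.mpr hn) (Set.mem_Iio.mpr hn1) (Nat.zero_le _)
  · rw [e1]; exact hl1
end
end

section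
/- (Expander mixing lemma, trace form.) Let (G,W) be a d-regular matrix-weighted graph on n vertices with k×k weight matrices, with adjacency eigenvalues d = μ_1 = … = μ_k ≥ μ_{k+1} ≥ … ≥ μ_{nk}, and set |μ| = max(∑_{i=1}^{k} μ_{k+i}, ∑_{i=1}^{k} |μ_{(n−1)k+i}|). Then for all vertex subsets S and T, | tr(E(S,T)) − k·d·|S|·|T|/n | ≤ |μ| · √( |S|·|T|·(1 − |S|/n)·(1 − |T|/n) ). -/
open Matrix Finset

noncomputable section

/-- The matrix-weighted edge count between vertex subsets `S` and `T`:
`E(S,T) = ∑_{s ∈ S, t ∈ T} W s t`, a `k × k` matrix. -/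
def mwEdge (n k : ℕ) (W : Fin n → Fin n → Matrix (Fin k) (Fin k) ℝ)
    (S T : Finset (Fin n)) : Matrix (Fin k) (Fin k) ℝ :=
  ∑ s ∈ S, ∑ t ∈ T, W s t

/-! ### Auxiliary lemmas for the proof -/

lemma row_bound {I : Type*} [Fintype I] [DecidableEq I] {k : ℕ}
    (M : Matrix I (Fin k) ℝ) (g : ℝ) (hg : 0 ≤ g)
    (h : Mᵀ * M = g • (1 : Matrix (Fin k) (Fin k) ℝ)) (q : I) :
    ∑ i, M q i ^ 2 ≤ g := by
  have hsq : (M * Mᵀ) * (M * Mᵀ) = g • (M * Mᵀ) := by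
    calc M * Mᵀ * (M * Mᵀ) = M * ((Mᵀ * M) * Mᵀ) := by
          rw [Matrix.mul_assoc, Matrix.mul_assoc]
      _ = M * ((g • (1 : Matrix (Fin k) (Fin k) ℝ)) * Mᵀ) := by rw [h]
      _ = g • (M * Mᵀ) := by rw [Matrix.smul_mul, Matrix.one_mul, Matrix.mul_smul]
  set x := ∑ i, M q i ^ 2 with hx
  have hx0 : 0 ≤ x := Finset.sum_nonneg fun i _ => sq_nonneg _
  have hxd : (M * Mᵀ) q q = x := by
    rw [Matrix.mul_apply]
    exact Finset.sum_congr rfl fun i _ => (sq (M q i)).symm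
  have hmmSymm : ∀ q', (M * Mᵀ) q' q = (M * Mᵀ) q q' := by
    intro q'
    rw [Matrix.mul_apply, Matrix.mul_apply]
    exact Finset.sum_congr rfl fun i _ => by
      rw [Matrix.transpose_apply, Matrix.transpose_apply, mul_comm]
  have key : x * x ≤ g * x := by
    have h1 : ((M * Mᵀ) * (M * Mᵀ)) q q = g * x := by
      rw [hsq, Matrix.smul_apply, hxd, smul_eq_mul]
    have h2 : x * x ≤ ∑ q', (M * Mᵀ) q q' * (M * Mᵀ) q' q := by
      have hs := Finset.single_le_sum (f := fun q' => (M * Mᵀ) q q' * (M * Mᵀ) q' q)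
        (fun q' _ => by rw [hmmSymm q']; exact mul_self_nonneg _) (Finset.mem_univ q)
      calc x * x = (M * Mᵀ) q q * (M * Mᵀ) q q := by rw [hxd]
        _ ≤ _ := hs
    rw [← h1, Matrix.mul_apply]
    exact h2
  nlinarith [key, hx0, hg]

lemma trace_gram {I : Type*} [Fintype I] {k : ℕ} (M : Matrix I (Fin k) ℝ) :
    (Mᵀ * M).trace = ∑ q, ∑ i, M q i ^ 2 := by
  rw [Matrix.trace]
  simp only [Matrix.diag, Matrix.mul_apply, Matrix.transpose_apply]
  rw [Finset.sum_comm]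
  exact Finset.sum_congr rfl fun q _ => Finset.sum_congr rfl fun i _ => (sq (M q i)).symm

lemma trace_diag2 {I : Type*} [Fintype I] [DecidableEq I] {k : ℕ} (f : I → ℝ)
    (M N : Matrix I (Fin k) ℝ) :
    (Mᵀ * (Matrix.diagonal f * N)).trace = ∑ q, f q * ∑ i, M q i * N q i := by
  simp only [Matrix.trace, Matrix.diag, Matrix.mul_apply, Matrix.transpose_apply,
    Matrix.diagonal_apply, ite_mul, zero_mul, Finset.sum_ite_eq, Finset.mem_univ, if_true]
  rw [Finset.sum_comm]
  refine Finset.sum_congr rfl fun q _ => ?_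
  rw [Finset.mul_sum]
  exact Finset.sum_congr rfl fun i _ => by ring

lemma col_card {I : Type*} [Fintype I] [DecidableEq I] {k : ℕ}
    (G : Matrix I (Fin k) ℝ) (c : ℝ) (hc : 0 < c)
    (hG : Gᵀ * G = c • (1 : Matrix (Fin k) (Fin k) ℝ))
    (Λ : Finset I) (hsupp : ∀ q ∉ Λ, ∀ j, G q j = 0) :
    k ≤ Λ.card := by
  have htr : (Gᵀ * G).trace = (k : ℝ) * c := by
    rw [hG, Matrix.trace_smul, Matrix.trace_one]
    simp [mul_comm]
  have h1 : ∑ q, ∑ i, G q i ^ 2 = (k : ℝ) * c := by rw [← trace_gram, htr]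
  have h2 : ∑ q, ∑ i, G q i ^ 2 = ∑ q ∈ Λ, ∑ i, G q i ^ 2 := by
    rw [← Finset.sum_subset (Finset.subset_univ Λ)]
    intro q _ hq
    exact Finset.sum_eq_zero fun i _ => by rw [hsupp q hq i]; ring
  have h3 : ∑ q ∈ Λ, ∑ i, G q i ^ 2 ≤ (Λ.card : ℝ) * c := by
    calc ∑ q ∈ Λ, ∑ i, G q i ^ 2 ≤ ∑ _q ∈ Λ, c :=
          Finset.sum_le_sum fun q _ => row_bound G c hc.le hG q
      _ = (Λ.card : ℝ) * c := by rw [Finset.sum_const, nsmul_eq_mul]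
  have : (k : ℝ) ≤ (Λ.card : ℝ) := by
    have := h1 ▸ h2 ▸ h3
    exact le_of_mul_le_mul_right (by linarith [h1, h2, h3]) hc
  exact_mod_cast this

lemma mass_bound {I : Type*} [Fintype I] [DecidableEq I] {k : ℕ}
    (M G : Matrix I (Fin k) ℝ) (g c : ℝ) (hg : 0 ≤ g) (hc : 0 < c)
    (hM : Mᵀ * M = g • (1 : Matrix (Fin k) (Fin k) ℝ))
    (hG : Gᵀ * G = c • (1 : Matrix (Fin k) (Fin k) ℝ))
    (horth : Mᵀ * G = 0)
    (Λ : Finset I) (hsupp : ∀ q ∉ Λ, ∀ j, G q j = 0) :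
    (k : ℝ) * g + ∑ q ∈ Λ, ∑ i, M q i ^ 2 ≤ (Λ.card : ℝ) * g := by
  have hkm : (k : ℝ) ≤ (Λ.card : ℝ) := by
    exact_mod_cast col_card G c hc hG Λ hsupp
  rcases eq_or_lt_of_le hg with hg0 | hgpos
  · have hrow : ∀ q, ∑ i, M q i ^ 2 ≤ 0 := fun q => by
      have := row_bound M g hg hM q; linarith [this, hg0]
    have hsum : ∑ q ∈ Λ, ∑ i, M q i ^ 2 ≤ 0 :=
      Finset.sum_nonpos fun q _ => hrow q
    have hsum0 : 0 ≤ ∑ q ∈ Λ, ∑ i, M q i ^ 2 :=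
      Finset.sum_nonneg fun q _ => Finset.sum_nonneg fun i _ => sq_nonneg _
    nlinarith [hkm]
  · set R := (1/g) • (M * Mᵀ) + (1/c) • (G * Gᵀ) with hR
    have hGM : Gᵀ * M = 0 := by
      have := congrArg Matrix.transpose horth
      rwa [Matrix.transpose_mul, Matrix.transpose_transpose, Matrix.transpose_zero] at this
    have hRR : R * R = R := by
      rw [hR]
      rw [Matrix.add_mul, Matrix.mul_add, Matrix.mul_add]
      rw [Matrix.smul_mul, Matrix.smul_mul, Matrix.smul_mul, Matrix.smul_mul]
      rw [Matrix.mul_smul, Matrix.mul_smul, Matrix.mul_smul, Matrix.mul_smul]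
      have e1 : M * Mᵀ * (M * Mᵀ) = g • (M * Mᵀ) := by
        rw [Matrix.mul_assoc, ← Matrix.mul_assoc Mᵀ, hM, Matrix.smul_mul,
          Matrix.one_mul, Matrix.mul_smul]
      have e2 : G * Gᵀ * (G * Gᵀ) = c • (G * Gᵀ) := by
        rw [Matrix.mul_assoc, ← Matrix.mul_assoc Gᵀ, hG, Matrix.smul_mul,
          Matrix.one_mul, Matrix.mul_smul]
      have e3 : M * Mᵀ * (G * Gᵀ) = 0 := by
        rw [Matrix.mul_assoc, ← Matrix.mul_assoc Mᵀ, horth, Matrix.zero_mul, Matrix.mul_zero]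
      have e4 : G * Gᵀ * (M * Mᵀ) = 0 := by
        rw [Matrix.mul_assoc, ← Matrix.mul_assoc Gᵀ, hGM, Matrix.zero_mul, Matrix.mul_zero]
      rw [e1, e2, e3, e4]
      match_scalars <;> field_simp
    have hRsymm : ∀ p q, R p q = R q p := by
      intro p q
      rw [hR]
      simp only [Matrix.add_apply, Matrix.smul_apply, Matrix.mul_apply, smul_eq_mul]
      congr 1
      · congr 1
        exact Finset.sum_congr rfl fun i _ => by
          rw [Matrix.transpose_apply, Matrix.transpose_apply]; ring
      · congr 1
        exact Finset.sum_congr rfl fun i _ => by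
          rw [Matrix.transpose_apply, Matrix.transpose_apply]; ring
    have hdiag : ∀ q, R q q ≤ 1 := by
      intro q
      have h1 : (R * R) q q = R q q := by rw [hRR]
      have h2 : (R q q) ^ 2 ≤ (R * R) q q := by
        rw [Matrix.mul_apply]
        have hs := Finset.single_le_sum (f := fun q' => R q q' * R q' q)
          (fun q' _ => by rw [hRsymm q' q]; exact mul_self_nonneg _)
          (Finset.mem_univ q)
        calc (R q q)^2 = R q q * R q q := sq (R q q)
          _ ≤ _ := hs
      nlinarith [h1, h2]
    have hsumdiag : ∑ q ∈ Λ, R q q ≤ (Λ.card : ℝ) := by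
      calc ∑ q ∈ Λ, R q q ≤ ∑ _q ∈ Λ, (1:ℝ) := Finset.sum_le_sum fun q _ => hdiag q
        _ = (Λ.card : ℝ) := by rw [Finset.sum_const, nsmul_eq_mul, mul_one]
    have hMdiag : ∀ q, (M * Mᵀ) q q = ∑ i, M q i ^ 2 := by
      intro q; rw [Matrix.mul_apply]
      exact Finset.sum_congr rfl fun i _ => by
        rw [Matrix.transpose_apply]; exact (sq (M q i)).symm
    have hGdiag : ∀ q, (G * Gᵀ) q q = ∑ i, G q i ^ 2 := by
      intro q; rw [Matrix.mul_apply]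
      exact Finset.sum_congr rfl fun i _ => by
        rw [Matrix.transpose_apply]; exact (sq (G q i)).symm
    have hGpart : ∑ q ∈ Λ, ∑ i, G q i ^ 2 = (k:ℝ) * c := by
      have h2 : ∑ q, ∑ i, G q i ^ 2 = ∑ q ∈ Λ, ∑ i, G q i ^ 2 := by
        rw [← Finset.sum_subset (Finset.subset_univ Λ)]
        intro q _ hq
        exact Finset.sum_eq_zero fun i _ => by rw [hsupp q hq i]; ring
      rw [← h2, ← trace_gram, hG, Matrix.trace_smul, Matrix.trace_one]
      simp [mul_comm]
    have hexp : ∑ q ∈ Λ, R q q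
        = (1/g) * ∑ q ∈ Λ, ∑ i, M q i ^ 2 + (1/c) * ∑ q ∈ Λ, ∑ i, G q i ^ 2 := by
      rw [Finset.mul_sum, Finset.mul_sum, ← Finset.sum_add_distrib]
      refine Finset.sum_congr rfl fun q _ => ?_
      rw [hR]
      simp only [Matrix.add_apply, Matrix.smul_apply, smul_eq_mul]
      rw [hMdiag, hGdiag]
    rw [hexp, hGpart] at hsumdiag
    have hck : (1/c) * ((k:ℝ)*c) = (k:ℝ) := by field_simp
    rw [hck] at hsumdiag
    have := mul_le_mul_of_nonneg_right hsumdiag hg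
    have hgg : (1/g) * (∑ q ∈ Λ, ∑ i, M q i ^ 2) * g = ∑ q ∈ Λ, ∑ i, M q i ^ 2 := by
      field_simp
    nlinarith [this, hgg]

lemma downclosed_eq_range (s : Finset ℕ) (h : ∀ a ∈ s, ∀ b, b < a → b ∈ s) :
    s = Finset.range s.card := by
  have hsub : Finset.range s.card ⊆ s := by
    intro j hj
    rw [Finset.mem_range] at hj
    by_contra hj'
    have hss : s ⊆ Finset.range j := by
      intro a ha
      rw [Finset.mem_range]
      by_contra hle
      push_neg at hle
      rcases eq_or_lt_of_le hle with h1 | h1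
      · exact hj' (h1 ▸ ha)
      · exact hj' (h a ha j h1)
    have := Finset.card_le_card hss
    rw [Finset.card_range] at this
    omega
  exact (Finset.eq_of_subset_of_card_le hsub (by rw [Finset.card_range])).symm

lemma kyfan_upper_s7 (N k m : ℕ) (hk : 1 ≤ k) (h2k : 2*k ≤ N) (hm : k ≤ m) (hmN : m ≤ N)
    (μ : ℕ → ℝ) (hmono : AntitoneOn μ (Set.Iio N))
    (hd : ∀ j < m, μ j = μ 0)
    (g : ℝ) (hg : 0 ≤ g) (t : ℕ → ℝ)
    (ht0 : ∀ j < N, 0 ≤ t j) (htg : ∀ j < N, t j ≤ g)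
    (hsum : ∑ j ∈ range N, t j = k * g)
    (hmass : ∑ j ∈ range m, t j ≤ ((m:ℝ) - k) * g) :
    ∑ j ∈ range N, μ j * t j ≤ g * ∑ i ∈ range k, μ (k + i) := by
  have hN : 0 < N := by omega
  have hd0 : ∀ j < N, μ j ≤ μ 0 :=
    fun j hj => hmono (Set.mem_Iio.mpr hN) (Set.mem_Iio.mpr hj) (Nat.zero_le j)
  by_cases hm2k : 2*k ≤ m
  · have hRHS : ∑ i ∈ range k, μ (k+i) = (k:ℝ) * μ 0 := by
      rw [Finset.sum_congr rfl (fun i hi => hd (k+i) (by rw [Finset.mem_range] at hi; omega))]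
      rw [Finset.sum_const, Finset.card_range, nsmul_eq_mul]
    calc ∑ j ∈ range N, μ j * t j ≤ ∑ j ∈ range N, μ 0 * t j :=
          Finset.sum_le_sum fun j hj =>
            mul_le_mul_of_nonneg_right (hd0 j (Finset.mem_range.mp hj))
              (ht0 j (Finset.mem_range.mp hj))
      _ = μ 0 * ((k:ℝ)*g) := by rw [← Finset.mul_sum, hsum]
      _ = g * ((k:ℝ) * μ 0) := by ring
      _ = g * ∑ i ∈ range k, μ (k+i) := by rw [hRHS]
  · push_neg at hm2k
    set τ := μ (2*k - 1) with hτ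
    have h2k1N : 2*k - 1 < N := by omega
    have hτd : τ ≤ μ 0 := hd0 _ h2k1N
    have split1 : ∑ j ∈ range N, μ j * t j
        = ∑ j ∈ range N, (μ j - τ) * t j + τ * ((k:ℝ)*g) := by
      rw [← hsum, Finset.mul_sum, ← Finset.sum_add_distrib]
      exact Finset.sum_congr rfl fun j _ => by ring
    have hranges : ∑ j ∈ range N, (μ j - τ) * t j
        = ∑ j ∈ range m, (μ j - τ) * t j + ∑ j ∈ Ico m N, (μ j - τ) * t j := by
      rw [Finset.range_eq_Ico, ← Finset.sum_Ico_consecutive _ (Nat.zero_le m) hmN, ← Finset.range_eq_Ico]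
    have b1 : ∑ j ∈ range m, (μ j - τ) * t j ≤ (μ 0 - τ) * (((m:ℝ) - k) * g) := by
      have : ∑ j ∈ range m, (μ j - τ) * t j = (μ 0 - τ) * ∑ j ∈ range m, t j := by
        rw [Finset.mul_sum]
        exact Finset.sum_congr rfl fun j hj => by
          rw [hd j (Finset.mem_range.mp hj)]
      rw [this]
      exact mul_le_mul_of_nonneg_left hmass (by linarith)
    have b2 : ∑ j ∈ Ico m N, (μ j - τ) * t j ≤ (∑ j ∈ Ico m (2*k), (μ j - τ)) * g := by
      rw [← Finset.sum_Ico_consecutive (fun j => (μ j - τ) * t j) (le_of_lt hm2k) h2k]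
      have hb2a : ∑ j ∈ Ico m (2*k), (μ j - τ) * t j ≤ (∑ j ∈ Ico m (2*k), (μ j - τ)) * g := by
        rw [Finset.sum_mul]
        refine Finset.sum_le_sum fun j hj => ?_
        rw [Finset.mem_Ico] at hj
        have hjN : j < N := by omega
        have hjτ : τ ≤ μ j :=
          hmono (Set.mem_Iio.mpr hjN) (Set.mem_Iio.mpr h2k1N) (by omega)
        exact mul_le_mul_of_nonneg_left (htg j hjN) (by linarith)
      have hb2b : ∑ j ∈ Ico (2*k) N, (μ j - τ) * t j ≤ 0 := by
        refine Finset.sum_nonpos fun j hj => ?_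
        rw [Finset.mem_Ico] at hj
        have hjτ : μ j ≤ τ :=
          hmono (Set.mem_Iio.mpr h2k1N) (Set.mem_Iio.mpr hj.2) (by omega)
        exact mul_nonpos_of_nonpos_of_nonneg (by linarith) (ht0 j hj.2)
      linarith
    have hIco : ∑ j ∈ Ico m (2*k), (μ j - τ)
        = ∑ j ∈ Ico m (2*k), μ j - ((2*k - m : ℕ) : ℝ) * τ := by
      rw [Finset.sum_sub_distrib, Finset.sum_const, Nat.card_Ico, nsmul_eq_mul]
    have hRHSsum : ∑ i ∈ range k, μ (k + i)
        = ((m:ℝ) - k) * μ 0 + ∑ j ∈ Ico m (2*k), μ j := by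
      have e1 : ∑ j ∈ Ico k (2*k), μ j = ∑ i ∈ range k, μ (k + i) := by
        rw [Finset.sum_Ico_eq_sum_range, show 2*k - k = k from by omega]
      rw [← e1, ← Finset.sum_Ico_consecutive μ hm (le_of_lt hm2k)]
      have e2 : ∑ j ∈ Ico k m, μ j = ((m - k : ℕ):ℝ) * μ 0 := by
        rw [Finset.sum_congr rfl (fun j hj => hd j (Finset.mem_Ico.mp hj).2),
          Finset.sum_const, Nat.card_Ico, nsmul_eq_mul]
      rw [e2]
      congr 1
      push_cast [Nat.cast_sub hm]
      ring
    have hcast : ((2*k - m : ℕ) : ℝ) = 2*(k:ℝ) - m := by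
      push_cast [Nat.cast_sub (le_of_lt hm2k)]
      ring
    calc ∑ j ∈ range N, μ j * t j
        = ∑ j ∈ range m, (μ j - τ) * t j + ∑ j ∈ Ico m N, (μ j - τ) * t j
            + τ * ((k:ℝ)*g) := by rw [split1, hranges]
      _ ≤ (μ 0 - τ) * (((m:ℝ) - k) * g)
            + (∑ j ∈ Ico m (2*k), μ j - ((2*k - m : ℕ) : ℝ) * τ) * g
            + τ * ((k:ℝ)*g) := by rw [← hIco]; linarith [b1, b2]
      _ = g * (((m:ℝ) - k) * μ 0 + ∑ j ∈ Ico m (2*k), μ j) := by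
            rw [hcast]; ring
      _ = g * ∑ i ∈ range k, μ (k + i) := by rw [hRHSsum]

lemma kyfan_lower_s7 (N k : ℕ) (hk : 1 ≤ k) (hkN : k ≤ N)
    (μ : ℕ → ℝ) (hmono : AntitoneOn μ (Set.Iio N))
    (g : ℝ) (hg : 0 ≤ g) (t : ℕ → ℝ)
    (ht0 : ∀ j < N, 0 ≤ t j) (htg : ∀ j < N, t j ≤ g)
    (hsum : ∑ j ∈ range N, t j = k * g) :
    g * ∑ i ∈ range k, μ (N - k + i) ≤ ∑ j ∈ range N, μ j * t j := by
  set τ := μ (N - k) with hτ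
  have hNk : N - k < N := by omega
  have split1 : ∑ j ∈ range N, μ j * t j
      = ∑ j ∈ range N, (μ j - τ) * t j + τ * ((k:ℝ)*g) := by
    rw [← hsum, Finset.mul_sum, ← Finset.sum_add_distrib]
    exact Finset.sum_congr rfl fun j _ => by ring
  have hranges : ∑ j ∈ range N, (μ j - τ) * t j
      = ∑ j ∈ range (N-k), (μ j - τ) * t j + ∑ j ∈ Ico (N-k) N, (μ j - τ) * t j := by
    rw [Finset.range_eq_Ico, ← Finset.sum_Ico_consecutive _ (Nat.zero_le (N-k)) (le_of_lt hNk), ← Finset.range_eq_Ico]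
  have b1 : 0 ≤ ∑ j ∈ range (N-k), (μ j - τ) * t j := by
    refine Finset.sum_nonneg fun j hj => ?_
    rw [Finset.mem_range] at hj
    have hjN : j < N := by omega
    have : τ ≤ μ j := hmono (Set.mem_Iio.mpr hjN) (Set.mem_Iio.mpr hNk) (by omega)
    exact mul_nonneg (by linarith) (ht0 j hjN)
  have b2 : (∑ j ∈ Ico (N-k) N, (μ j - τ)) * g ≤ ∑ j ∈ Ico (N-k) N, (μ j - τ) * t j := by
    rw [Finset.sum_mul]
    refine Finset.sum_le_sum fun j hj => ?_
    rw [Finset.mem_Ico] at hj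
    have : μ j ≤ τ := hmono (Set.mem_Iio.mpr hNk) (Set.mem_Iio.mpr hj.2) hj.1
    have h1 : μ j - τ ≤ 0 := by linarith
    nlinarith [htg j hj.2]
  have hIco : ∑ j ∈ Ico (N-k) N, (μ j - τ)
      = ∑ i ∈ range k, μ (N - k + i) - (k : ℝ) * τ := by
    have hc : N - (N - k) = k := by omega
    rw [Finset.sum_sub_distrib, Finset.sum_const, Nat.card_Ico, hc, nsmul_eq_mul,
      Finset.sum_Ico_eq_sum_range, hc]
  calc g * ∑ i ∈ range k, μ (N - k + i)
      = (∑ i ∈ range k, μ (N - k + i) - (k:ℝ)*τ) * g + τ * ((k:ℝ)*g) := by ring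
    _ = (∑ j ∈ Ico (N-k) N, (μ j - τ)) * g + τ * ((k:ℝ)*g) := by rw [hIco]
    _ ≤ ∑ j ∈ Ico (N-k) N, (μ j - τ) * t j + τ * ((k:ℝ)*g) := by linarith [b2]
    _ ≤ ∑ j ∈ range (N-k), (μ j - τ) * t j + ∑ j ∈ Ico (N-k) N, (μ j - τ) * t j
          + τ * ((k:ℝ)*g) := by linarith [b1]
    _ = ∑ j ∈ range N, μ j * t j := by rw [← hranges, ← split1]

def mwInd (n k : ℕ) (y : Fin n → ℝ) : Matrix (Fin n × Fin k) (Fin k) ℝ :=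
  fun p i => if p.2 = i then y p.1 else 0

lemma mwInd_gram (n k : ℕ) (y z : Fin n → ℝ) :
    (mwInd n k y)ᵀ * (mwInd n k z) = (∑ u, y u * z u) • (1 : Matrix (Fin k) (Fin k) ℝ) := by
  ext i j
  rw [Matrix.mul_apply, Fintype.sum_prod_type]
  simp only [Matrix.transpose_apply, mwInd, ite_mul, zero_mul, mul_ite, mul_zero,
    Finset.sum_ite_eq', Finset.mem_univ, if_true]
  by_cases hij : i = j
  · subst hij
    simp [Matrix.smul_apply, Matrix.one_apply, smul_eq_mul]
  · simp [Matrix.smul_apply, Matrix.one_apply, hij]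
    exact fun h => absurd h.symm hij

lemma mwInd_adj_apply (n k : ℕ) (W : Fin n → Fin n → Matrix (Fin k) (Fin k) ℝ)
    (y z : Fin n → ℝ) (i j : Fin k) :
    ((mwInd n k y)ᵀ * (mwAdj n k W * mwInd n k z)) i j
      = ∑ u, ∑ v, y u * (z v * W u v i j) := by
  rw [Matrix.mul_apply, Fintype.sum_prod_type]
  simp only [Matrix.transpose_apply, mwInd, Matrix.mul_apply, Fintype.sum_prod_type, mwAdj,
    ite_mul, zero_mul, mul_ite, mul_zero, Finset.sum_ite_eq', Finset.mem_univ, if_true]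
  refine Finset.sum_congr rfl fun u _ => ?_
  rw [Finset.mul_sum]
  refine Finset.sum_congr rfl fun v _ => by ring

lemma mwAdj_mul_ones (n k : ℕ) (d : ℝ) (W : Fin n → Fin n → Matrix (Fin k) (Fin k) ℝ)
    (hrow : ∀ u, ∑ v, W u v = d • (1 : Matrix (Fin k) (Fin k) ℝ)) :
    mwAdj n k W * mwInd n k (fun _ => 1) = d • mwInd n k (fun _ => 1) := by
  ext p j
  rw [Matrix.mul_apply, Fintype.sum_prod_type]
  simp only [mwAdj, mwInd, Matrix.smul_apply, mul_ite, mul_one, mul_zero, smul_eq_mul,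
    Finset.sum_ite_eq', Finset.mem_univ, if_true]
  have : ∑ v, W p.1 v p.2 j = (∑ v, W p.1 v) p.2 j := (Matrix.sum_apply _ _ _ _).symm
  rw [this, hrow p.1, Matrix.smul_apply, Matrix.one_apply, smul_eq_mul]
  by_cases h : p.2 = j <;> simp [h]

set_option linter.unnecessarySeqFocus false in
lemma edge_sum (n k : ℕ) (d : ℝ) (W : Fin n → Fin n → Matrix (Fin k) (Fin k) ℝ)
    (hrow : ∀ u, ∑ v, W u v = d • (1 : Matrix (Fin k) (Fin k) ℝ))
    (hcol : ∀ v, ∑ u, W u v = d • (1 : Matrix (Fin k) (Fin k) ℝ))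
    (S T : Finset (Fin n)) (cS cT : ℝ) (i j : Fin k) :
    ∑ u, ∑ v, ((if u ∈ S then (1:ℝ) else 0) - cS) * (((if v ∈ T then (1:ℝ) else 0) - cT) * W u v i j)
      = mwEdge n k W S T i j
        - cT * (S.card : ℝ) * d * (if i = j then 1 else 0)
        - cS * (T.card : ℝ) * d * (if i = j then 1 else 0)
        + cS * (cT * ((n : ℝ) * (d * (if i = j then 1 else 0)))) := by
  have hrowij : ∀ u, ∑ v, W u v i j = d * (if i = j then 1 else 0) := by
    intro u
    rw [show ∑ v, W u v i j = (∑ v, W u v) i j from (Matrix.sum_apply _ _ _ _).symm, hrow u,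
      Matrix.smul_apply, Matrix.one_apply, smul_eq_mul]
  have hcolij : ∀ v, ∑ u, W u v i j = d * (if i = j then 1 else 0) := by
    intro v
    rw [show ∑ u, W u v i j = (∑ u, W u v) i j from (Matrix.sum_apply _ _ _ _).symm, hcol v,
      Matrix.smul_apply, Matrix.one_apply, smul_eq_mul]
  have inner : ∀ u, ∑ v, (((if v ∈ T then (1:ℝ) else 0) - cT) * W u v i j)
      = (∑ v ∈ T, W u v i j) - cT * (d * (if i = j then 1 else 0)) := by
    intro u
    have hpt : ∀ v, ((if v ∈ T then (1:ℝ) else 0) - cT) * W u v i j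
        = (if v ∈ T then W u v i j else 0) - cT * W u v i j := by
      intro v; by_cases h : v ∈ T <;> simp [h] <;> ring
    rw [Finset.sum_congr rfl fun v _ => hpt v, Finset.sum_sub_distrib,
      Finset.sum_ite_mem, Finset.univ_inter, ← Finset.mul_sum, hrowij u]
  have step : ∀ u, ((if u ∈ S then (1:ℝ) else 0) - cS) *
        ((∑ v ∈ T, W u v i j) - cT * (d * (if i = j then 1 else 0)))
      = (if u ∈ S then (1:ℝ) else 0) * (∑ v ∈ T, W u v i j)
        - cS * (∑ v ∈ T, W u v i j)
        - ((if u ∈ S then (1:ℝ) else 0) * (cT * (d * (if i = j then 1 else 0))))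
        + cS * (cT * (d * (if i = j then 1 else 0))) := by
    intro u; ring
  calc ∑ u, ∑ v, ((if u ∈ S then (1:ℝ) else 0) - cS) * (((if v ∈ T then (1:ℝ) else 0) - cT) * W u v i j)
      = ∑ u, ((if u ∈ S then (1:ℝ) else 0) - cS) *
          ((∑ v ∈ T, W u v i j) - cT * (d * (if i = j then 1 else 0))) := by
        refine Finset.sum_congr rfl fun u _ => ?_
        rw [← inner u, Finset.mul_sum]
    _ = (∑ u ∈ S, ∑ v ∈ T, W u v i j)
        - cS * (∑ u, ∑ v ∈ T, W u v i j)
        - (∑ u, (if u ∈ S then (1:ℝ) else 0)) * (cT * (d * (if i = j then 1 else 0)))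
        + (n : ℝ) * (cS * (cT * (d * (if i = j then 1 else 0)))) := by
        rw [Finset.sum_congr rfl fun u _ => step u]
        rw [Finset.sum_add_distrib, Finset.sum_sub_distrib, Finset.sum_sub_distrib,
          ← Finset.mul_sum, ← Finset.sum_mul, Finset.sum_const, Finset.card_univ,
          Fintype.card_fin, nsmul_eq_mul]
        have e0 : (∑ u, (if u ∈ S then (1:ℝ) else 0) * (∑ v ∈ T, W u v i j))
            = ∑ u ∈ S, ∑ v ∈ T, W u v i j := by
          rw [Finset.sum_congr rfl (fun u _ =>
            show (if u ∈ S then (1:ℝ) else 0) * (∑ v ∈ T, W u v i j)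
              = (if u ∈ S then (∑ v ∈ T, W u v i j) else 0) from by
            by_cases h : u ∈ S <;> simp [h]), Finset.sum_ite_mem, Finset.univ_inter]
        rw [e0]
    _ = mwEdge n k W S T i j
        - cT * (S.card : ℝ) * d * (if i = j then 1 else 0)
        - cS * (T.card : ℝ) * d * (if i = j then 1 else 0)
        + cS * (cT * ((n : ℝ) * (d * (if i = j then 1 else 0)))) := by
        have e1 : ∑ u ∈ S, ∑ v ∈ T, W u v i j = mwEdge n k W S T i j := by
          rw [mwEdge, Matrix.sum_apply]
          exact Finset.sum_congr rfl fun u _ => (Matrix.sum_apply _ _ _ _).symm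
        have e2 : ∑ u, ∑ v ∈ T, W u v i j = (T.card : ℝ) * (d * (if i = j then 1 else 0)) := by
          rw [Finset.sum_comm]
          rw [Finset.sum_congr rfl fun v _ => hcolij v, Finset.sum_const, nsmul_eq_mul]
        have e3 : ∑ u, (if u ∈ S then (1:ℝ) else 0) = (S.card : ℝ) := by
          rw [Finset.sum_ite_mem, Finset.univ_inter, Finset.sum_const, nsmul_eq_mul, mul_one]
        rw [e1, e2, e3]
        ring

lemma sum_equiv_range {M : Type*} [AddCommMonoid M] {n k : ℕ}
    (F : Fin n × Fin k → M) (FN : ℕ → M)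
    (hF : ∀ q : Fin n × Fin k, FN ((finProdFinEquiv q : Fin (n*k)) : ℕ) = F q) :
    ∑ j ∈ range (n*k), FN j = ∑ q, F q := by
  rw [← Fin.sum_univ_eq_sum_range FN (n*k),
    ← Equiv.sum_comp finProdFinEquiv (fun j : Fin (n*k) => FN (j : ℕ))]
  exact Finset.sum_congr rfl fun q _ => hF q

set_option maxHeartbeats 4000000 in
/-- Expander mixing lemma for `d`-regular matrix-weighted graphs, trace form. -/
theorem matrix_weighted_expander_mixing_trace
    (n k : ℕ) (hn : 2 ≤ n) (d : ℝ) (G : SimpleGraph (Fin n))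
    (W : Fin n → Fin n → Matrix (Fin k) (Fin k) ℝ)
    (hpsd : ∀ u v, (W u v).PosSemidef)
    (hsym : ∀ u v, W u v = W v u)
    (h0 : ∀ u v, ¬ G.Adj u v → W u v = 0)
    (hreg : ∀ v : Fin n, ∑ u, W u v = d • (1 : Matrix (Fin k) (Fin k) ℝ))
    (mu : ℕ → ℝ) (hmu : AntitoneOn mu (Set.Iio (n * k)))
    (htop : ∀ i < k, mu i = d)
    (U : Matrix (Fin n × Fin k) (Fin n × Fin k) ℝ) (hU : U * Uᵀ = 1)
    (hAW : mwAdj n k W =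
      U * Matrix.diagonal (fun p => mu (finProdFinEquiv p)) * Uᵀ)
    (S T : Finset (Fin n)) :
    |(mwEdge n k W S T).trace - (k : ℝ) * d * S.card * T.card / n| ≤
      max (∑ i ∈ Finset.range k, mu (k + i))
          (∑ i ∈ Finset.range k, |mu ((n - 1) * k + i)|) *
        Real.sqrt ((S.card : ℝ) * T.card * (1 - S.card / n) * (1 - T.card / n)) := by
  classical
  rcases Nat.eq_zero_or_pos k with hk0 | hk
  · subst hk0
    simp [Matrix.trace]
  -- Now `1 ≤ k`.
  have hn0 : (0:ℝ) < n := by exact_mod_cast (by omega : 0 < n)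
  have hn0' : (n:ℝ) ≠ 0 := ne_of_gt hn0
  set a : ℝ := (S.card : ℝ) with ha
  set b : ℝ := (T.card : ℝ) with hb
  set fS : Fin n → ℝ := fun u => (if u ∈ S then (1:ℝ) else 0) - a / n with hfS
  set fT : Fin n → ℝ := fun u => (if u ∈ T then (1:ℝ) else 0) - b / n with hfT
  have hind : ∀ (R : Finset (Fin n)), ∑ u, (if u ∈ R then (1:ℝ) else 0) = (R.card : ℝ) := by
    intro R
    rw [Finset.sum_ite_mem, Finset.univ_inter, Finset.sum_const, nsmul_eq_mul, mul_one]
  have hconst : ∀ c : ℝ, ∑ _u : Fin n, c = (n:ℝ) * c := by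
    intro c
    rw [Finset.sum_const, Finset.card_univ, Fintype.card_fin, nsmul_eq_mul]
  have hfSsum : ∑ u, fS u = 0 := by
    simp only [hfS]
    rw [Finset.sum_sub_distrib, hind S, hconst, ← ha]
    field_simp
    ring
  have hfTsum : ∑ u, fT u = 0 := by
    simp only [hfT]
    rw [Finset.sum_sub_distrib, hind T, hconst, ← hb]
    field_simp
    ring
  set α2 : ℝ := ∑ u, fS u * fS u with hα2
  set β2 : ℝ := ∑ u, fT u * fT u with hβ2
  set γ : ℝ := ∑ u, fS u * fT u with hγ
  have hα2sq : α2 = ∑ u, fS u ^ 2 := by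
    rw [hα2]; exact Finset.sum_congr rfl fun u _ => (sq _).symm
  have hβ2sq : β2 = ∑ u, fT u ^ 2 := by
    rw [hβ2]; exact Finset.sum_congr rfl fun u _ => (sq _).symm
  have hα2nn : 0 ≤ α2 := by
    rw [hα2sq]; exact Finset.sum_nonneg fun u _ => sq_nonneg _
  have hβ2nn : 0 ≤ β2 := by
    rw [hβ2sq]; exact Finset.sum_nonneg fun u _ => sq_nonneg _
  have hCS : γ^2 ≤ α2 * β2 := by
    rw [hγ, hα2sq, hβ2sq]
    exact Finset.sum_mul_sq_le_sq_mul_sq univ fS fT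
  -- value of α2 and β2
  have hval : ∀ (R : Finset (Fin n)) (c : ℝ), (R.card : ℝ) = c →
      ∑ u, ((if u ∈ R then (1:ℝ) else 0) - c/n) * ((if u ∈ R then (1:ℝ) else 0) - c/n)
        = c - c^2/n := by
    intro R c hc
    have hexp : ∀ u : Fin n, ((if u ∈ R then (1:ℝ) else 0) - c/n) * ((if u ∈ R then (1:ℝ) else 0) - c/n)
        = (if u ∈ R then (1:ℝ) else 0) * (1 - 2*(c/n)) + (c/n)^2 := by
      intro u; by_cases h : u ∈ R <;> simp [h] <;> ring
    rw [Finset.sum_congr rfl fun u _ => hexp u, Finset.sum_add_distrib, ← Finset.sum_mul,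
      hind R, hc, hconst]
    field_simp
    ring
  have hα2val : α2 = a - a^2/n := by rw [hα2, hfS]; exact hval S a ha.symm
  have hβ2val : β2 = b - b^2/n := by rw [hβ2, hfT]; exact hval T b hb.symm
  set α : ℝ := Real.sqrt α2 with hα
  set β : ℝ := Real.sqrt β2 with hβ
  have hαsq : α^2 = α2 := Real.sq_sqrt hα2nn
  have hβsq : β^2 = β2 := Real.sq_sqrt hβ2nn
  have hαnn : 0 ≤ α := Real.sqrt_nonneg _
  have hβnn : 0 ≤ β := Real.sqrt_nonneg _
  have hab2 : (α*β)^2 = α2*β2 := by rw [mul_pow, hαsq, hβsq]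
  have habnn : 0 ≤ α*β := mul_nonneg hαnn hβnn
  -- matrices
  set A := mwAdj n k W with hA
  set Y := mwInd n k fS with hY
  set Z := mwInd n k fT with hZ
  set Fm := mwInd n k (fun _ => (1:ℝ)) with hFm
  set Dμ := Matrix.diagonal (fun p : Fin n × Fin k => mu (finProdFinEquiv p)) with hDμ
  have hrow : ∀ u, ∑ v, W u v = d • (1 : Matrix (Fin k) (Fin k) ℝ) := by
    intro u
    rw [Finset.sum_congr rfl fun v _ => hsym u v]
    exact hreg u
  have hUU : Uᵀ * U = 1 := mul_eq_one_comm.mp hU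
  have hat : ∀ M P : Matrix (Fin n × Fin k) (Fin k) ℝ, (Uᵀ*M)ᵀ * (Uᵀ*P) = Mᵀ * P := by
    intro M P
    rw [Matrix.transpose_mul, Matrix.transpose_transpose, Matrix.mul_assoc,
      ← Matrix.mul_assoc U, hU, Matrix.one_mul]
  set Y' := Uᵀ * Y with hY'
  set Z' := Uᵀ * Z with hZ'
  set F' := Uᵀ * Fm with hF'
  have hY'Y' : Y'ᵀ * Y' = α2 • (1 : Matrix (Fin k) (Fin k) ℝ) := by
    rw [hY', hat, hY, mwInd_gram, ← hα2]
  have hZ'Z' : Z'ᵀ * Z' = β2 • (1 : Matrix (Fin k) (Fin k) ℝ) := by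
    rw [hZ', hat, hZ, mwInd_gram, ← hβ2]
  have hY'Z' : Y'ᵀ * Z' = γ • (1 : Matrix (Fin k) (Fin k) ℝ) := by
    rw [hY', hZ', hat, hY, hZ, mwInd_gram, ← hγ]
  have hZ'Y' : Z'ᵀ * Y' = γ • (1 : Matrix (Fin k) (Fin k) ℝ) := by
    rw [hZ', hY', hat, hZ, hY, mwInd_gram,
      show ∑ u, fT u * fS u = γ from by
        rw [hγ]; exact Finset.sum_congr rfl fun u _ => mul_comm _ _]
  have hF'F' : F'ᵀ * F' = (n:ℝ) • (1 : Matrix (Fin k) (Fin k) ℝ) := by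
    rw [hF', hat, hFm, mwInd_gram,
      show ∑ _u : Fin n, (1:ℝ)*1 = (n:ℝ) from by rw [hconst]; ring]
  have hY'F' : Y'ᵀ * F' = 0 := by
    rw [hY', hF', hat, hY, hFm, mwInd_gram,
      show ∑ u, fS u * 1 = (0:ℝ) from by simpa using hfSsum, zero_smul]
  have hZ'F' : Z'ᵀ * F' = 0 := by
    rw [hZ', hF', hat, hZ, hFm, mwInd_gram,
      show ∑ u, fT u * 1 = (0:ℝ) from by simpa using hfTsum, zero_smul]
  have hAFm : A * Fm = d • Fm := by
    rw [hA, hFm]; exact mwAdj_mul_ones n k d W hrow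
  have hDF' : Dμ * F' = d • F' := by
    have h1 : Uᵀ * (A * Fm) = d • F' := by
      rw [hAFm, Matrix.mul_smul, ← hF']
    have h2 : Uᵀ * (A * Fm) = Dμ * F' := by
      rw [hAW, hF']
      simp only [← Matrix.mul_assoc]
      rw [hUU, Matrix.one_mul]
    rw [← h2, h1]
  have hF'0 : ∀ q : Fin n × Fin k, ¬ (mu (finProdFinEquiv q) = d) → ∀ j, F' q j = 0 := by
    intro q hq j
    have h1 : (Dμ * F') q j = (d • F') q j := by rw [hDF']
    rw [hDμ, Matrix.diagonal_mul, Matrix.smul_apply, smul_eq_mul] at h1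
    by_contra hcon
    exact hq (mul_right_cancel₀ hcon h1)
  -- the symmetrized columns
  set Zp := β • Y' + α • Z' with hZp
  set Zm := β • Y' - α • Z' with hZm
  set gp : ℝ := β^2*α2 + 2*(α*β)*γ + α^2*β2 with hgp
  set gm : ℝ := β^2*α2 - 2*(α*β)*γ + α^2*β2 with hgm
  have hZpG : Zpᵀ * Zp = gp • (1 : Matrix (Fin k) (Fin k) ℝ) := by
    rw [hZp, Matrix.transpose_add, Matrix.transpose_smul, Matrix.transpose_smul]
    simp only [Matrix.add_mul, Matrix.mul_add, Matrix.smul_mul, Matrix.mul_smul]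
    rw [hY'Y', hY'Z', hZ'Y', hZ'Z', hgp]
    match_scalars
    ring
  have hZmG : Zmᵀ * Zm = gm • (1 : Matrix (Fin k) (Fin k) ℝ) := by
    rw [hZm, Matrix.transpose_sub, Matrix.transpose_smul, Matrix.transpose_smul]
    simp only [Matrix.sub_mul, Matrix.mul_sub, Matrix.smul_mul, Matrix.mul_smul]
    rw [hY'Y', hY'Z', hZ'Y', hZ'Z', hgm]
    match_scalars
    ring
  have hgp0 : 0 ≤ gp := by
    rw [hgp, show β^2*α2 = α2*β2 from by rw [hβsq]; ring,
      show α^2*β2 = α2*β2 from by rw [hαsq]]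
    nlinarith [hCS, sq_nonneg (α*β + γ), hab2]
  have hgm0 : 0 ≤ gm := by
    rw [hgm, show β^2*α2 = α2*β2 from by rw [hβsq]; ring,
      show α^2*β2 = α2*β2 from by rw [hαsq]]
    nlinarith [hCS, sq_nonneg (α*β - γ), hab2]
  have hZpF' : Zpᵀ * F' = 0 := by
    rw [hZp, Matrix.transpose_add, Matrix.transpose_smul, Matrix.transpose_smul,
      Matrix.add_mul, Matrix.smul_mul, Matrix.smul_mul, hY'F', hZ'F', smul_zero,
      smul_zero, add_zero]
  have hZmF' : Zmᵀ * F' = 0 := by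
    rw [hZm, Matrix.transpose_sub, Matrix.transpose_smul, Matrix.transpose_smul,
      Matrix.sub_mul, Matrix.smul_mul, Matrix.smul_mul, hY'F', hZ'F', smul_zero,
      smul_zero, sub_zero]
  -- transport to ℕ
  have h2kN : 2 * k ≤ n * k := Nat.mul_le_mul_right k hn
  have hkN : k ≤ n * k := le_trans (by omega) h2kN
  have hmu0 : mu 0 = d := htop 0 hk
  set tp : ℕ → ℝ :=
    fun j => if h : j < n * k then ∑ i, Zp (finProdFinEquiv.symm ⟨j, h⟩) i ^ 2 else 0 with htp
  set tm : ℕ → ℝ :=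
    fun j => if h : j < n * k then ∑ i, Zm (finProdFinEquiv.symm ⟨j, h⟩) i ^ 2 else 0 with htm
  have hmk : ∀ q : Fin n × Fin k, ((finProdFinEquiv q : Fin (n*k)) : ℕ) < n * k :=
    fun q => (finProdFinEquiv q).isLt
  have hfineta : ∀ q : Fin n × Fin k,
      (⟨((finProdFinEquiv q : Fin (n*k)) : ℕ), hmk q⟩ : Fin (n*k)) = finProdFinEquiv q :=
    fun q => rfl
  have htpval : ∀ q : Fin n × Fin k, tp ((finProdFinEquiv q : Fin (n*k)) : ℕ) = ∑ i, Zp q i ^ 2 := by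
    intro q
    simp only [htp]
    rw [dif_pos (hmk q), hfineta, Equiv.symm_apply_apply]
  have htmval : ∀ q : Fin n × Fin k, tm ((finProdFinEquiv q : Fin (n*k)) : ℕ) = ∑ i, Zm q i ^ 2 := by
    intro q
    simp only [htm]
    rw [dif_pos (hmk q), hfineta, Equiv.symm_apply_apply]
  have hsum_tp : ∑ j ∈ range (n*k), tp j = k * gp := by
    rw [sum_equiv_range (fun q => ∑ i, Zp q i ^ 2) tp htpval, ← trace_gram Zp, hZpG,
      Matrix.trace_smul, Matrix.trace_one, smul_eq_mul, Fintype.card_fin]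
    ring
  have hsum_tm : ∑ j ∈ range (n*k), tm j = k * gm := by
    rw [sum_equiv_range (fun q => ∑ i, Zm q i ^ 2) tm htmval, ← trace_gram Zm, hZmG,
      Matrix.trace_smul, Matrix.trace_one, smul_eq_mul, Fintype.card_fin]
    ring
  have htp0 : ∀ j < n * k, 0 ≤ tp j := by
    intro j hj
    simp only [htp]
    rw [dif_pos hj]
    exact Finset.sum_nonneg fun i _ => sq_nonneg _
  have htm0 : ∀ j < n * k, 0 ≤ tm j := by
    intro j hj
    simp only [htm]
    rw [dif_pos hj]
    exact Finset.sum_nonneg fun i _ => sq_nonneg _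
  have htpg : ∀ j < n * k, tp j ≤ gp := by
    intro j hj
    simp only [htp]
    rw [dif_pos hj]
    exact row_bound Zp gp hgp0 hZpG _
  have htmg : ∀ j < n * k, tm j ≤ gm := by
    intro j hj
    simp only [htm]
    rw [dif_pos hj]
    exact row_bound Zm gm hgm0 hZmG _
  -- the top eigenspace index set
  set Λ : Finset (Fin n × Fin k) :=
    Finset.univ.filter (fun q => mu (finProdFinEquiv q) = d) with hΛ
  set Λℕ : Finset ℕ := (range (n*k)).filter (fun j => mu j = d) with hΛℕ
  set m := Λℕ.card with hm
  have hsuppΛ : ∀ q ∉ Λ, ∀ j, F' q j = 0 := by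
    intro q hq j
    refine hF'0 q ?_ j
    intro hcon
    exact hq (by rw [hΛ]; exact Finset.mem_filter.mpr ⟨Finset.mem_univ q, hcon⟩)
  have hcard : Λ.card = m := by
    rw [hm, hΛℕ, hΛ, Finset.card_filter, Finset.card_filter]
    exact (sum_equiv_range (M := ℕ)
      (fun q => if mu (finProdFinEquiv q) = d then 1 else 0)
      (fun j => if mu j = d then 1 else 0) (fun q => rfl)).symm
  have hΛrange : Λℕ = range m := by
    rw [hm]
    refine downclosed_eq_range Λℕ ?_
    intro x hx c hc
    rw [hΛℕ, Finset.mem_filter, Finset.mem_range] at hx ⊢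
    have hxN : x < n * k := hx.1
    have hcN : c < n * k := by omega
    refine ⟨hcN, ?_⟩
    have h1 : mu c ≤ mu 0 := hmu (Set.mem_Iio.mpr (by omega)) (Set.mem_Iio.mpr hcN) (Nat.zero_le _)
    have h2 : mu x ≤ mu c := hmu (Set.mem_Iio.mpr hcN) (Set.mem_Iio.mpr hxN) (le_of_lt hc)
    rw [hmu0] at h1
    rw [hx.2] at h2
    linarith
  have hkm : k ≤ m := by
    rw [← hcard]
    exact col_card F' (n:ℝ) hn0 hF'F' Λ hsuppΛ
  have hmN : m ≤ n * k := by
    rw [hm]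
    calc Λℕ.card ≤ (range (n*k)).card := Finset.card_le_card (by rw [hΛℕ]; exact Finset.filter_subset _ _)
      _ = n * k := Finset.card_range (n*k)
  have hd_seg : ∀ j < m, mu j = mu 0 := by
    intro j hj
    have hjΛ : j ∈ Λℕ := by rw [hΛrange]; exact Finset.mem_range.mpr hj
    rw [hΛℕ, Finset.mem_filter] at hjΛ
    rw [hjΛ.2, hmu0]
  have hmass_gen : ∀ (ZZ : Matrix (Fin n × Fin k) (Fin k) ℝ) (gz : ℝ) (tz : ℕ → ℝ),
      0 ≤ gz → ZZᵀ * ZZ = gz • (1 : Matrix (Fin k) (Fin k) ℝ) → ZZᵀ * F' = 0 →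
      (∀ q : Fin n × Fin k, tz ((finProdFinEquiv q : Fin (n*k)) : ℕ) = ∑ i, ZZ q i ^ 2) →
      ∑ j ∈ range m, tz j ≤ ((m:ℝ) - k) * gz := by
    intro ZZ gz tz hgz hgram horth htzval
    have h1 := mass_bound ZZ F' gz (n:ℝ) hgz hn0 hgram hF'F' horth Λ hsuppΛ
    have h2 : ∑ j ∈ range m, tz j = ∑ q ∈ Λ, ∑ i, ZZ q i ^ 2 := by
      rw [← hΛrange, hΛℕ, Finset.sum_filter, hΛ, Finset.sum_filter]
      exact sum_equiv_range
        (fun q => if mu (finProdFinEquiv q) = d then ∑ i, ZZ q i ^ 2 else 0)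
        (fun j => if mu j = d then tz j else 0)
        (fun q => by rw [htzval q])
    rw [h2]
    rw [hcard] at h1
    linarith
  have hmass_p : ∑ j ∈ range m, tp j ≤ ((m:ℝ) - k) * gp :=
    hmass_gen Zp gp tp hgp0 hZpG hZpF' htpval
  have hmass_m : ∑ j ∈ range m, tm j ≤ ((m:ℝ) - k) * gm :=
    hmass_gen Zm gm tm hgm0 hZmG hZmF' htmval
  -- kyfan bounds
  set Stop : ℝ := ∑ i ∈ range k, mu (k + i) with hStop
  set Sbot : ℝ := ∑ i ∈ range k, mu (n*k - k + i) with hSbot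
  set Sabs : ℝ := ∑ i ∈ range k, |mu ((n - 1) * k + i)| with hSabs
  have hidx : ∀ i : ℕ, (n - 1) * k + i = n*k - k + i := by
    intro i
    rw [Nat.sub_mul, one_mul]
  have hSabs0 : 0 ≤ Sabs := by
    rw [hSabs]; exact Finset.sum_nonneg fun i _ => abs_nonneg _
  have hnegbot : -Sbot ≤ Sabs := by
    rw [hSbot, hSabs, ← Finset.sum_neg_distrib]
    refine Finset.sum_le_sum fun i _ => ?_
    rw [hidx i]
    exact neg_le_abs _
  have hM0 : 0 ≤ max Stop Sabs := le_trans hSabs0 (le_max_right _ _)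
  have hσp_ub : ∑ j ∈ range (n*k), mu j * tp j ≤ gp * Stop := by
    rw [hStop]
    exact kyfan_upper_s7 (n*k) k m hk h2kN hkm hmN mu hmu hd_seg gp hgp0 tp htp0 htpg hsum_tp hmass_p
  have hσm_ub : ∑ j ∈ range (n*k), mu j * tm j ≤ gm * Stop := by
    rw [hStop]
    exact kyfan_upper_s7 (n*k) k m hk h2kN hkm hmN mu hmu hd_seg gm hgm0 tm htm0 htmg hsum_tm hmass_m
  have hσp_lb : gp * Sbot ≤ ∑ j ∈ range (n*k), mu j * tp j := by
    rw [hSbot]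
    exact kyfan_lower_s7 (n*k) k hk hkN mu hmu gp hgp0 tp htp0 htpg hsum_tp
  have hσm_lb : gm * Sbot ≤ ∑ j ∈ range (n*k), mu j * tm j := by
    rw [hSbot]
    exact kyfan_lower_s7 (n*k) k hk hkN mu hmu gm hgm0 tm htm0 htmg hsum_tm
  -- traces
  set X : ℝ := (Y'ᵀ * (Dμ * Z')).trace with hX
  have htr_p : (Zpᵀ * (Dμ * Zp)).trace = ∑ j ∈ range (n*k), mu j * tp j := by
    rw [hDμ, trace_diag2]
    exact (sum_equiv_range
      (fun q => mu (finProdFinEquiv q) * ∑ i, Zp q i * Zp q i)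
      (fun j => mu j * tp j)
      (fun q => by
        rw [htpval q]
        congr 1
        exact Finset.sum_congr rfl fun i _ => (sq _))).symm
  have htr_m : (Zmᵀ * (Dμ * Zm)).trace = ∑ j ∈ range (n*k), mu j * tm j := by
    rw [hDμ, trace_diag2]
    exact (sum_equiv_range
      (fun q => mu (finProdFinEquiv q) * ∑ i, Zm q i * Zm q i)
      (fun j => mu j * tm j)
      (fun q => by
        rw [htmval q]
        congr 1
        exact Finset.sum_congr rfl fun i _ => (sq _))).symm
  have hdiff : (Zpᵀ * (Dμ * Zp)).trace - (Zmᵀ * (Dμ * Zm)).trace = 4*(α*β) * X := by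
    rw [hX, hDμ, trace_diag2, trace_diag2, trace_diag2, ← Finset.sum_sub_distrib,
      Finset.mul_sum]
    refine Finset.sum_congr rfl fun q _ => ?_
    rw [← mul_sub, ← Finset.sum_sub_distrib]
    have hinner : ∑ i, (Zp q i * Zp q i - Zm q i * Zm q i)
        = 4*(α*β) * ∑ i, Y' q i * Z' q i := by
      rw [Finset.mul_sum]
      refine Finset.sum_congr rfl fun i _ => ?_
      rw [hZp, hZm]
      simp only [Matrix.add_apply, Matrix.sub_apply, Matrix.smul_apply, smul_eq_mul]
      ring
    rw [hinner]
    ring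
  have hX_eq : X = (Yᵀ * (A * Z)).trace := by
    rw [hX]
    congr 1
    rw [hY', hZ', hAW, Matrix.transpose_mul, Matrix.transpose_transpose]
    simp only [Matrix.mul_assoc]
  have hXval : (mwEdge n k W S T).trace - (k:ℝ)*d*a*b/n = X := by
    rw [hX_eq]
    have hentry : ∀ i : Fin k, (Yᵀ * (A * Z)) i i = mwEdge n k W S T i i - a*b*d/n := by
      intro i
      rw [hY, hZ, hA, mwInd_adj_apply]
      simp only [hfS, hfT]
      rw [edge_sum n k d W hrow hreg S T (a/n) (b/n) i i, if_pos rfl, ← ha, ← hb]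
      field_simp
      ring
    have htr : (Yᵀ * (A * Z)).trace = (mwEdge n k W S T).trace - (k:ℝ)*(a*b*d/n) := by
      rw [Matrix.trace, Matrix.trace]
      simp only [Matrix.diag]
      rw [Finset.sum_congr rfl fun i _ => hentry i, Finset.sum_sub_distrib,
        Finset.sum_const, Finset.card_univ, Fintype.card_fin, nsmul_eq_mul]
    rw [htr]
    ring
  -- the square root
  have hsqrt : Real.sqrt (a*b*(1 - a/n)*(1 - b/n)) = α*β := by
    rw [show a*b*(1 - a/n)*(1 - b/n) = (a - a^2/n)*(b - b^2/n) from by ring,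
      ← hα2val, ← hβ2val, Real.sqrt_mul hα2nn, ← hα, ← hβ]
  -- rewrite the goal
  rw [hXval, hsqrt]
  -- final inequality: |X| ≤ max Stop Sabs * (α*β)
  rcases eq_or_lt_of_le habnn with hab0 | habpos
  · -- α*β = 0 : one of Y, Z is zero
    have hX0 : X = 0 := by
      rcases mul_eq_zero.mp hab0.symm with hc | hc
      · have hα20 : α2 = 0 := by rw [← hαsq, hc]; ring
        have hfS0 : ∀ u, fS u = 0 := by
          intro u
          have hz : ∑ u, fS u ^ 2 = 0 := by rw [← hα2sq, hα20]
          have := (Finset.sum_eq_zero_iff_of_nonneg (fun u _ => sq_nonneg (fS u))).mp hz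
            u (Finset.mem_univ u)
          exact (pow_eq_zero_iff two_ne_zero).mp this
        have hY0 : Y = 0 := by
          rw [hY]
          ext p i
          simp [mwInd, hfS0]
        rw [hX_eq, hY0, Matrix.transpose_zero, Matrix.zero_mul, Matrix.trace_zero]
      · have hβ20 : β2 = 0 := by rw [← hβsq, hc]; ring
        have hfT0 : ∀ u, fT u = 0 := by
          intro u
          have hz : ∑ u, fT u ^ 2 = 0 := by rw [← hβ2sq, hβ20]
          have := (Finset.sum_eq_zero_iff_of_nonneg (fun u _ => sq_nonneg (fT u))).mp hz
            u (Finset.mem_univ u)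
          exact (pow_eq_zero_iff two_ne_zero).mp this
        have hZ0 : Z = 0 := by
          rw [hZ]
          ext p i
          simp [mwInd, hfT0]
        rw [hX_eq, hZ0, Matrix.mul_zero, Matrix.mul_zero, Matrix.trace_zero]
    rw [hX0, ← hab0]
    simp
  · -- α*β > 0
    have hgsum : gp + gm = 4*(α*β)^2 := by
      rw [hgp, hgm, mul_pow, hαsq, hβsq]
      ring
    have hkey : 4*(α*β)*X = (∑ j ∈ range (n*k), mu j * tp j) - (∑ j ∈ range (n*k), mu j * tm j) := by
      rw [← htr_p, ← htr_m, hdiff]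
    have hp1 : ∑ j ∈ range (n*k), mu j * tp j ≤ gp * max Stop Sabs :=
      le_trans hσp_ub (mul_le_mul_of_nonneg_left (le_max_left _ _) hgp0)
    have hm1 : ∑ j ∈ range (n*k), mu j * tm j ≤ gm * max Stop Sabs :=
      le_trans hσm_ub (mul_le_mul_of_nonneg_left (le_max_left _ _) hgm0)
    have hp2 : -(∑ j ∈ range (n*k), mu j * tp j) ≤ gp * max Stop Sabs := by
      have h1 : -(∑ j ∈ range (n*k), mu j * tp j) ≤ gp * (-Sbot) := by
        have := hσp_lb; linarith [show gp * (-Sbot) = -(gp * Sbot) from by ring]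
      calc -(∑ j ∈ range (n*k), mu j * tp j) ≤ gp * (-Sbot) := h1
        _ ≤ gp * Sabs := mul_le_mul_of_nonneg_left hnegbot hgp0
        _ ≤ gp * max Stop Sabs := mul_le_mul_of_nonneg_left (le_max_right _ _) hgp0
    have hm2 : -(∑ j ∈ range (n*k), mu j * tm j) ≤ gm * max Stop Sabs := by
      have h1 : -(∑ j ∈ range (n*k), mu j * tm j) ≤ gm * (-Sbot) := by
        have := hσm_lb; linarith [show gm * (-Sbot) = -(gm * Sbot) from by ring]
      calc -(∑ j ∈ range (n*k), mu j * tm j) ≤ gm * (-Sbot) := h1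
        _ ≤ gm * Sabs := mul_le_mul_of_nonneg_left hnegbot hgm0
        _ ≤ gm * max Stop Sabs := mul_le_mul_of_nonneg_left (le_max_right _ _) hgm0
    have hcomb : gp * max Stop Sabs + gm * max Stop Sabs
        = 4*(α*β) * ((α*β) * max Stop Sabs) := by
      rw [← add_mul, hgsum]
      ring
    have hub : 4*(α*β)*X ≤ 4*(α*β) * ((α*β) * max Stop Sabs) := by
      rw [hkey, ← hcomb]
      linarith [hp1, hm2]
    have hlb : 4*(α*β)*(-X) ≤ 4*(α*β) * ((α*β) * max Stop Sabs) := by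
      rw [show 4*(α*β)*(-X) = -(4*(α*β)*X) from by ring, hkey, ← hcomb]
      linarith [hm1, hp2]
    have h4pos : (0:ℝ) < 4*(α*β) := by linarith
    have hXub : X ≤ (α*β) * max Stop Sabs := le_of_mul_le_mul_left hub h4pos
    have hXlb : -X ≤ (α*β) * max Stop Sabs := le_of_mul_le_mul_left hlb h4pos
    rw [abs_le]
    constructor
    · linarith [hXlb, show max Stop Sabs * (α*β) = (α*β) * max Stop Sabs from mul_comm _ _]
    · linarith [hXub, show max Stop Sabs * (α*β) = (α*β) * max Stop Sabs from mul_comm _ _]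
end
end

section
/- (Expander mixing lemma, spectral form.) Let (G,W) be a d-regular matrix-weighted graph on n vertices with k×k weight matrices, with adjacency eigenvalues d = μ_1 = … = μ_k ≥ μ_{k+1} ≥ … ≥ μ_{nk}. Then for all vertex subsets S and T, every eigenvalue of the symmetric k×k matrix E(S,T) − (d·|S|·|T|/n)·I_k has magnitude at most max(|μ_{k+1}|, |μ_{kn}|) · √( |S|·|T|·(1 − |S|/n)·(1 − |T|/n) ). -/
open Matrix Finset

lemma sum_restrict {n k : ℕ} (hk : k ≤ n * k) (F : Fin n × Fin k → ℝ)
    (h : ∀ p : Fin n × Fin k, k ≤ (finProdFinEquiv p : Fin (n*k)).val → F p = 0) :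
    ∑ p, F p = ∑ i : Fin k, F (finProdFinEquiv.symm (Fin.castLE hk i)) := by
  rw [← Equiv.sum_comp (finProdFinEquiv.symm) F]
  set G : Fin (n*k) → ℝ := fun q => F (finProdFinEquiv.symm q) with hG
  have hG0 : ∀ q : Fin (n*k), k ≤ q.val → G q = 0 := by
    intro q hq
    apply h
    rw [Equiv.apply_symm_apply]; exact hq
  have hsub : (univ : Finset (Fin k)).map ⟨Fin.castLE hk, Fin.castLE_injective hk⟩ ⊆ univ :=
    Finset.subset_univ _
  rw [← Finset.sum_subset hsub]
  · rw [Finset.sum_map]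
    rfl
  · intro q _ hq
    apply hG0
    by_contra hlt
    push_neg at hlt
    exact hq (Finset.mem_map.mpr ⟨⟨q.val, hlt⟩, Finset.mem_univ _, by ext; simp⟩)

lemma dot_orth {ι : Type*} [Fintype ι] [DecidableEq ι]
    (U : Matrix ι ι ℝ) (hU : U * Uᵀ = 1) (z w : ι → ℝ) :
    (Uᵀ *ᵥ z) ⬝ᵥ (Uᵀ *ᵥ w) = z ⬝ᵥ w := by
  rw [Matrix.dotProduct_mulVec, ← Matrix.mulVec_transpose, Matrix.mulVec_mulVec,
    Matrix.transpose_transpose, hU, Matrix.one_mulVec]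

lemma mixing_key (n k : ℕ) (hn : 2 ≤ n) (hk : 0 < k) (d : ℝ)
    (A : Matrix (Fin n × Fin k) (Fin n × Fin k) ℝ)
    (mu : ℕ → ℝ) (hmu : AntitoneOn mu (Set.Iio (n * k)))
    (htop : ∀ i < k, mu i = d)
    (U : Matrix (Fin n × Fin k) (Fin n × Fin k) ℝ) (hU : U * Uᵀ = 1)
    (hAW : A = U * Matrix.diagonal (fun p => mu (finProdFinEquiv p)) * Uᵀ)
    (hAconst : ∀ u : Fin k → ℝ, A *ᵥ (fun p => u p.2) = d • (fun p : Fin n × Fin k => u p.2))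
    (x y : Fin n × Fin k → ℝ)
    (hx : ∀ i, ∑ v, x (v, i) = 0) (hy : ∀ i, ∑ v, y (v, i) = 0) :
    |x ⬝ᵥ (A *ᵥ y)| ≤
      max |mu k| |mu (n * k - 1)| *
        (Real.sqrt (∑ p, x p ^ 2) * Real.sqrt (∑ p, y p ^ 2)) := by
  have hkn : k ≤ n * k := Nat.le_mul_of_pos_left k (by omega)
  have hklt : k < n * k := by
    calc k = 1 * k := (one_mul k).symm
    _ < n * k := (Nat.mul_lt_mul_right hk).mpr (by omega)
  have hnk0 : 0 < n * k := lt_trans hk hklt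
  have hlast : n * k - 1 < n * k := Nat.sub_lt hnk0 one_pos
  set idx : Fin n × Fin k → ℕ := fun p => ((finProdFinEquiv p : Fin (n*k)) : ℕ) with hidx
  have hidxlt : ∀ p, idx p < n * k := fun p => (finProdFinEquiv p).isLt
  set L : ℝ := max |mu k| |mu (n * k - 1)| with hL
  have hL0 : 0 ≤ L := le_trans (abs_nonneg _) (le_max_left _ _)
  set X : Fin n × Fin k → ℝ := Uᵀ *ᵥ x with hX
  set Y : Fin n × Fin k → ℝ := Uᵀ *ᵥ y with hY
  have hrepr : x ⬝ᵥ (A *ᵥ y) = ∑ p, mu (idx p) * (X p * Y p) := by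
    rw [hAW, ← Matrix.mulVec_mulVec, ← Matrix.mulVec_mulVec, Matrix.dotProduct_mulVec,
      ← Matrix.mulVec_transpose]
    simp only [dotProduct, Matrix.mulVec_diagonal, ← hX, ← hY]
    exact Finset.sum_congr rfl fun p _ => by ring
  have hout : ∀ p, k ≤ idx p → |mu (idx p)| ≤ L := by
    intro p hp
    have h1 : mu (idx p) ≤ mu k := hmu (Set.mem_Iio.mpr hklt) (Set.mem_Iio.mpr (hidxlt p)) hp
    have h2 : mu (n * k - 1) ≤ mu (idx p) :=
      hmu (Set.mem_Iio.mpr (hidxlt p)) (Set.mem_Iio.mpr hlast) (by have := hidxlt p; omega)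
    rcases le_or_gt 0 (mu (idx p)) with h | h
    · rw [abs_of_nonneg h]
      exact le_trans (le_trans h1 (le_abs_self _)) (le_max_left _ _)
    · rw [abs_of_neg h]
      exact le_trans (le_trans (neg_le_neg h2) (neg_le_abs _)) (le_max_right _ _)
  have hb : ∀ p, |mu (idx p) * (X p * Y p)| ≤ L * (|X p| * |Y p|) := by
    rcases le_or_gt d (mu k) with hcase | hcase
    · intro p
      have hmuabs : |mu (idx p)| ≤ L := by
        rcases lt_or_ge (idx p) k with h | h
        · rw [htop _ h]
          have hd2 : mu (n * k - 1) ≤ d := by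
            rw [← htop 0 hk]
            exact hmu (Set.mem_Iio.mpr hnk0) (Set.mem_Iio.mpr hlast) (Nat.zero_le _)
          rcases le_or_gt 0 d with h' | h'
          · rw [abs_of_nonneg h']
            exact le_trans (le_trans hcase (le_abs_self _)) (le_max_left _ _)
          · rw [abs_of_neg h']
            exact le_trans (le_trans (neg_le_neg hd2) (neg_le_abs _)) (le_max_right _ _)
        · exact hout p h
      rw [abs_mul, abs_mul]
      exact mul_le_mul_of_nonneg_right hmuabs (by positivity)
    · -- hard case : X vanishes on the top block
      have hXB : ∀ p, idx p < k → X p = 0 := by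
        set ρ : Fin k → Fin n × Fin k := fun i => finProdFinEquiv.symm (Fin.castLE hkn i) with hρ
        have hidxρ : ∀ i : Fin k, idx (ρ i) = i.val := by
          intro i
          simp only [hρ, hidx, Equiv.apply_symm_apply, Fin.coe_castLE]
        set c : Fin k → (Fin n × Fin k) → ℝ :=
          fun j => Uᵀ *ᵥ (fun p => if p.2 = j then (1:ℝ) else 0) with hc
        have hUtU : Uᵀ * U = 1 := mul_eq_one_comm.mp hU
        have hdiag : ∀ j, (Matrix.diagonal (fun p => mu (idx p))) *ᵥ (c j) = d • c j := by
          intro j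
          have h1 : Uᵀ *ᵥ (A *ᵥ (fun p => if p.2 = j then (1:ℝ) else 0)) = d • c j := by
            rw [hAconst (fun i => if i = j then (1:ℝ) else 0), Matrix.mulVec_smul]
          have h2 : Uᵀ *ᵥ (A *ᵥ (fun p => if p.2 = j then (1:ℝ) else 0)) =
              (Matrix.diagonal (fun p => mu (idx p))) *ᵥ (c j) := by
            rw [hAW, Matrix.mulVec_mulVec, ← Matrix.mul_assoc, ← Matrix.mul_assoc, hUtU,
              Matrix.one_mul, ← Matrix.mulVec_mulVec]
          rw [← h2, h1]
        have hcsupp : ∀ j p, k ≤ idx p → c j p = 0 := by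
          intro j p hp
          have h1 := congrFun (hdiag j) p
          simp only [Matrix.mulVec_diagonal, Pi.smul_apply, smul_eq_mul] at h1
          have hlt : mu (idx p) < d :=
            lt_of_le_of_lt (hmu (Set.mem_Iio.mpr hklt) (Set.mem_Iio.mpr (hidxlt p)) hp) hcase
          have h2 : (mu (idx p) - d) * c j p = 0 := by
            rw [sub_mul, sub_eq_zero]; exact h1
          rcases mul_eq_zero.mp h2 with h | h
          · exact absurd h (by intro h'; linarith)
          · exact h
        have hgram : ∀ j l, (c j) ⬝ᵥ (c l) = if j = l then (n:ℝ) else 0 := by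
          intro j l
          rw [hc, dot_orth U hU]
          by_cases hjl : j = l
          · subst hjl
            simp [dotProduct, Fintype.sum_prod_type, Finset.sum_ite_eq']
          · simp [dotProduct, Fintype.sum_prod_type, Finset.sum_ite_eq', hjl]
            intro h; exact absurd h.symm hjl
        have hXc : ∀ j, X ⬝ᵥ c j = 0 := by
          intro j
          rw [hc, hX, dot_orth U hU]
          simp only [dotProduct, Fintype.sum_prod_type, mul_ite, mul_one, mul_zero]
          simp [Finset.sum_ite_eq']
          exact hx j
        set Cmat : Matrix (Fin k) (Fin k) ℝ := fun j i => c j (ρ i) with hCmat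
        have hCC : Cmat * Cmatᵀ = (n : ℝ) • 1 := by
          ext j l
          rw [Matrix.mul_apply]
          have hr := sum_restrict hkn (fun p => c j p * c l p)
            (fun p hp => show c j p * c l p = 0 by rw [hcsupp j p hp, zero_mul])
          have h3 : ∑ i : Fin k, Cmat j i * Cmatᵀ i l = (c j) ⬝ᵥ (c l) := by
            rw [dotProduct, hr]
            rfl
          rw [h3, hgram]
          by_cases hjl : j = l
          · simp [hjl, Matrix.one_apply]
          · simp [hjl, Matrix.one_apply]
        set ξ : Fin k → ℝ := fun i => X (ρ i) with hξ
        have hCξ : Cmat *ᵥ ξ = 0 := by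
          ext j
          rw [Matrix.mulVec]
          have hr := sum_restrict hkn (fun p => c j p * X p)
            (fun p hp => show c j p * X p = 0 by rw [hcsupp j p hp, zero_mul])
          have h4 : (Cmat j) ⬝ᵥ ξ = (c j) ⬝ᵥ X := by
            rw [dotProduct, dotProduct, hr]
          rw [h4, dotProduct_comm, hXc j]
          rfl
        have hξ0 : ξ = 0 := by
          have hcne : (n : ℝ) ≠ 0 := by positivity
          have h1 : Cmat * ((n:ℝ)⁻¹ • Cmatᵀ) = 1 := by
            rw [Matrix.mul_smul, hCC, smul_smul, inv_mul_cancel₀ hcne, one_smul]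
          have hdet : IsUnit Cmat.det := by
            have h2 := congrArg Matrix.det h1
            rw [Matrix.det_mul, Matrix.det_one] at h2
            exact IsUnit.of_mul_eq_one _ h2
          calc ξ = (Cmat⁻¹ * Cmat) *ᵥ ξ := by
                rw [Matrix.nonsing_inv_mul Cmat hdet, Matrix.one_mulVec]
          _ = Cmat⁻¹ *ᵥ (Cmat *ᵥ ξ) := by rw [Matrix.mulVec_mulVec]
          _ = 0 := by rw [hCξ, Matrix.mulVec_zero]
        intro p hp
        have hpe : p = ρ ⟨idx p, hp⟩ := by
          rw [hρ]
          apply finProdFinEquiv.injective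
          rw [Equiv.apply_symm_apply]
          ext
          simp [hidx]
        rw [hpe]
        exact congrFun hξ0 ⟨idx p, hp⟩
      intro p
      rcases lt_or_ge (idx p) k with h | h
      · rw [hXB p h]
        simp [hL0, mul_nonneg hL0 (by positivity)]
      · rw [abs_mul, abs_mul]
        exact mul_le_mul_of_nonneg_right (hout p h) (by positivity)
  have hXx : ∑ p, X p ^ 2 = ∑ p, x p ^ 2 := by
    have h1 := dot_orth U hU x x
    simp only [dotProduct, ← hX] at h1
    simpa [sq] using h1
  have hYy : ∑ p, Y p ^ 2 = ∑ p, y p ^ 2 := by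
    have h1 := dot_orth U hU y y
    simp only [dotProduct, ← hY] at h1
    simpa [sq] using h1
  calc |x ⬝ᵥ (A *ᵥ y)| = |∑ p, mu (idx p) * (X p * Y p)| := by rw [hrepr]
  _ ≤ ∑ p, |mu (idx p) * (X p * Y p)| := Finset.abs_sum_le_sum_abs _ _
  _ ≤ ∑ p, L * (|X p| * |Y p|) := Finset.sum_le_sum fun p _ => hb p
  _ = L * ∑ p, |X p| * |Y p| := by rw [← Finset.mul_sum]
  _ ≤ L * (Real.sqrt (∑ p, x p ^ 2) * Real.sqrt (∑ p, y p ^ 2)) := by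
      apply mul_le_mul_of_nonneg_left _ hL0
      have cs := Finset.sum_mul_sq_le_sq_mul_sq univ (fun p => |X p|) (fun p => |Y p|)
      simp only [sq_abs] at cs
      rw [hXx, hYy] at cs
      have hnn : (0:ℝ) ≤ ∑ p, |X p| * |Y p| :=
        Finset.sum_nonneg fun p _ => by positivity
      rw [← Real.sqrt_mul (Finset.sum_nonneg fun p _ => by positivity)]
      exact Real.le_sqrt_of_sq_le cs

lemma sum_swap4 {α β γ δ : Type*} (A : Finset α) (B : Finset β) (C : Finset γ) (D : Finset δ)
    (F : α → β → γ → δ → ℝ) :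
    ∑ a ∈ A, ∑ b ∈ B, ∑ c ∈ C, ∑ e ∈ D, F a b c e =
      ∑ c ∈ C, ∑ e ∈ D, ∑ a ∈ A, ∑ b ∈ B, F a b c e := by
  calc ∑ a ∈ A, ∑ b ∈ B, ∑ c ∈ C, ∑ e ∈ D, F a b c e
      = ∑ a ∈ A, ∑ c ∈ C, ∑ b ∈ B, ∑ e ∈ D, F a b c e :=
        Finset.sum_congr rfl fun a _ => Finset.sum_comm
  _ = ∑ c ∈ C, ∑ a ∈ A, ∑ b ∈ B, ∑ e ∈ D, F a b c e := Finset.sum_comm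
  _ = ∑ c ∈ C, ∑ a ∈ A, ∑ e ∈ D, ∑ b ∈ B, F a b c e :=
        Finset.sum_congr rfl fun c _ => Finset.sum_congr rfl fun a _ => Finset.sum_comm
  _ = ∑ c ∈ C, ∑ e ∈ D, ∑ a ∈ A, ∑ b ∈ B, F a b c e :=
        Finset.sum_congr rfl fun c _ => Finset.sum_comm


noncomputable section

/-- Expander mixing lemma for `d`-regular matrix-weighted graphs, spectral form:
every eigenvalue of `E(S,T) - (d|S||T|/n) I_k` has magnitude at most
`max(|μ_{k+1}|, |μ_{kn}|) √(|S||T|(1-|S|/n)(1-|T|/n))`, where `mu` enumerates the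
adjacency eigenvalues in decreasing order (0-indexed), with `μ_1 = ⋯ = μ_k = d`,
witnessed by an orthogonal spectral decomposition. -/
theorem matrix_weighted_expander_mixing_spectral
    (n k : ℕ) (hn : 2 ≤ n) (hk : 0 < k) (d : ℝ) (G : SimpleGraph (Fin n))
    (W : Fin n → Fin n → Matrix (Fin k) (Fin k) ℝ)
    (hpsd : ∀ u v, (W u v).PosSemidef)
    (hsym : ∀ u v, W u v = W v u)
    (h0 : ∀ u v, ¬ G.Adj u v → W u v = 0)
    (hreg : ∀ v : Fin n, ∑ u, W u v = d • (1 : Matrix (Fin k) (Fin k) ℝ))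
    (mu : ℕ → ℝ) (hmu : AntitoneOn mu (Set.Iio (n * k)))
    (htop : ∀ i < k, mu i = d)
    (U : Matrix (Fin n × Fin k) (Fin n × Fin k) ℝ) (hU : U * Uᵀ = 1)
    (hAW : mwAdj n k W =
      U * Matrix.diagonal (fun p => mu (finProdFinEquiv p)) * Uᵀ)
    (S T : Finset (Fin n)) :
    ∀ x ∈ spectrum ℝ
        (mwEdge n k W S T -
          (d * S.card * T.card / n) • (1 : Matrix (Fin k) (Fin k) ℝ)),
      |x| ≤ max |mu k| |mu (n * k - 1)| *
        Real.sqrt ((S.card : ℝ) * T.card * (1 - S.card / n) * (1 - T.card / n)) := by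
  intro x hx
  have hn0 : (0:ℝ) < n := by positivity
  have hnne : (n:ℝ) ≠ 0 := ne_of_gt hn0
  set s : ℝ := (S.card : ℝ) with hs
  set t : ℝ := (T.card : ℝ) with ht
  have hsle : s ≤ n := by
    rw [hs]; exact_mod_cast Nat.cast_le.mpr (Finset.card_le_card (Finset.subset_univ S)) |>.trans
      (by simp)
  have htle : t ≤ n := by
    rw [ht]; exact_mod_cast Nat.cast_le.mpr (Finset.card_le_card (Finset.subset_univ T)) |>.trans
      (by simp)
  have hs0 : 0 ≤ s := by positivity
  have ht0 : 0 ≤ t := by positivity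
  set c : ℝ := d * s * t / n with hc
  set A : Matrix (Fin n × Fin k) (Fin n × Fin k) ℝ := mwAdj n k W with hA
  set L : ℝ := max |mu k| |mu (n * k - 1)| with hL
  -- extract an eigenvector
  obtain ⟨w, hw0, hw⟩ : ∃ w : Fin k → ℝ, w ≠ 0 ∧
      (mwEdge n k W S T - c • (1 : Matrix (Fin k) (Fin k) ℝ)) *ᵥ w = x • w := by
    rw [spectrum.mem_iff, Matrix.isUnit_iff_isUnit_det, isUnit_iff_ne_zero, not_not] at hx
    obtain ⟨v, hv0, hv⟩ := (Matrix.exists_mulVec_eq_zero_iff).mpr hx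
    refine ⟨v, hv0, ?_⟩
    have h2 : (algebraMap ℝ (Matrix (Fin k) (Fin k) ℝ) x) *ᵥ v -
        (mwEdge n k W S T - c • 1) *ᵥ v = 0 := by
      rw [← Matrix.sub_mulVec, hv]
    have h3 : (algebraMap ℝ (Matrix (Fin k) (Fin k) ℝ) x) *ᵥ v = x • v := by
      ext i
      simp [Matrix.algebraMap_matrix_apply, Matrix.mulVec, dotProduct,
        Finset.sum_ite_eq (Finset.univ) i (fun j => x * v j)]
    rw [h3, sub_eq_zero] at h2
    exact h2.symm
  set Q : ℝ := ∑ i, w i ^ 2 with hQ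
  have hQpos : 0 < Q := by
    obtain ⟨i, hi⟩ := Function.ne_iff.mp hw0
    exact Finset.sum_pos' (fun j _ => sq_nonneg _)
      ⟨i, Finset.mem_univ _, lt_of_le_of_ne (sq_nonneg _) (Ne.symm (pow_ne_zero 2 hi))⟩
  -- basic symmetry facts
  have hWsym : ∀ u v, (W u v)ᵀ = W u v := fun u v => (hpsd u v).1
  have hAsym : ∀ p q : Fin n × Fin k, A p q = A q p := by
    intro p q
    show W p.1 q.1 p.2 q.2 = W q.1 p.1 q.2 p.2
    calc W p.1 q.1 p.2 q.2 = (W p.1 q.1)ᵀ q.2 p.2 := (Matrix.transpose_apply _ _ _).symm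
    _ = W p.1 q.1 q.2 p.2 := congrFun (congrFun (hWsym p.1 q.1) q.2) p.2
    _ = W q.1 p.1 q.2 p.2 := by rw [hsym p.1 q.1]
  have hbil : ∀ f g : Fin n × Fin k → ℝ, f ⬝ᵥ (A *ᵥ g) = g ⬝ᵥ (A *ᵥ f) := by
    intro f g
    have e1 : ∀ (f g : Fin n × Fin k → ℝ),
        f ⬝ᵥ (A *ᵥ g) = ∑ p, ∑ q, f p * (A p q * g q) := by
      intro f g
      simp [dotProduct, Matrix.mulVec, Finset.mul_sum]
    rw [e1, e1, Finset.sum_comm]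
    exact Finset.sum_congr rfl fun q _ => Finset.sum_congr rfl fun p _ => by
      rw [hAsym p q]; ring
  -- regularity
  have hregrow : ∀ v, ∑ u, W v u = d • (1 : Matrix (Fin k) (Fin k) ℝ) := by
    intro v
    rw [show (fun u => W v u) = fun u => W u v from funext fun u => hsym v u]
    exact hreg v
  have hAconst : ∀ u : Fin k → ℝ,
      A *ᵥ (fun p => u p.2) = d • (fun p : Fin n × Fin k => u p.2) := by
    intro u
    ext p
    show ∑ q : Fin n × Fin k, A p q * u q.2 = d * u p.2
    rw [Fintype.sum_prod_type]
    have e1 : ∑ v, ∑ j, W p.1 v p.2 j * u j = ∑ j, (∑ v, W p.1 v p.2 j) * u j := by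
      rw [Finset.sum_comm]
      simp [Finset.sum_mul]
    have e2 : ∀ j, ∑ v, W p.1 v p.2 j = d * (if p.2 = j then (1:ℝ) else 0) := by
      intro j
      have h := congrFun (congrFun (hregrow p.1) p.2) j
      simpa [Matrix.sum_apply, Matrix.one_apply] using h
    calc ∑ v, ∑ j, A p (v, j) * u j = ∑ v, ∑ j, W p.1 v p.2 j * u j := rfl
    _ = ∑ j, (∑ v, W p.1 v p.2 j) * u j := e1
    _ = ∑ j, (d * (if p.2 = j then (1:ℝ) else 0)) * u j :=
        Finset.sum_congr rfl fun j _ => by rw [e2 j]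
    _ = d * u p.2 := by simp [ite_mul, mul_ite, Finset.sum_ite_eq]
  -- indicator vectors
  set f : Fin n × Fin k → ℝ := fun p => (if p.1 ∈ S then (1:ℝ) else 0) * w p.2 with hf
  set g : Fin n × Fin k → ℝ := fun p => (if p.1 ∈ T then (1:ℝ) else 0) * w p.2 with hg
  set f' : Fin n × Fin k → ℝ := fun p => ((if p.1 ∈ S then (1:ℝ) else 0) - s / n) * w p.2 with hf'
  set g' : Fin n × Fin k → ℝ := fun p => ((if p.1 ∈ T then (1:ℝ) else 0) - t / n) * w p.2 with hg'
  have hindS : ∑ v : Fin n, (if v ∈ S then (1:ℝ) else 0) = s := by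
    simp [Finset.sum_ite_mem, hs]
  have hindT : ∑ v : Fin n, (if v ∈ T then (1:ℝ) else 0) = t := by
    simp [Finset.sum_ite_mem, ht]
  have hrowf : ∀ i, ∑ v, f' (v, i) = 0 := by
    intro i
    show ∑ v, ((if v ∈ S then (1:ℝ) else 0) - s / n) * w i = 0
    rw [← Finset.sum_mul]
    have h1 : ∑ v, ((if v ∈ S then (1:ℝ) else 0) - s / n) = 0 := by
      rw [Finset.sum_sub_distrib, hindS]
      simp
      field_simp
      ring
    rw [h1, zero_mul]
  have hrowg : ∀ i, ∑ v, g' (v, i) = 0 := by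
    intro i
    show ∑ v, ((if v ∈ T then (1:ℝ) else 0) - t / n) * w i = 0
    rw [← Finset.sum_mul]
    have h1 : ∑ v, ((if v ∈ T then (1:ℝ) else 0) - t / n) = 0 := by
      rw [Finset.sum_sub_distrib, hindT]
      simp
      field_simp
      ring
    rw [h1, zero_mul]
  -- quadratic form identities
  have hAg : ∀ p : Fin n × Fin k, (A *ᵥ g) p = ∑ u ∈ T, (W p.1 u *ᵥ w) p.2 := by
    intro p
    show ∑ q : Fin n × Fin k, A p q * g q = _
    rw [Fintype.sum_prod_type]
    have e1 : ∀ u, ∑ j, A p (u, j) * g (u, j)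
        = if u ∈ T then (W p.1 u *ᵥ w) p.2 else 0 := by
      intro u
      by_cases h : u ∈ T <;>
        simp [hg, hA, mwAdj, h, Matrix.mulVec, dotProduct]
    rw [Finset.sum_congr rfl fun u _ => e1 u, Finset.sum_ite_mem, Finset.univ_inter]
  have hfAg : f ⬝ᵥ (A *ᵥ g) = w ⬝ᵥ ((mwEdge n k W S T) *ᵥ w) := by
    calc f ⬝ᵥ (A *ᵥ g) = ∑ p, f p * (A *ᵥ g) p := rfl
    _ = ∑ v : Fin n, (if v ∈ S then (1:ℝ) else 0) *
          (∑ i, w i * ∑ u ∈ T, (W v u *ᵥ w) i) := by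
        rw [Fintype.sum_prod_type]
        exact Finset.sum_congr rfl fun v _ => by
          rw [Finset.mul_sum]
          exact Finset.sum_congr rfl fun i _ => by rw [hAg (v, i)]; ring
    _ = ∑ v ∈ S, ∑ i, w i * ∑ u ∈ T, (W v u *ᵥ w) i := by
        simp [ite_mul, Finset.sum_ite_mem]
    _ = ∑ v ∈ S, ∑ u ∈ T, ∑ i, w i * (W v u *ᵥ w) i := by
        refine Finset.sum_congr rfl fun v _ => ?_
        simp only [Finset.mul_sum]
        rw [Finset.sum_comm]
    _ = ∑ v ∈ S, ∑ u ∈ T, ∑ i, ∑ j, w i * (W v u i j * w j) := by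
        refine Finset.sum_congr rfl fun v _ => Finset.sum_congr rfl fun u _ =>
          Finset.sum_congr rfl fun i _ => ?_
        simp [Matrix.mulVec, dotProduct, Finset.mul_sum]
    _ = ∑ i, ∑ j, ∑ v ∈ S, ∑ u ∈ T, w i * (W v u i j * w j) :=
        sum_swap4 S T univ univ _
    _ = w ⬝ᵥ ((mwEdge n k W S T) *ᵥ w) := by
        simp only [mwEdge, dotProduct, Matrix.mulVec, Matrix.sum_apply,
          Finset.mul_sum, Finset.sum_mul]
  -- eigenvalue identity
  have hdotw : w ⬝ᵥ w = Q := by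
    simp [dotProduct, hQ, sq]
  have heig : w ⬝ᵥ ((mwEdge n k W S T) *ᵥ w) = (x + c) * Q := by
    have h1 : (mwEdge n k W S T) *ᵥ w = x • w + c • w := by
      rw [Matrix.sub_mulVec] at hw
      have h2 : (c • (1 : Matrix (Fin k) (Fin k) ℝ)) *ᵥ w = c • w := by
        rw [Matrix.smul_mulVec, Matrix.one_mulVec]
      rw [h2, sub_eq_iff_eq_add] at hw
      rw [hw]
    rw [h1, dotProduct_add, dotProduct_smul, dotProduct_smul, hdotw]
    simp only [smul_eq_mul]
    ring
  -- the constant-direction components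
  set f0 : Fin n × Fin k → ℝ := fun p => (s / n) * w p.2 with hf0
  set g0 : Fin n × Fin k → ℝ := fun p => (t / n) * w p.2 with hg0
  have hAf0 : A *ᵥ f0 = d • f0 := hAconst (fun i => (s / n) * w i)
  have hAg0 : A *ᵥ g0 = d • g0 := hAconst (fun i => (t / n) * w i)
  have hfsplit : f' = f - f0 := by
    funext p
    show ((if p.1 ∈ S then (1:ℝ) else 0) - s / n) * w p.2 =
      (if p.1 ∈ S then (1:ℝ) else 0) * w p.2 - (s / n) * w p.2
    ring
  have hgsplit : g' = g - g0 := by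
    funext p
    show ((if p.1 ∈ T then (1:ℝ) else 0) - t / n) * w p.2 =
      (if p.1 ∈ T then (1:ℝ) else 0) * w p.2 - (t / n) * w p.2
    ring
  have hterm1 : f' ⬝ᵥ (A *ᵥ g0) = 0 := by
    rw [hAg0, dotProduct_smul]
    have h1 : f' ⬝ᵥ g0 = 0 := by
      show ∑ p : Fin n × Fin k, f' p * g0 p = 0
      rw [Fintype.sum_prod_type, Finset.sum_comm]
      have h2 : ∀ i, ∑ v, f' (v, i) * g0 (v, i) = 0 := by
        intro i
        have h3 : ∀ v : Fin n, f' (v, i) * g0 (v, i) = f' (v, i) * ((t / n) * w i) := fun v => rfl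
        rw [Finset.sum_congr rfl fun v _ => h3 v, ← Finset.sum_mul, hrowf i, zero_mul]
      rw [Finset.sum_congr rfl fun i _ => h2 i, Finset.sum_const_zero]
    rw [h1, smul_zero]
  have hterm2 : f0 ⬝ᵥ (A *ᵥ g) = c * Q := by
    rw [hbil f0 g, hAf0, dotProduct_smul]
    have h1 : g ⬝ᵥ f0 = (s / n) * t * Q := by
      show ∑ p : Fin n × Fin k, g p * f0 p = _
      rw [Fintype.sum_prod_type]
      have h2 : ∀ v : Fin n, ∑ i, g (v, i) * f0 (v, i) =
          (if v ∈ T then (1:ℝ) else 0) * ((s / n) * Q) := by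
        intro v
        have h3 : ∀ i, g (v, i) * f0 (v, i) =
            (if v ∈ T then (1:ℝ) else 0) * ((s / n) * w i ^ 2) := by
          intro i
          show ((if v ∈ T then (1:ℝ) else 0) * w i) * ((s / n) * w i) = _
          ring
        rw [Finset.sum_congr rfl fun i _ => h3 i, ← Finset.mul_sum, ← Finset.mul_sum, hQ]
      rw [Finset.sum_congr rfl fun v _ => h2 v, ← Finset.sum_mul, hindT]
      ring
    rw [h1, hc]
    field_simp
    rw [show (n:ℝ) * d • (s * t * Q / (n:ℝ)) = ((n:ℝ) * (n:ℝ)⁻¹) * (s * t * Q * d) by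
        rw [smul_eq_mul]; ring,
      mul_inv_cancel₀ hnne, one_mul]
  have hmain : f' ⬝ᵥ (A *ᵥ g') = x * Q := by
    have e1 : f' ⬝ᵥ (A *ᵥ g') = f' ⬝ᵥ (A *ᵥ g) - f' ⬝ᵥ (A *ᵥ g0) := by
      rw [hgsplit, Matrix.mulVec_sub, dotProduct_sub]
    have e2 : f' ⬝ᵥ (A *ᵥ g) = f ⬝ᵥ (A *ᵥ g) - f0 ⬝ᵥ (A *ᵥ g) := by
      rw [hfsplit, sub_dotProduct]
    rw [e1, e2, hterm1, hfAg, heig, hterm2]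
    ring
  -- norms
  have hnf : ∑ p, f' p ^ 2 = (s * (1 - s / n)) * Q := by
    rw [Fintype.sum_prod_type]
    have h1 : ∀ v : Fin n, ∑ i, f' (v, i) ^ 2 =
        ((if v ∈ S then (1:ℝ) else 0) - s / n) ^ 2 * Q := by
      intro v
      have h2 : ∀ i, f' (v, i) ^ 2 = ((if v ∈ S then (1:ℝ) else 0) - s / n) ^ 2 * w i ^ 2 := by
        intro i
        show (((if v ∈ S then (1:ℝ) else 0) - s / n) * w i) ^ 2 = _
        ring
      rw [Finset.sum_congr rfl fun i _ => h2 i, ← Finset.mul_sum, hQ]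
    rw [Finset.sum_congr rfl fun v _ => h1 v, ← Finset.sum_mul]
    have h3 : ∑ v : Fin n, ((if v ∈ S then (1:ℝ) else 0) - s / n) ^ 2 = s * (1 - s / n) := by
      have h4 : ∀ v : Fin n, ((if v ∈ S then (1:ℝ) else 0) - s / n) ^ 2 =
          (if v ∈ S then (1:ℝ) else 0) * (1 - 2 * (s / n)) + (s / n) ^ 2 := by
        intro v
        by_cases h : v ∈ S <;> simp [h] <;> ring
      rw [Finset.sum_congr rfl fun v _ => h4 v, Finset.sum_add_distrib, ← Finset.sum_mul, hindS]
      simp only [Finset.sum_const, Finset.card_univ, Fintype.card_fin, nsmul_eq_mul]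
      field_simp
      ring
    rw [h3]
  have hng : ∑ p, g' p ^ 2 = (t * (1 - t / n)) * Q := by
    rw [Fintype.sum_prod_type]
    have h1 : ∀ v : Fin n, ∑ i, g' (v, i) ^ 2 =
        ((if v ∈ T then (1:ℝ) else 0) - t / n) ^ 2 * Q := by
      intro v
      have h2 : ∀ i, g' (v, i) ^ 2 = ((if v ∈ T then (1:ℝ) else 0) - t / n) ^ 2 * w i ^ 2 := by
        intro i
        show (((if v ∈ T then (1:ℝ) else 0) - t / n) * w i) ^ 2 = _
        ring
      rw [Finset.sum_congr rfl fun i _ => h2 i, ← Finset.mul_sum, hQ]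
    rw [Finset.sum_congr rfl fun v _ => h1 v, ← Finset.sum_mul]
    have h3 : ∑ v : Fin n, ((if v ∈ T then (1:ℝ) else 0) - t / n) ^ 2 = t * (1 - t / n) := by
      have h4 : ∀ v : Fin n, ((if v ∈ T then (1:ℝ) else 0) - t / n) ^ 2 =
          (if v ∈ T then (1:ℝ) else 0) * (1 - 2 * (t / n)) + (t / n) ^ 2 := by
        intro v
        by_cases h : v ∈ T <;> simp [h] <;> ring
      rw [Finset.sum_congr rfl fun v _ => h4 v, Finset.sum_add_distrib, ← Finset.sum_mul, hindT]
      simp only [Finset.sum_const, Finset.card_univ, Fintype.card_fin, nsmul_eq_mul]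
      field_simp
      ring
    rw [h3]
  -- apply the key mixing bound
  have hkey := mixing_key n k hn hk d A mu hmu htop U hU hAW hAconst f' g' hrowf hrowg
  rw [hmain, hnf, hng] at hkey
  -- massage the square roots
  have hsS : 0 ≤ s * (1 - s / n) := by
    apply mul_nonneg hs0
    rw [sub_nonneg, div_le_one hn0]
    exact hsle
  have hsT : 0 ≤ t * (1 - t / n) := by
    apply mul_nonneg ht0
    rw [sub_nonneg, div_le_one hn0]
    exact htle
  have hQ0 : (0:ℝ) ≤ Q := le_of_lt hQpos
  have hsqrt : Real.sqrt ((s * (1 - s / n)) * Q) * Real.sqrt ((t * (1 - t / n)) * Q) =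
      Real.sqrt (s * t * (1 - s / n) * (1 - t / n)) * Q := by
    rw [Real.sqrt_mul hsS, Real.sqrt_mul hsT]
    have h1 : Real.sqrt (s * (1 - s / n)) * Real.sqrt Q *
        (Real.sqrt (t * (1 - t / n)) * Real.sqrt Q) =
        (Real.sqrt (s * (1 - s / n)) * Real.sqrt (t * (1 - t / n))) *
          (Real.sqrt Q * Real.sqrt Q) := by ring
    rw [h1, Real.mul_self_sqrt hQ0, ← Real.sqrt_mul hsS]
    congr 2
    ring
  rw [hsqrt] at hkey
  have habs : |x * Q| = |x| * Q := by
    rw [abs_mul, abs_of_pos hQpos]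
  rw [habs] at hkey
  have hfin : |x| * Q ≤ (L * Real.sqrt (s * t * (1 - s / n) * (1 - t / n))) * Q := by
    calc |x| * Q ≤ L * (Real.sqrt (s * t * (1 - s / n) * (1 - t / n)) * Q) := hkey
    _ = (L * Real.sqrt (s * t * (1 - s / n) * (1 - t / n))) * Q := by ring
  exact le_of_mul_le_mul_right hfin hQpos
end
end
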